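/- arXiv:1201.3583 — 5 statements merged into one kernel-verified Lean document; each statement's English description precedes it below -/
import Mathlib

section
/- Let f : ℝ → ℝ be continuous with a periodic point of least period n = 2^k · r, where r > 1 is odd and k ≥ 0. Then f has a periodic point of least period 2^{k+1} · 3. -/
open Function Set

namespace Shark

variable {g : ℝ → ℝ}

lemma exists_image_Icc (hg : Continuous g) {a b : ℝ} (hab : a ≤ b) :
    ∃ c d : ℝ, c ≤ d ∧ g '' Icc a b = Icc c d := by
  have h := ContinuousOn.image_Icc hab hg.continuousOn
  refine ⟨_, _, ?_, h⟩
  have hne : (g '' Icc a b).Nonempty := (nonempty_Icc.2 hab).image g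
  rw [h] at hne
  exact nonempty_Icc.1 hne

lemma fixed_of_cover (hg : Continuous g) {a b : ℝ} (hab : a ≤ b)
    (h : Icc a b ⊆ g '' Icc a b) : ∃ y ∈ Icc a b, g y = y := by
  obtain ⟨s, hs, hgs⟩ := h (left_mem_Icc.2 hab)
  obtain ⟨t, ht, hgt⟩ := h (right_mem_Icc.2 hab)
  have hc : Continuous fun z => g z - z := hg.sub continuous_id
  have key := intermediate_value_uIcc (a := s) (b := t) (f := fun z => g z - z)
    hc.continuousOn
  have h0 : (0:ℝ) ∈ uIcc (g s - s) (g t - t) := by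
    rw [mem_uIcc]
    left
    constructor
    · have := hs.1; simp only [hgs]; linarith
    · have := ht.2; simp only [hgt]; linarith
  obtain ⟨y, hy, hy0⟩ := key h0
  have hy' : y ∈ Icc a b := by
    have : uIcc s t ⊆ Icc a b := uIcc_subset_Icc hs ht
    exact this hy
  exact ⟨y, hy', by simpa [sub_eq_zero] using hy0⟩

/-- ordered auxiliary version of the subinterval lemma -/
lemma subinterval_aux (hg : Continuous g) {a b c d u v : ℝ} (hab : a ≤ b) (hcd : c < d)
    (hu : u ∈ Icc a b) (hv : v ∈ Icc a b) (huv : u < v) (hgu : g u = c) (hgv : g v = d) :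
    ∃ a' b', a' ≤ b' ∧ Icc a' b' ⊆ Icc a b ∧ g '' Icc a' b' = Icc c d := by
  classical
  set S : Set ℝ := {t | t ∈ Icc u v ∧ g t = d} with hS
  have hSne : S.Nonempty := ⟨v, ⟨⟨le_of_lt huv, le_rfl⟩, hgv⟩⟩
  have hSc : IsClosed S := by
    have : S = Icc u v ∩ g ⁻¹' {d} := by ext t; simp [hS, and_comm]
    rw [this]
    exact isClosed_Icc.inter (isClosed_singleton.preimage hg)
  have hSbdd : BddBelow S := ⟨u, fun t ht => ht.1.1⟩
  set v' := sInf S with hv'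
  have hv'S : v' ∈ S := hSc.csInf_mem hSne hSbdd
  have hv'u : u ≤ v' := hv'S.1.1
  have huv' : u < v' := lt_of_le_of_ne hv'u (by
    intro h; apply absurd hv'S.2; rw [← h, hgu]; exact ne_of_lt hcd)
  set T : Set ℝ := {t | t ∈ Icc u v' ∧ g t = c} with hT
  have hTne : T.Nonempty := ⟨u, ⟨⟨le_rfl, hv'u⟩, hgu⟩⟩
  have hTc : IsClosed T := by
    have : T = Icc u v' ∩ g ⁻¹' {c} := by ext t; simp [hT, and_comm]
    rw [this]
    exact isClosed_Icc.inter (isClosed_singleton.preimage hg)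
  have hTbdd : BddAbove T := ⟨v', fun t ht => ht.1.2⟩
  set u' := sSup T with hu'
  have hu'T : u' ∈ T := hTc.csSup_mem hTne hTbdd
  have hu'v' : u' ≤ v' := hu'T.1.2
  have hu'v'lt : u' < v' := lt_of_le_of_ne hu'v' (by
    intro h; apply absurd hv'S.2; rw [← h, hu'T.2]; exact ne_of_lt hcd)
  have hsub : Icc u' v' ⊆ Icc a b := by
    intro t ht
    exact ⟨le_trans hu.1 (le_trans hu'T.1.1 ht.1), le_trans ht.2 (le_trans hv'S.1.2 hv.2)⟩
  refine ⟨u', v', le_of_lt hu'v'lt, hsub, ?_⟩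
  apply Subset.antisymm
  · -- image ⊆ Icc c d
    rintro w ⟨t, ht, rfl⟩
    by_contra hw
    rw [mem_Icc, not_and_or] at hw
    rcases hw with hw | hw
    · push_neg at hw
      -- g t < c ; find c-point in [t, v'] beyond u'
      have htv' : t ≤ v' := ht.2
      have hcont : ContinuousOn g (Icc t v') := hg.continuousOn
      have hkey := intermediate_value_Icc htv' hcont
      have hcmem : c ∈ Icc (g t) (g v') := ⟨le_of_lt hw, by rw [hv'S.2]; exact le_of_lt hcd⟩
      obtain ⟨s', hs', hgs'⟩ := hkey hcmem
      have hs'T : s' ∈ T := ⟨⟨le_trans hu'T.1.1 (le_trans ht.1 hs'.1), hs'.2⟩, hgs'⟩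
      have : s' ≤ u' := le_csSup hTbdd hs'T
      have hts' : u' ≤ s' := le_trans ht.1 hs'.1
      have : s' = u' := le_antisymm this hts'
      rw [this, hu'T.2] at hgs'
      -- then g t < c = g s' with s' = u' ≤ t, but also need t = u'...
      have htu' : t = u' := by
        by_contra htne
        -- t > u', s' = u' ≤ t ok; no contradiction yet—use g s' = c and s' ∈ [t, v'] means u' ≥ t
        have : u' < t := lt_of_le_of_ne ht.1 (Ne.symm htne)
        have : t ≤ u' := by rw [← ‹s' = u'›]; exact hs'.1
        linarith
      rw [htu', hu'T.2] at hw
      exact absurd hw (lt_irrefl c)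
    · push_neg at hw
      -- g t > d ; find d-point in [u', t], below v'
      have hut : u' ≤ t := ht.1
      have hkey := intermediate_value_Icc hut hg.continuousOn
      have hdmem : d ∈ Icc (g u') (g t) := ⟨by rw [hu'T.2]; exact le_of_lt hcd, le_of_lt hw⟩
      obtain ⟨s', hs', hgs'⟩ := hkey hdmem
      have hs'S : s' ∈ S := ⟨⟨le_trans hu'T.1.1 hs'.1, le_trans hs'.2 (le_trans ht.2 hv'S.1.2)⟩, hgs'⟩
      have hv's' : v' ≤ s' := csInf_le hSbdd hs'S
      have hs't : s' ≤ t := hs'.2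
      have : t = v' := le_antisymm ht.2 (le_trans hv's' hs't)
      rw [this, hv'S.2] at hw
      exact absurd hw (lt_irrefl d)
  · -- Icc c d ⊆ image
    have := intermediate_value_Icc (le_of_lt hu'v'lt) (hg.continuousOn (s := Icc u' v'))
    rw [hu'T.2, hv'S.2] at this
    exact this

lemma subinterval (hg : Continuous g) {a b c d : ℝ} (hab : a ≤ b) (hcd : c ≤ d)
    (h : Icc c d ⊆ g '' Icc a b) :
    ∃ a' b', a' ≤ b' ∧ Icc a' b' ⊆ Icc a b ∧ g '' Icc a' b' = Icc c d := by
  obtain ⟨u, hu, hgu⟩ := h (left_mem_Icc.2 hcd)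
  obtain ⟨v, hv, hgv⟩ := h (right_mem_Icc.2 hcd)
  rcases eq_or_lt_of_le hcd with rfl | hcd'
  · refine ⟨u, u, le_rfl, by simpa using hu, ?_⟩
    rw [Icc_self, Icc_self, image_singleton, hgu]
  rcases lt_trichotomy u v with huv | huv | huv
  · exact subinterval_aux hg hab hcd' hu hv huv hgu hgv
  · exfalso; rw [huv, hgv] at hgu; exact absurd hgu (ne_of_gt hcd')
  · -- reflect
    set ref : ℝ → ℝ := fun t => a + b - t with href
    have hrefc : Continuous (g ∘ ref) := hg.comp (by continuity)
    have hrmem : ∀ t, t ∈ Icc a b → ref t ∈ Icc a b := by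
      intro t ht; constructor <;> simp [href] <;> linarith [ht.1, ht.2]
    obtain ⟨p', q', hpq', hsub', heq'⟩ := subinterval_aux (g := g ∘ ref) hrefc hab hcd'
      (hrmem u hu) (hrmem v hv) (by simp only [href]; linarith)
      (by simp only [href, Function.comp_apply]; rw [show a + b - (a + b - u) = u by ring, hgu])
      (by simp only [href, Function.comp_apply]; rw [show a + b - (a + b - v) = v by ring, hgv])
    refine ⟨a + b - q', a + b - p', by linarith, ?_, ?_⟩
    · intro t ht
      have h1 := hsub' (left_mem_Icc.2 hpq')
      have h2 := hsub' (right_mem_Icc.2 hpq')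
      constructor
      · have := h2.2; simp at ht ⊢; linarith [ht.1]
      · have := h1.1; simp at ht ⊢; linarith [ht.2]
    · have himg : ref '' Icc p' q' = Icc (a + b - q') (a + b - p') := by
        simp only [href]
        exact image_const_sub_Icc (a + b) p' q'
      rw [← himg, ← image_comp]
      exact heq'

lemma chain (hg : Continuous g) (m : ℕ) :
    ∀ I : ℕ → ℝ × ℝ, (∀ i, i ≤ m → (I i).1 ≤ (I i).2) →
    (∀ i, i < m → Icc (I (i+1)).1 (I (i+1)).2 ⊆ g '' Icc (I i).1 (I i).2) →
    ∃ p q : ℝ, p ≤ q ∧ (∀ i, i ≤ m → g^[i] '' Icc p q ⊆ Icc (I i).1 (I i).2) ∧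
      g^[m] '' Icc p q = Icc (I m).1 (I m).2 := by
  induction m with
  | zero =>
    intro I hle _
    exact ⟨(I 0).1, (I 0).2, hle 0 le_rfl, by intro i hi; interval_cases i; simp, by simp⟩
  | succ n ih =>
    intro I hle hcov
    obtain ⟨p', q', hpq', hsub, heq⟩ := ih (fun i => I (i+1))
      (fun i hi => hle _ (by omega)) (fun i hi => hcov _ (by omega))
    have h1 : Icc p' q' ⊆ g '' Icc (I 0).1 (I 0).2 := by
      intro t ht
      apply hcov 0 (by omega)
      have := hsub 0 (by omega)
      simpa using this (by simpa using ht)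
    obtain ⟨p, q, hpq, hsubI, himg⟩ := subinterval hg (hle 0 (by omega)) hpq' h1
    refine ⟨p, q, hpq, ?_, ?_⟩
    · intro i hi
      match i with
      | 0 => simpa using hsubI
      | (j+1) =>
        rw [Function.iterate_succ, Set.image_comp, himg]
        exact hsub j (by omega)
    · rw [Function.iterate_succ, Set.image_comp, himg]
      exact heq

lemma loop (hg : Continuous g) (I : ℕ → ℝ × ℝ) (m : ℕ) (hm : 0 < m)
    (hle : ∀ i, i < m → (I i).1 ≤ (I i).2)
    (hcov : ∀ i, i < m → Icc (I ((i+1) % m)).1 (I ((i+1) % m)).2 ⊆ g '' Icc (I i).1 (I i).2) :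
    ∃ y, g^[m] y = y ∧ ∀ i, i < m → g^[i] y ∈ Icc (I i).1 (I i).2 := by
  set J : ℕ → ℝ × ℝ := fun i => I (i % m) with hJ
  have hJle : ∀ i, i ≤ m → (J i).1 ≤ (J i).2 := fun i hi => hle _ (Nat.mod_lt _ hm)
  have hJcov : ∀ i, i < m → Icc (J (i+1)).1 (J (i+1)).2 ⊆ g '' Icc (J i).1 (J i).2 := by
    intro i hi
    have : i % m = i := Nat.mod_eq_of_lt hi
    simp only [hJ, this]
    exact hcov i hi
  obtain ⟨p, q, hpq, hsub, heq⟩ := chain hg m J hJle hJcov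
  have hJm : J m = J 0 := by simp [hJ, Nat.mod_self]
  have hcover : Icc p q ⊆ g^[m] '' Icc p q := by
    rw [heq, hJm]
    have := hsub 0 (by omega)
    simpa using this
  obtain ⟨y, hy, hgy⟩ := fixed_of_cover (hg.iterate m) hpq hcover
  refine ⟨y, hgy, ?_⟩
  intro i hi
  have := hsub i (le_of_lt hi) ⟨y, hy, rfl⟩
  simpa [hJ, Nat.mod_eq_of_lt hi] using this


lemma reflect_iterate (g : ℝ → ℝ) (n : ℕ) (t : ℝ) :
    (fun s => -g (-s))^[n] (-t) = - g^[n] t := by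
  induction n with
  | zero => simp
  | succ n ihn =>
    rw [Function.iterate_succ_apply', ihn, Function.iterate_succ_apply']
    simp

lemma reflect_minimalPeriod (g : ℝ → ℝ) (t : ℝ) :
    minimalPeriod (fun s => -g (-s)) (-t) = minimalPeriod g t := by
  have hiff : ∀ n : ℕ, IsPeriodicPt (fun s => -g (-s)) n (-t) ↔ IsPeriodicPt g n t := by
    intro n
    constructor
    · intro h
      have : (fun s => -g (-s))^[n] (-t) = -t := h
      rw [reflect_iterate] at this
      have := neg_injective this
      exact this
    · intro h
      show (fun s => -g (-s))^[n] (-t) = -t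
      rw [reflect_iterate]
      exact congrArg Neg.neg h
  apply Nat.dvd_antisymm
  · rw [← isPeriodicPt_iff_minimalPeriod_dvd, hiff]
    exact isPeriodicPt_minimalPeriod g t
  · rw [← isPeriodicPt_iff_minimalPeriod_dvd, ← hiff]
    exact isPeriodicPt_minimalPeriod _ (-t)


lemma spiral (hg : Continuous g) (r : ℕ) (hr : Odd r) (hr5 : 5 ≤ r) (v : ℕ → ℝ)
    (hchain : ∀ i, i < r - 1 → g (v i) = v (i+1))
    (hwrap : g (v (r-1)) = v 0)
    (hper : minimalPeriod g (v 0) = r)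
    (h01 : v 0 < v 1)
    (hord : ∀ i t, t < i → i < r → 2 ≤ i →
      ((Even i → v i < v t) ∧ (Odd i → v t < v i))) :
    ∃ y, minimalPeriod g y = 6 := by
  have hrodd : r % 2 = 1 := Nat.odd_iff.mp hr
  have viter : ∀ i, i ≤ r - 1 → g^[i] (v 0) = v i := by
    intro i hi
    induction i with
    | zero => simp
    | succ n ihn =>
      rw [Function.iterate_succ_apply', ihn (by omega), hchain n (by omega)]
  have hv0per : Function.IsPeriodicPt g r (v 0) := by
    show g^[r] (v 0) = v 0
    have h : r = (r-1) + 1 := by omega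
    rw [h, Function.iterate_succ_apply', viter (r-1) le_rfl, hwrap]
  have hv0mem : v 0 ∈ periodicPts g := mk_mem_periodicPts (by omega) hv0per
  have vper : ∀ i, i < r → minimalPeriod g (v i) = r := by
    intro i hi
    rw [← viter i (by omega), minimalPeriod_apply_iterate hv0mem, hper]
  -- ordering helpers
  have hlt : ∀ i t, t < i → i < r → 2 ≤ i → Even i → v i < v t :=
    fun i t h1 h2 h3 he => (hord i t h1 h2 h3).1 he
  have hgt : ∀ i t, t < i → i < r → 2 ≤ i → Odd i → v t < v i :=
    fun i t h1 h2 h3 ho => (hord i t h1 h2 h3).2 ho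
  -- blocks
  set B : ℕ → ℝ × ℝ := fun m => if m % 2 = 1 then (v (m-2), v m) else (v m, v (m-2)) with hB
  have hble : ∀ m, 1 ≤ m → m < r → (B m).1 ≤ (B m).2 := by
    intro m h1 h2
    rcases Nat.eq_or_lt_of_le h1 with h | h
    · simp only [hB, ← h]
      norm_num
      exact le_of_lt h01
    · rcases Nat.even_or_odd m with he | ho
      · have hm2 : m % 2 = 0 := Nat.even_iff.mp he
        simp only [hB, if_neg (by omega : ¬ m % 2 = 1)]
        exact le_of_lt (hlt m (m-2) (by omega) h2 (by omega) he)
      · have hm2 : m % 2 = 1 := Nat.odd_iff.mp ho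
        simp only [hB, if_pos hm2]
        exact le_of_lt (hgt m (m-2) (by omega) h2 (by omega) ho)
  -- the basic covering edge for 2 ≤ m ≤ r-2
  have hedge : ∀ m, 2 ≤ m → m ≤ r - 2 →
      Icc (B (m+1)).1 (B (m+1)).2 ⊆ g '' Icc (B m).1 (B m).2 := by
    intro m h2 hle2
    have hgm2 : g (v (m-2)) = v (m-1) := by
      have := hchain (m-2) (by omega)
      have he : m - 2 + 1 = m - 1 := by omega
      rwa [he] at this
    have hgm : g (v m) = v (m+1) := hchain m (by omega)
    rcases Nat.even_or_odd m with he | ho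
    · -- m even : B m = (v m, v (m-2)), B (m+1) = (v (m-1), v (m+1))
      have hm2 : m % 2 = 0 := Nat.even_iff.mp he
      have hmo : Odd (m+1) := by rw [Nat.odd_iff]; omega
      have key := intermediate_value_Icc' (α := ℝ) (δ := ℝ)
        (a := v m) (b := v (m-2)) (f := g)
        (le_of_lt (hlt m (m-2) (by omega) (by omega) h2 he)) hg.continuousOn
      rw [hgm2, hgm] at key
      simp only [hB, if_neg (by omega : ¬ m % 2 = 1), if_pos (by omega : (m+1) % 2 = 1)]
      have h1 : m + 1 - 2 = m - 1 := by omega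
      rw [h1]
      exact key
    · -- m odd : B m = (v (m-2), v m), B (m+1) = (v (m+1), v (m-1))
      have hm2 : m % 2 = 1 := Nat.odd_iff.mp ho
      have key := intermediate_value_Icc' (α := ℝ) (δ := ℝ)
        (a := v (m-2)) (b := v m) (f := g)
        (le_of_lt (hgt m (m-2) (by omega) (by omega) h2 ho)) hg.continuousOn
      rw [hgm2, hgm] at key
      simp only [hB, if_pos hm2, if_neg (by omega : ¬ (m+1) % 2 = 1)]
      have h1 : m + 1 - 2 = m - 1 := by omega
      rw [h1]
      exact key
  -- edge from B 1 to B 2 and B 1 self-cover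
  have hg0 : g (v 0) = v 1 := hchain 0 (by omega)
  have hg1 : g (v 1) = v 2 := hchain 1 (by omega)
  have hedge1full : Icc (v 2) (v 1) ⊆ g '' Icc (v 0) (v 1) := by
    have key := intermediate_value_Icc' (α := ℝ) (δ := ℝ)
      (a := v 0) (b := v 1) (f := g) (le_of_lt h01) hg.continuousOn
    rwa [hg0, hg1] at key
  have h20 : v 2 < v 0 := hlt 2 0 (by omega) (by omega) le_rfl (by decide)
  have hedge1 : Icc (B 2).1 (B 2).2 ⊆ g '' Icc (B 1).1 (B 1).2 := by
    simp only [hB]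
    norm_num
    intro t ht
    exact hedge1full ⟨ht.1, le_trans ht.2 (le_of_lt h01)⟩
  have hedgeself : Icc (B 1).1 (B 1).2 ⊆ g '' Icc (B 1).1 (B 1).2 := by
    simp only [hB]
    norm_num
    intro t ht
    exact hedge1full ⟨le_trans (le_of_lt h20) ht.1, ht.2⟩
  -- now branch on r = 5 / r ≥ 7
  rcases eq_or_lt_of_le hr5 with hr5' | hr7'
  · -- r = 5
    have hr5'' : r = 5 := hr5'.symm
    subst hr5''
    have hg2 : g (v 2) = v 3 := hchain 2 (by omega)
    have hg4 : g (v 4) = v 0 := hwrap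
    have h13 : v 1 < v 3 := hgt 3 1 (by omega) (by omega) (by omega) (by decide)
    have h42 : v 4 < v 2 := hlt 4 2 (by omega) (by omega) (by omega) (by decide)
    have hclose : Icc (B 1).1 (B 1).2 ⊆ g '' Icc (B 4).1 (B 4).2 := by
      have key := intermediate_value_Icc (α := ℝ) (δ := ℝ)
        (a := v 4) (b := v 2) (f := g) (le_of_lt h42) hg.continuousOn
      rw [hg4, hg2] at key
      simp only [hB]
      norm_num
      intro t ht
      exact key ⟨ht.1, le_trans ht.2 (le_of_lt h13)⟩
    set J : ℕ → ℝ × ℝ := fun t => if t ≤ 2 then B 1 else B (t - 1) with hJ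
    have hJle : ∀ i, i < 6 → (J i).1 ≤ (J i).2 := by
      intro i hi
      interval_cases i <;> simp only [hJ] <;> norm_num <;>
        [skip; skip; skip; exact hble 2 (by norm_num) (by norm_num);
         exact hble 3 (by norm_num) (by norm_num); exact hble 4 (by norm_num) (by norm_num)] <;>
        exact hble 1 (by norm_num) (by norm_num)
    have hJcov : ∀ i, i < 6 →
        Icc (J ((i+1) % 6)).1 (J ((i+1) % 6)).2 ⊆ g '' Icc (J i).1 (J i).2 := by
      intro i hi
      interval_cases i
      · exact hedgeself
      · exact hedgeself
      · exact hedge1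
      · exact hedge 2 (by norm_num) (by norm_num)
      · exact hedge 3 (by norm_num) (by norm_num)
      · exact hclose
    obtain ⟨y, hy6, hyit⟩ := loop hg J 6 (by norm_num) hJle hJcov
    refine ⟨y, ?_⟩
    have hyper : Function.IsPeriodicPt g 6 y := hy6
    have hdvd : minimalPeriod g y ∣ 6 := hyper.minimalPeriod_dvd
    have hpos : 0 < minimalPeriod g y := hyper.minimalPeriod_pos (by norm_num)
    set d := minimalPeriod g y with hd
    have hmod : ∀ i : ℕ, g^[i] y = g^[i % d] y := fun i =>
      (Function.iterate_mod_minimalPeriod_eq (f := g) (x := y) (n := i)).symm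
    have hd6 : d ≤ 6 := Nat.le_of_dvd (by norm_num) hdvd
    interval_cases d
    · -- d = 1
      exfalso
      have e3 : g^[3] y = y := by rw [hmod]; norm_num
      have e4 : g^[4] y = y := by rw [hmod]; norm_num
      have i3 := hyit 3 (by norm_num); have i4 := hyit 4 (by norm_num)
      rw [e3] at i3; rw [e4] at i4
      simp only [hJ, hB] at i3 i4
      norm_num at i3 i4
      linarith [i3.2, i4.1]
    · -- d = 2
      exfalso
      have e4 : g^[4] y = y := by rw [hmod]; norm_num
      have i0 := hyit 0 (by norm_num); have i4 := hyit 4 (by norm_num)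
      rw [e4] at i4
      simp only [Function.iterate_zero, id] at i0
      simp only [hJ, hB] at i0 i4
      norm_num at i0 i4
      have hy1 : y = v 1 := le_antisymm i0.2 i4.1
      have h5 : minimalPeriod g (v 1) = 5 := vper 1 (by norm_num)
      rw [hy1] at hd
      omega
    · -- d = 3
      exfalso
      have e3 : g^[3] y = y := by rw [hmod]; norm_num
      have i0 := hyit 0 (by norm_num); have i3 := hyit 3 (by norm_num)
      rw [e3] at i3
      simp only [Function.iterate_zero, id] at i0
      simp only [hJ, hB] at i0 i3
      norm_num at i0 i3
      have hy0 : y = v 0 := le_antisymm i3.2 i0.1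
      have h5 : minimalPeriod g (v 0) = 5 := vper 0 (by norm_num)
      rw [hy0] at hd
      omega
    · exfalso; omega
    · exfalso; omega
    · rfl
  · -- r ≥ 7
    have hr7 : 7 ≤ r := by omega
    -- define loop on blocks r-6 .. r-1
    have hclose : Icc (B (r-6)).1 (B (r-6)).2 ⊆ g '' Icc (B (r-1)).1 (B (r-1)).2 := by
      have hgr1 : g (v (r-1)) = v 0 := hwrap
      have hgr3 : g (v (r-3)) = v (r-2) := by
        have := hchain (r-3) (by omega)
        have he : r - 3 + 1 = r - 2 := by omega
        rwa [he] at this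
      have hler1 : v (r-1) ≤ v (r-3) := by
        refine le_of_lt (hlt (r-1) (r-3) (by omega) (by omega) (by omega) ?_)
        rw [Nat.even_iff]; omega
      have key := intermediate_value_Icc (α := ℝ) (δ := ℝ)
        (a := v (r-1)) (b := v (r-3)) (f := g) hler1 hg.continuousOn
      rw [hgr1, hgr3] at key
      simp only [hB, if_pos (by omega : (r-6) % 2 = 1),
        if_neg (by omega : ¬ (r-1) % 2 = 1)]
      intro t ht
      apply key
      constructor
      · -- v 0 ≤ v (r-8) ≤ t
        refine le_trans ?_ ht.1
        have h8 : r - 6 - 2 = r - 8 := by omega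
        rw [h8]
        rcases Nat.lt_or_ge (r-8) 2 with h | h
        · -- r = 7 or 9 : r - 8 ∈ {0,1}
          rcases Nat.lt_or_ge (r-8) 1 with h' | h'
          · have : r - 8 = 0 := by omega
            rw [this]
          · have : r - 8 = 1 := by omega
            rw [this]; exact le_of_lt h01
        · refine le_of_lt (hgt (r-8) 0 (by omega) (by omega) h ?_)
          rw [Nat.odd_iff]; omega
      · -- t ≤ v (r-6) ≤ v (r-2)
        refine le_trans ht.2 ?_
        refine le_of_lt (hgt (r-2) (r-6) (by omega) (by omega) (by omega) ?_)
        rw [Nat.odd_iff]; omega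
    set J : ℕ → ℝ × ℝ := fun t => B (r - 6 + t) with hJ
    have hJle : ∀ i, i < 6 → (J i).1 ≤ (J i).2 := by
      intro i hi
      exact hble (r-6+i) (by omega) (by omega)
    have hJcov : ∀ i, i < 6 →
        Icc (J ((i+1) % 6)).1 (J ((i+1) % 6)).2 ⊆ g '' Icc (J i).1 (J i).2 := by
      intro i hi
      rcases Nat.lt_or_ge i 5 with h5 | h5
      · have hmod : (i+1) % 6 = i + 1 := Nat.mod_eq_of_lt (by omega)
        simp only [hJ, hmod]
        have he : r - 6 + (i+1) = (r - 6 + i) + 1 := by omega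
        rw [he]
        rcases Nat.lt_or_ge (r - 6 + i) 2 with hsmall | hbig
        · have h1 : r - 6 + i = 1 := by omega
          rw [h1]
          exact hedge1
        · exact hedge (r-6+i) hbig (by omega)
      · have hi5 : i = 5 := by omega
        subst hi5
        simp only [hJ]
        norm_num
        have he : r - 6 + 5 = r - 1 := by omega
        rw [he]
        exact hclose
    obtain ⟨y, hy6, hyit⟩ := loop hg J 6 (by norm_num) hJle hJcov
    refine ⟨y, ?_⟩
    have hyper : Function.IsPeriodicPt g 6 y := hy6
    have hdvd : minimalPeriod g y ∣ 6 := hyper.minimalPeriod_dvd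
    have hpos : 0 < minimalPeriod g y := hyper.minimalPeriod_pos (by norm_num)
    set d := minimalPeriod g y with hd
    have hmod : ∀ i : ℕ, g^[i] y = g^[i % d] y := fun i =>
      (Function.iterate_mod_minimalPeriod_eq (f := g) (x := y) (n := i)).symm
    have hd6 : d ≤ 6 := Nat.le_of_dvd (by norm_num) hdvd
    -- membership facts
    have i0 := hyit 0 (by norm_num)
    have i2 := hyit 2 (by norm_num)
    have i3 := hyit 3 (by norm_num)
    simp only [Function.iterate_zero, id] at i0
    -- unfolded block bounds
    have hb0 : (J 0) = (v (r-8), v (r-6)) := by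
      simp only [hJ, hB, if_pos (by omega : (r-6+0) % 2 = 1)]
      have h1 : r - 6 + 0 - 2 = r - 8 := by omega
      have h2 : r - 6 + 0 = r - 6 := by omega
      rw [h1, h2]
    have hb2 : (J 2) = (v (r-6), v (r-4)) := by
      simp only [hJ, hB, if_pos (by omega : (r-6+2) % 2 = 1)]
      have h1 : r - 6 + 2 - 2 = r - 6 := by omega
      have h2 : r - 6 + 2 = r - 4 := by omega
      rw [h1, h2]
    have hb3 : (J 3) = (v (r-3), v (r-5)) := by
      simp only [hJ, hB, if_neg (by omega : ¬ (r-6+3) % 2 = 1)]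
      have h1 : r - 6 + 3 - 2 = r - 5 := by omega
      have h2 : r - 6 + 3 = r - 3 := by omega
      rw [h1, h2]
    interval_cases d
    · -- d = 1
      exfalso
      have e2 : g^[2] y = y := by rw [hmod]; norm_num
      have e3 : g^[3] y = y := by rw [hmod]; norm_num
      rw [e2] at i2; rw [e3] at i3
      rw [hb2] at i2; rw [hb3] at i3
      have : v (r-5) < v (r-6) := by
        refine hlt (r-5) (r-6) (by omega) (by omega) (by omega) ?_
        rw [Nat.even_iff]; omega
      have := i2.1; have := i3.2
      simp only at *
      linarith
    · -- d = 2
      exfalso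
      have e2 : g^[2] y = y := by rw [hmod]; norm_num
      rw [e2] at i2
      rw [hb0] at i0; rw [hb2] at i2
      have hy0 : y = v (r-6) := le_antisymm i0.2 i2.1
      have h5 : minimalPeriod g (v (r-6)) = r := vper (r-6) (by omega)
      rw [hy0] at hd
      omega
    · -- d = 3
      exfalso
      have e3 : g^[3] y = y := by rw [hmod]; norm_num
      rw [e3] at i3
      rw [hb0] at i0; rw [hb3] at i3
      have : v (r-5) < v (r-8) := by
        refine hlt (r-5) (r-8) (by omega) (by omega) (by omega) ?_
        rw [Nat.even_iff]; omega
      have := i0.1; have := i3.2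
      simp only at *
      linarith
    · exfalso; omega
    · exfalso; omega
    · rfl


lemma case1 (hg : Continuous g) (a b c : ℝ) (hab : a < b) (hbc : b < c)
    (hga : g a = b) (hgb : g b = c) (hgc : g c = a) (hpa : minimalPeriod g a = 3) :
    ∃ y, minimalPeriod g y = 6 := by
  have hamem : a ∈ periodicPts g := by
    rw [← minimalPeriod_pos_iff_mem_periodicPts, hpa]; norm_num
  have hpb : minimalPeriod g b = 3 := by
    have := minimalPeriod_apply hamem
    rwa [hga, hpa] at this
  have hbmem : b ∈ periodicPts g := by
    rw [← minimalPeriod_pos_iff_mem_periodicPts, hpb]; norm_num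
  have hpc : minimalPeriod g c = 3 := by
    have := minimalPeriod_apply hbmem
    rwa [hgb, hpb] at this
  have key1 : Icc a c ⊆ g '' Icc b c := by
    have := intermediate_value_Icc' (α := ℝ) (δ := ℝ) (a := b) (b := c) (f := g)
      (le_of_lt hbc) hg.continuousOn
    rwa [hgb, hgc] at this
  have key2 : Icc b c ⊆ g '' Icc a b := by
    have := intermediate_value_Icc (α := ℝ) (δ := ℝ) (a := a) (b := b) (f := g)
      (le_of_lt hab) hg.continuousOn
    rwa [hga, hgb] at this
  set J : ℕ → ℝ × ℝ := fun t => if t = 5 then (a, b) else (b, c) with hJ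
  have hJle : ∀ i, i < 6 → (J i).1 ≤ (J i).2 := by
    intro i hi
    simp only [hJ]
    split <;> [exact le_of_lt hab; exact le_of_lt hbc]
  have hJcov : ∀ i, i < 6 →
      Icc (J ((i+1) % 6)).1 (J ((i+1) % 6)).2 ⊆ g '' Icc (J i).1 (J i).2 := by
    intro i hi
    interval_cases i
    · exact fun t ht => key1 ⟨le_trans (le_of_lt hab) ht.1, ht.2⟩
    · exact fun t ht => key1 ⟨le_trans (le_of_lt hab) ht.1, ht.2⟩
    · exact fun t ht => key1 ⟨le_trans (le_of_lt hab) ht.1, ht.2⟩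
    · exact fun t ht => key1 ⟨le_trans (le_of_lt hab) ht.1, ht.2⟩
    · exact fun t ht => key1 ⟨ht.1, le_trans ht.2 (le_of_lt hbc)⟩
    · exact key2
  obtain ⟨y, hy6, hyit⟩ := loop hg J 6 (by norm_num) hJle hJcov
  refine ⟨y, ?_⟩
  have hyper : Function.IsPeriodicPt g 6 y := hy6
  have hdvd : minimalPeriod g y ∣ 6 := hyper.minimalPeriod_dvd
  have hpos : 0 < minimalPeriod g y := hyper.minimalPeriod_pos (by norm_num)
  set d := minimalPeriod g y with hd
  have hmod : ∀ i : ℕ, g^[i] y = g^[i % d] y := fun i =>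
    (Function.iterate_mod_minimalPeriod_eq (f := g) (x := y) (n := i)).symm
  have hd6 : d ≤ 6 := Nat.le_of_dvd (by norm_num) hdvd
  have hI0 : Icc (J 0).1 (J 0).2 = Icc b c := by simp [hJ]
  have hI1 : Icc (J 1).1 (J 1).2 = Icc b c := by simp [hJ]
  have hI2 : Icc (J 2).1 (J 2).2 = Icc b c := by simp [hJ]
  have hI5 : Icc (J 5).1 (J 5).2 = Icc a b := by simp [hJ]
  have i0 := hyit 0 (by norm_num)
  have i1 := hyit 1 (by norm_num)
  have i2 := hyit 2 (by norm_num)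
  have i5 := hyit 5 (by norm_num)
  rw [hI0] at i0; rw [hI1] at i1; rw [hI2] at i2; rw [hI5] at i5
  simp only [Function.iterate_zero, id] at i0
  interval_cases d
  · -- d = 1 : y fixed, y ∈ [b,c] ∩ [a,b]
    exfalso
    have e5 : g^[5] y = y := by rw [hmod]; norm_num
    rw [e5] at i5
    have hyb : y = b := le_antisymm i5.2 i0.1
    rw [hyb] at hd
    omega
  · -- d = 2 : g^[5] y = g y ∈ [a,b], g y ∈ [b,c]
    exfalso
    have e5 : g^[5] y = g^[1] y := by
      conv_lhs => rw [hmod 5]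
    rw [e5] at i5
    rw [Function.iterate_one] at i5 i1
    have hgyb : g y = b := le_antisymm i5.2 i1.1
    have hyc : y = c := by
      have h2 : g^[2] y = y := by rw [hmod]; norm_num
      calc y = g^[2] y := h2.symm
        _ = g (g y) := by rw [show (2:ℕ) = 1+1 from rfl, Function.iterate_succ_apply', Function.iterate_one]
        _ = g b := by rw [hgyb]
        _ = c := hgb
    rw [hyc] at hd
    omega
  · -- d = 3
    exfalso
    have e5 : g^[5] y = g^[2] y := by
      conv_lhs => rw [hmod 5]
    rw [e5] at i5
    have hg2yb : g^[2] y = b := le_antisymm i5.2 i2.1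
    have hyc : y = c := by
      have h3 : g^[3] y = y := by rw [hmod]; norm_num
      calc y = g^[3] y := h3.symm
        _ = g (g^[2] y) := by rw [show (3:ℕ) = 2+1 from rfl, Function.iterate_succ_apply']
        _ = g b := by rw [hg2yb]
        _ = c := hgb
    have hgya : g y = a := by rw [hyc, hgc]
    rw [Function.iterate_one, hgya] at i1
    linarith [i1.1]
  · exfalso; omega
  · exfalso; omega
  · rfl

lemma period3 (hg : Continuous g) (x : ℝ) (hx : minimalPeriod g x = 3) :
    ∃ y, minimalPeriod g y = 6 := by
  have hxmem : x ∈ periodicPts g := by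
    rw [← minimalPeriod_pos_iff_mem_periodicPts, hx]; norm_num
  have h3 : g^[3] x = x := by rw [← hx]; exact iterate_minimalPeriod
  have horb : g (g (g x)) = x := by
    rw [show (3:ℕ) = 2+1 from rfl, Function.iterate_succ_apply',
      show (2:ℕ) = 1+1 from rfl, Function.iterate_succ_apply',
      Function.iterate_one] at h3
    exact h3
  have hp0 : minimalPeriod g x = 3 := hx
  have hp1 : minimalPeriod g (g x) = 3 := by
    have := minimalPeriod_apply hxmem; rwa [hx] at this
  have hx1mem : g x ∈ periodicPts g := by
    rw [← minimalPeriod_pos_iff_mem_periodicPts, hp1]; norm_num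
  have hp2 : minimalPeriod g (g (g x)) = 3 := by
    have := minimalPeriod_apply hx1mem; rwa [hp1] at this
  have hne01 : x ≠ g x := by
    intro h
    have : minimalPeriod g x = 1 := minimalPeriod_eq_one_iff_isFixedPt.mpr (Eq.symm h)
    omega
  have hne12 : g x ≠ g (g x) := by
    intro h
    have : minimalPeriod g (g x) = 1 := minimalPeriod_eq_one_iff_isFixedPt.mpr (Eq.symm h)
    omega
  have hne02 : x ≠ g (g x) := by
    intro h
    have hfix : g (g (g x)) = g (g x) := by rw [horb]; exact h
    have : minimalPeriod g (g (g x)) = 1 := minimalPeriod_eq_one_iff_isFixedPt.mpr hfix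
    omega
  set g' : ℝ → ℝ := fun s => -g (-s) with hg'
  have hg'c : Continuous g' := by
    rw [hg']
    exact (hg.comp continuous_neg).neg
  have hrefl : ∀ z : ℝ, minimalPeriod g' (-z) = minimalPeriod g z :=
    fun z => reflect_minimalPeriod g z
  have hback : (∃ y, minimalPeriod g' y = 6) → ∃ y, minimalPeriod g y = 6 := by
    rintro ⟨y, hy⟩
    refine ⟨-y, ?_⟩
    have h2 : minimalPeriod g' y = minimalPeriod g (-y) := by
      rw [← hrefl (-y), neg_neg]
    rw [← h2]
    exact hy
  have hg'maps : ∀ z w : ℝ, g z = w → g' (-z) = -w := by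
    intro z w h; simp only [hg', neg_neg, h]
  rcases lt_trichotomy x (g x) with h01 | h01 | h01
  · rcases lt_trichotomy (g x) (g (g x)) with h12 | h12 | h12
    · exact case1 hg x (g x) (g (g x)) h01 h12 rfl rfl horb hp0
    · exact absurd h12 hne12
    · rcases lt_trichotomy x (g (g x)) with h02 | h02 | h02
      · apply hback
        refine case1 hg'c (-(g x)) (-(g (g x))) (-x) (by linarith) (by linarith) ?_ ?_ ?_ ?_
        · exact hg'maps (g x) (g (g x)) rfl
        · exact hg'maps (g (g x)) x horb
        · exact hg'maps x (g x) rfl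
        · rw [hrefl]; exact hp1
      · exact absurd h02 hne02
      · exact case1 hg (g (g x)) x (g x) h02 h01 horb rfl rfl hp2
  · exact absurd h01 hne01
  · rcases lt_trichotomy (g x) (g (g x)) with h12 | h12 | h12
    · rcases lt_trichotomy x (g (g x)) with h02 | h02 | h02
      · apply hback
        refine case1 hg'c (-(g (g x))) (-x) (-(g x)) (by linarith) (by linarith) ?_ ?_ ?_ ?_
        · exact hg'maps (g (g x)) x horb
        · exact hg'maps x (g x) rfl
        · exact hg'maps (g x) (g (g x)) rfl
        · rw [hrefl]; exact hp2
      · exact absurd h02 hne02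
      · exact case1 hg (g x) (g (g x)) x h12 h02 rfl horb rfl hp1
    · exact absurd h12 hne12
    · apply hback
      refine case1 hg'c (-x) (-(g x)) (-(g (g x))) (by linarith) (by linarith) ?_ ?_ ?_ ?_
      · exact hg'maps x (g x) rfl
      · exact hg'maps (g x) (g (g x)) rfl
      · exact hg'maps (g (g x)) x horb
      · rw [hrefl]; exact hp0


theorem core : ∀ r : ℕ, Odd r → 1 < r → ∀ g : ℝ → ℝ, Continuous g →
    (∃ x, minimalPeriod g x = r) → ∃ y, minimalPeriod g y = 6 := by
  intro r
  induction r using Nat.strong_induction_on with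
  | _ r ih =>
  rintro hr hr1 g hg ⟨x, hx⟩
  have hrodd : r % 2 = 1 := Nat.odd_iff.mp hr
  rcases (show r = 3 ∨ 5 ≤ r by omega) with hr3 | hr5
  · exact period3 hg x (by rw [hx, hr3])
  -- now r ≥ 5
  have hrpos : 0 < r := by omega
  have hxmem : x ∈ periodicPts g := by
    rw [← minimalPeriod_pos_iff_mem_periodicPts, hx]; omega
  -- the orbit
  set Ofin : Finset ℝ := (Finset.range r).image (fun i => g^[i] x) with hOfin
  have hinj : ∀ i j, i < r → j < r → g^[i] x = g^[j] x → i = j := by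
    intro i j hi hj hij
    have := iterate_injOn_Iio_minimalPeriod (f := g) (x := x)
    rw [hx] at this
    exact this (by simpa using hi) (by simpa using hj) hij
  have hcardO : Ofin.card = r := by
    rw [hOfin, Finset.card_image_of_injOn, Finset.card_range]
    intro i hi j hj hij
    exact hinj i j (by simpa using hi) (by simpa using hj) hij
  have hmemO : ∀ t, t ∈ Ofin ↔ ∃ i, i < r ∧ g^[i] x = t := by
    intro t
    rw [hOfin]
    simp [Finset.mem_image]
  have hxO : x ∈ Ofin := (hmemO x).mpr ⟨0, by omega, by simp⟩
  have hgO : ∀ t, t ∈ Ofin → g t ∈ Ofin := by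
    intro t ht
    obtain ⟨i, hi, rfl⟩ := (hmemO t).mp ht
    rcases (show i + 1 < r ∨ i + 1 = r by omega) with h | h
    · refine (hmemO _).mpr ⟨i+1, h, ?_⟩
      rw [Function.iterate_succ_apply']
    · refine (hmemO _).mpr ⟨0, by omega, ?_⟩
      have hiter : g^[i+1] x = x := by
        rw [h, ← hx]; exact iterate_minimalPeriod
      show g^[0] x = g (g^[i] x)
      rw [← Function.iterate_succ_apply' g i x]
      simpa using hiter.symm
  have hiterO : ∀ t, t ∈ Ofin → ∀ i, g^[i] t ∈ Ofin := by
    intro t ht i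
    induction i with
    | zero => simpa using ht
    | succ n ihn => rw [Function.iterate_succ_apply']; exact hgO _ ihn
  have hOper : ∀ t, t ∈ Ofin → minimalPeriod g t = r := by
    intro t ht
    obtain ⟨i, hi, rfl⟩ := (hmemO t).mp ht
    rw [minimalPeriod_apply_iterate hxmem, hx]
  have hOne : ∀ t, t ∈ Ofin → g t ≠ t := by
    intro t ht h
    have h1 : minimalPeriod g t = 1 := minimalPeriod_eq_one_iff_isFixedPt.mpr h
    have := hOper t ht
    omega
  have hwrapIter : ∀ t, t ∈ Ofin → ∀ m, g^[m] t = g^[m % r] t := by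
    intro t ht m
    have := Function.iterate_mod_minimalPeriod_eq (f := g) (x := t) (n := m)
    rw [hOper t ht] at this
    exact this.symm
  have hOr : ∀ t, t ∈ Ofin → g^[r] t = t := by
    intro t ht
    rw [← hOper t ht]
    exact iterate_minimalPeriod
  have hginj : ∀ t t', t ∈ Ofin → t' ∈ Ofin → g t = g t' → t = t' := by
    intro t t' ht ht' h
    have e : ∀ s, s ∈ Ofin → g^[r-1] (g s) = s := by
      intro s hs
      have : g^[r-1] (g s) = g^[r] s := by
        rw [← Function.iterate_succ_apply]
        congr 1
        omega
      rw [this, hOr s hs]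
    rw [← e t ht, ← e t' ht', h]
  -- p and q
  have hOne' : Ofin.Nonempty := ⟨x, hxO⟩
  set up : Finset ℝ := Ofin.filter (fun t => t < g t) with hup
  have hupne : up.Nonempty := by
    set m0 := Ofin.min' hOne' with hm0
    have hm0O : m0 ∈ Ofin := Finset.min'_mem _ _
    refine ⟨m0, ?_⟩
    rw [hup, Finset.mem_filter]
    refine ⟨hm0O, ?_⟩
    have := Finset.min'_le Ofin (g m0) (hgO _ hm0O)
    rcases lt_or_eq_of_le this with h | h
    · exact h
    · exact absurd h.symm (hOne m0 hm0O)
  set p := up.max' hupne with hp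
  have hpup : p ∈ up := Finset.max'_mem _ _
  have hpO : p ∈ Ofin := (Finset.mem_filter.mp hpup).1
  have hpgp : p < g p := (Finset.mem_filter.mp hpup).2
  set dn : Finset ℝ := Ofin.filter (fun t => p < t) with hdn
  have hdnne : dn.Nonempty := by
    set M0 := Ofin.max' hOne' with hM0
    have hM0O : M0 ∈ Ofin := Finset.max'_mem _ _
    refine ⟨M0, ?_⟩
    rw [hdn, Finset.mem_filter]
    refine ⟨hM0O, ?_⟩
    have hgM0 : g M0 < M0 := by
      have := Finset.le_max' Ofin (g M0) (hgO _ hM0O)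
      rcases lt_or_eq_of_le this with h | h
      · exact h
      · exact absurd h (hOne M0 hM0O)
    have hle := Finset.le_max' Ofin p hpO
    rcases lt_or_eq_of_le hle with h | h
    · exact h
    · exfalso; rw [h] at hpgp
      have := Finset.le_max' Ofin (g M0) (hgO _ hM0O)
      linarith
  set q := dn.min' hdnne with hq
  have hqdn : q ∈ dn := Finset.min'_mem _ _
  have hqO : q ∈ Ofin := (Finset.mem_filter.mp hqdn).1
  have hpq : p < q := (Finset.mem_filter.mp hqdn).2
  have hgap : ∀ t, t ∈ Ofin → t ≤ p ∨ q ≤ t := by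
    intro t ht
    rcases le_or_gt t p with h | h
    · exact Or.inl h
    · exact Or.inr (Finset.min'_le dn t (by rw [hdn, Finset.mem_filter]; exact ⟨ht, h⟩))
  have hgp : q ≤ g p :=
    Finset.min'_le dn (g p) (by rw [hdn, Finset.mem_filter]; exact ⟨hgO _ hpO, hpgp⟩)
  have hgq : g q ≤ p := by
    have hqnup : q ∉ up := by
      intro h
      have := Finset.le_max' up q h
      rw [← hp] at this
      linarith
    have hgqle : g q < q := by
      rcases lt_trichotomy (g q) q with h | h | h
      · exact h
      · exact absurd h (hOne q hqO)
      · exfalso; exact hqnup (by rw [hup, Finset.mem_filter]; exact ⟨hqO, h⟩)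
    rcases hgap (g q) (hgO _ hqO) with h | h
    · exact h
    · linarith
  -- the V chain
  set nxt : ℝ × ℝ → ℝ × ℝ :=
    fun uv => (sInf (g '' Icc uv.1 uv.2), sSup (g '' Icc uv.1 uv.2)) with hnxt
  set ab : ℕ → ℝ × ℝ := fun j => nxt^[j] (p, q) with hab
  have hab0 : ab 0 = (p, q) := rfl
  have habS : ∀ j, ab (j+1) = nxt (ab j) := by
    intro j
    show nxt^[j+1] (p, q) = nxt (nxt^[j] (p, q))
    exact Function.iterate_succ_apply' nxt j (p, q)
  have himg : ∀ u v : ℝ, u ≤ v → g '' Icc u v = Icc (nxt (u, v)).1 (nxt (u, v)).2 := by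
    intro u v huv
    exact ContinuousOn.image_Icc huv hg.continuousOn
  have hVle : ∀ j, (ab j).1 ≤ (ab j).2 := by
    intro j
    induction j with
    | zero => rw [hab0]; exact le_of_lt hpq
    | succ n ihn =>
      rw [habS]
      have := himg (ab n).1 (ab n).2 ihn
      have hne : (g '' Icc (ab n).1 (ab n).2).Nonempty := (nonempty_Icc.2 ihn).image g
      rw [this] at hne
      exact nonempty_Icc.1 hne
  have hVim : ∀ j, g '' Icc (ab j).1 (ab j).2 = Icc (ab (j+1)).1 (ab (j+1)).2 := by
    intro j
    rw [habS]
    exact himg _ _ (hVle j)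
  have hV01 : Icc p q ⊆ Icc (ab 1).1 (ab 1).2 := by
    rw [← hVim 0, hab0]
    intro t ht
    have key := intermediate_value_Icc' (α := ℝ) (δ := ℝ) (a := p) (b := q) (f := g)
      (le_of_lt hpq) hg.continuousOn
    exact key ⟨le_trans hgq ht.1, le_trans ht.2 hgp⟩
  have hVmono : ∀ j, Icc (ab j).1 (ab j).2 ⊆ Icc (ab (j+1)).1 (ab (j+1)).2 := by
    intro j
    induction j with
    | zero => rw [hab0]; exact hV01
    | succ n ihn =>
      rw [← hVim n, ← hVim (n+1)]
      exact Set.image_mono ihn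
  have hVmono' : ∀ j k, j ≤ k → Icc (ab j).1 (ab j).2 ⊆ Icc (ab k).1 (ab k).2 := by
    intro j k hjk
    induction k with
    | zero =>
      have : j = 0 := by omega
      rw [this]
    | succ n ihn =>
      rcases (show j = n + 1 ∨ j ≤ n by omega) with h | h
      · rw [h]
      · exact subset_trans (ihn h) (hVmono n)
  have hpqV : ∀ j, p ∈ Icc (ab j).1 (ab j).2 ∧ q ∈ Icc (ab j).1 (ab j).2 := by
    intro j
    constructor
    · exact hVmono' 0 j (by omega) (by rw [hab0]; exact ⟨le_rfl, le_of_lt hpq⟩)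
    · exact hVmono' 0 j (by omega) (by rw [hab0]; exact ⟨le_of_lt hpq, le_rfl⟩)
  -- M sets
  set M : ℕ → Finset ℝ :=
    fun j => Ofin.filter (fun t => (ab j).1 ≤ t ∧ t ≤ (ab j).2) with hM
  have hMsub : ∀ j, M j ⊆ Ofin := fun j => Finset.filter_subset _ _
  have hMmem : ∀ j t, t ∈ M j ↔ t ∈ Ofin ∧ t ∈ Icc (ab j).1 (ab j).2 := by
    intro j t
    rw [hM]
    simp [Finset.mem_filter, mem_Icc]
  have hMmono : ∀ j k, j ≤ k → M j ⊆ M k := by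
    intro j k hjk t ht
    rw [hMmem] at ht ⊢
    exact ⟨ht.1, hVmono' j k hjk ht.2⟩
  have hgM : ∀ j t, t ∈ M j → g t ∈ M (j+1) := by
    intro j t ht
    rw [hMmem] at ht ⊢
    refine ⟨hgO _ ht.1, ?_⟩
    rw [← hVim j]
    exact mem_image_of_mem g ht.2
  have hpM : ∀ j, p ∈ M j := by
    intro j
    rw [hMmem]
    exact ⟨hpO, (hpqV j).1⟩
  have hqM : ∀ j, q ∈ M j := by
    intro j
    rw [hMmem]
    exact ⟨hqO, (hpqV j).2⟩
  -- transitivity closure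
  have htransp : ∀ t, t ∈ Ofin → ∃ i, g^[i] p = t := by
    intro t ht
    obtain ⟨a, ha, hap⟩ := (hmemO p).mp hpO
    obtain ⟨b, hb, hbt⟩ := (hmemO t).mp ht
    refine ⟨(r - a) + b, ?_⟩
    rw [← hap, ← Function.iterate_add_apply, ← hbt]
    have e1 : r - a + b + a = b + r := by omega
    rw [e1, Function.iterate_add_apply, hOr x hxO]
  have hclosure : ∀ S : Finset ℝ, (∀ a ∈ S, a ∈ Ofin) → p ∈ S → (∀ a ∈ S, g a ∈ S) →
      ∀ t, t ∈ Ofin → t ∈ S := by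
    intro S hSO hpS hSg t ht
    obtain ⟨i, rfl⟩ := htransp t ht
    clear ht
    induction i with
    | zero => simpa using hpS
    | succ n ihn =>
      rw [Function.iterate_succ_apply']
      exact hSg _ ihn
  -- growth of M
  have hMgrow : ∀ j, M j ≠ Ofin → M j ⊂ M (j+1) := by
    intro j hne
    rw [Finset.ssubset_iff_of_subset (hMmono j (j+1) (by omega))]
    by_contra hcon
    push_neg at hcon
    apply hne
    apply Finset.Subset.antisymm (hMsub j)
    intro t ht
    refine hclosure (M j) (fun a ha => hMsub j ha) (hpM j) ?_ t ht
    intro a ha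
    have := hgM j a ha
    by_contra hga
    exact absurd (hcon (g a) this) (by simpa using hga)
  have hMlow : ∀ j, M j ≠ Ofin → j + 2 ≤ (M j).card := by
    intro j
    induction j with
    | zero =>
      intro _
      have : ({p, q} : Finset ℝ) ⊆ M 0 := by
        intro t ht
        rcases Finset.mem_insert.mp ht with h | h
        · rw [h]; exact hpM 0
        · rw [Finset.mem_singleton.mp h]; exact hqM 0
      have hc : ({p, q} : Finset ℝ).card = 2 := by
        rw [Finset.card_insert_of_notMem (by simp [ne_of_lt hpq]), Finset.card_singleton]
      calc 0 + 2 = ({p, q} : Finset ℝ).card := by rw [hc]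
        _ ≤ (M 0).card := Finset.card_le_card this
    | succ n ihn =>
      intro hne
      have hnne : M n ≠ Ofin := by
        intro h
        apply hne
        apply Finset.Subset.antisymm (hMsub (n+1))
        rw [← h]
        exact hMmono n (n+1) (by omega)
      have := Finset.card_lt_card (hMgrow n hnne)
      have := ihn hnne
      omega
  have hMfull : M (r-2) = Ofin := by
    by_contra hne
    have h1 := hMlow (r-2) hne
    have h2 : (M (r-2)).card < r := by
      have hss : M (r-2) ⊂ Ofin := Finset.ssubset_iff_subset_ne.mpr ⟨hMsub _, hne⟩
      have := Finset.card_lt_card hss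
      omega
    omega
  -- flips
  set Flip : ℝ → ℝ → Prop := fun c d =>
    c ∈ Ofin ∧ d ∈ Ofin ∧ c < d ∧ g c ≤ p ∧ q ≤ g d ∧ (q ≤ c ∨ d ≤ p) with hFlip
  -- witness existence
  have hwit : ∃ t, t ∈ Ofin ∧ ((t ≤ p ∧ g t ≤ p) ∨ (q ≤ t ∧ q ≤ g t)) := by
    by_contra hcon
    push_neg at hcon
    have hcross : ∀ t, t ∈ Ofin → ((t ≤ p → q ≤ g t) ∧ (q ≤ t → g t ≤ p)) := by
      intro t ht
      have h := hcon t ht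
      constructor
      · intro htp
        rcases hgap (g t) (hgO t ht) with hh | hh
        · exfalso; have := h.1 htp; linarith
        · exact hh
      · intro hqt
        rcases hgap (g t) (hgO t ht) with hh | hh
        · exact hh
        · exfalso; have := h.2 hqt; linarith
    have halt : ∀ i, (Even i → g^[i] p ≤ p) ∧ (Odd i → q ≤ g^[i] p) := by
      intro i
      induction i with
      | zero =>
        constructor
        · intro _; simp
        · intro h; exact absurd h (by simp)
      | succ n ihn =>
        have hnO : g^[n] p ∈ Ofin := hiterO p hpO n
        constructor
        · intro he
          have hno : Odd n := Nat.Even.sub_odd (by omega) he odd_one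
          have h1 := ihn.2 hno
          rw [Function.iterate_succ_apply']
          exact (hcross _ hnO).2 h1
        · intro ho
          have hne : Even n := by
            rcases Nat.even_or_odd n with h | h
            · exact h
            · exfalso
              rw [Nat.odd_iff] at h ho
              omega
          have h1 := ihn.1 hne
          rw [Function.iterate_succ_apply']
          exact (hcross _ hnO).1 h1
    have := (halt r).2 hr
    rw [hOr p hpO] at this
    linarith
  have hflipex : ∃ c d, Flip c d := by
    obtain ⟨t, htO, hcase⟩ := hwit
    rcases hcase with hL | hR
    · -- left witness
      set W : Finset ℝ := Ofin.filter (fun s => s ≤ p ∧ g s ≤ p) with hW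
      have hWne : W.Nonempty := ⟨t, by rw [hW, Finset.mem_filter]; exact ⟨htO, hL⟩⟩
      set w := W.max' hWne with hw
      have hwW : w ∈ W := Finset.max'_mem _ _
      have hwO : w ∈ Ofin := (Finset.mem_filter.mp hwW).1
      have hwp : w ≤ p := (Finset.mem_filter.mp hwW).2.1
      have hgw : g w ≤ p := (Finset.mem_filter.mp hwW).2.2
      have hwplt : w < p := by
        rcases lt_or_eq_of_le hwp with h | h
        · exact h
        · exfalso; rw [h] at hgw; linarith
      set C : Finset ℝ := Ofin.filter (fun s => w < s ∧ s ≤ p) with hC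
      have hCne : C.Nonempty := ⟨p, by rw [hC, Finset.mem_filter]; exact ⟨hpO, hwplt, le_rfl⟩⟩
      set c := C.min' hCne with hc
      have hcC : c ∈ C := Finset.min'_mem _ _
      have hcO : c ∈ Ofin := (Finset.mem_filter.mp hcC).1
      have hwc : w < c := (Finset.mem_filter.mp hcC).2.1
      have hcp : c ≤ p := (Finset.mem_filter.mp hcC).2.2
      have hgc : q ≤ g c := by
        rcases hgap (g c) (hgO c hcO) with h | h
        · exfalso
          have : c ∈ W := by rw [hW, Finset.mem_filter]; exact ⟨hcO, hcp, h⟩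
          have := Finset.le_max' W c this
          rw [← hw] at this
          linarith
        · exact h
      exact ⟨w, c, hwO, hcO, hwc, hgw, hgc, Or.inr hcp⟩
    · -- right witness
      set W : Finset ℝ := Ofin.filter (fun s => q ≤ s ∧ q ≤ g s) with hW
      have hWne : W.Nonempty := ⟨t, by rw [hW, Finset.mem_filter]; exact ⟨htO, hR⟩⟩
      set w := W.min' hWne with hw
      have hwW : w ∈ W := Finset.min'_mem _ _
      have hwO : w ∈ Ofin := (Finset.mem_filter.mp hwW).1
      have hqw : q ≤ w := (Finset.mem_filter.mp hwW).2.1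
      have hgw : q ≤ g w := (Finset.mem_filter.mp hwW).2.2
      have hqwlt : q < w := by
        rcases lt_or_eq_of_le hqw with h | h
        · exact h
        · exfalso; rw [← h] at hgw; linarith
      set C : Finset ℝ := Ofin.filter (fun s => q ≤ s ∧ s < w) with hC
      have hCne : C.Nonempty := ⟨q, by rw [hC, Finset.mem_filter]; exact ⟨hqO, le_rfl, hqwlt⟩⟩
      set c := C.max' hCne with hc
      have hcC : c ∈ C := Finset.max'_mem _ _
      have hcO : c ∈ Ofin := (Finset.mem_filter.mp hcC).1
      have hqc : q ≤ c := (Finset.mem_filter.mp hcC).2.1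
      have hcw : c < w := (Finset.mem_filter.mp hcC).2.2
      have hgc : g c ≤ p := by
        rcases hgap (g c) (hgO c hcO) with h | h
        · exact h
        · exfalso
          have : c ∈ W := by rw [hW, Finset.mem_filter]; exact ⟨hcO, hqc, h⟩
          have := Finset.min'_le W c this
          rw [← hw] at this
          linarith
      exact ⟨c, w, hcO, hwO, hcw, hgc, hgw, Or.inl hqc⟩
  by_cases hkill : ∃ c d, Flip c d ∧ c ∈ M (r-3) ∧ d ∈ M (r-3)
  · -- padding loop kill
    obtain ⟨c, d, hf, hcM, hdM⟩ := hkill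
    obtain ⟨hcO, hdO, hcd, hgcp, hqgd, hside⟩ := hf
    set J : ℕ → ℝ × ℝ :=
      fun i => if i = 0 then (p, q) else if i ≤ r-4 then ab i else (c, d) with hJ
    have hJ0 : J 0 = (p, q) := by simp [hJ]
    have hJmid : ∀ i, 1 ≤ i → i ≤ r-4 → J i = ab i := by
      intro i h1 h2
      simp only [hJ, if_neg (by omega : ¬ i = 0), if_pos h2]
    have hJlast : J (r-3) = (c, d) := by
      simp only [hJ, if_neg (by omega : ¬ r-3 = 0), if_neg (by omega : ¬ r-3 ≤ r-4)]
    have hle : ∀ i, i < r-2 → (J i).1 ≤ (J i).2 := by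
      intro i hi
      rcases (show i = 0 ∨ (1 ≤ i ∧ i ≤ r-4) ∨ i = r-3 by omega) with h | h | h
      · rw [h, hJ0]; exact le_of_lt hpq
      · rw [hJmid i h.1 h.2]; exact hVle i
      · rw [h, hJlast]; exact le_of_lt hcd
    have hcdV : Icc c d ⊆ Icc (ab (r-3)).1 (ab (r-3)).2 := by
      rw [hMmem] at hcM hdM
      intro s hs
      exact ⟨le_trans hcM.2.1 hs.1, le_trans hs.2 hdM.2.2⟩
    have hcov : ∀ i, i < r-2 →
        Icc (J ((i+1) % (r-2))).1 (J ((i+1) % (r-2))).2 ⊆ g '' Icc (J i).1 (J i).2 := by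
      intro i hi
      rcases (show i = 0 ∨ (1 ≤ i ∧ i ≤ r-5) ∨ i = r-4 ∨ i = r-3 by omega) with h | h | h | h
      · subst h
        have hm : (0+1) % (r-2) = 1 := by
          rw [Nat.mod_eq_of_lt (by omega)]
        rw [hm, hJ0, hJmid 1 le_rfl (by omega)]
        rw [show Icc p q = Icc (ab 0).1 (ab 0).2 by rw [hab0]]
        rw [← hVim 0]
      · have hm : (i+1) % (r-2) = i+1 := Nat.mod_eq_of_lt (by omega)
        rw [hm, hJmid i h.1 (by omega), hJmid (i+1) (by omega) (by omega)]
        rw [← hVim i]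
      · subst h
        have hm : (r-4+1) % (r-2) = r-3 := by
          rw [show r-4+1 = r-3 by omega, Nat.mod_eq_of_lt (by omega)]
        rw [hm, hJlast, hJmid (r-4) (by omega) le_rfl]
        rw [show r-3 = (r-4)+1 by omega] at hcdV
        rw [← hVim (r-4)] at hcdV
        exact hcdV
      · subst h
        have hm : (r-3+1) % (r-2) = 0 := by
          rw [show r-3+1 = r-2 by omega, Nat.mod_self]
        rw [hm, hJ0, hJlast]
        have key := intermediate_value_Icc (α := ℝ) (δ := ℝ) (a := c) (b := d) (f := g)
          (le_of_lt hcd) hg.continuousOn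
        intro s hs
        exact key ⟨le_trans hgcp hs.1, le_trans hs.2 hqgd⟩
    obtain ⟨y, hy, hyit⟩ := loop hg J (r-2) (by omega) hle hcov
    have hyper : Function.IsPeriodicPt g (r-2) y := hy
    set d₁ := minimalPeriod g y with hd₁
    have hdvd : d₁ ∣ r-2 := hyper.minimalPeriod_dvd
    have hpos : 0 < d₁ := hyper.minimalPeriod_pos (by omega)
    have hmod : ∀ i : ℕ, g^[i] y = g^[i % d₁] y := fun i =>
      (Function.iterate_mod_minimalPeriod_eq (f := g) (x := y) (n := i)).symm
    have hd1ne : d₁ ≠ 1 := by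
      intro h1
      have hfix : g y = y := by
        have := minimalPeriod_eq_one_iff_isFixedPt.mp (by rw [← hd₁, h1])
        exact this
      have hiter1 : ∀ i, g^[i] y = y := by
        intro i
        induction i with
        | zero => simp
        | succ n ihn => rw [Function.iterate_succ_apply', ihn, hfix]
      have i0 := hyit 0 (by omega)
      have il := hyit (r-3) (by omega)
      rw [hiter1] at i0 il
      rw [hJ0] at i0
      rw [hJlast] at il
      rcases hside with hh | hh
      · have hyq : y = q := le_antisymm i0.2 (le_trans hh il.1)
        rw [hyq] at hfix
        exact hOne q hqO hfix
      · have hyp : y = p := le_antisymm (le_trans il.2 hh) i0.1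
        rw [hyp] at hfix
        exact hOne p hpO hfix
    have hd1odd : Odd d₁ := by
      rw [Nat.odd_iff]
      by_contra hcon2
      have h2 : 2 ∣ d₁ := by omega
      have : 2 ∣ r - 2 := dvd_trans h2 hdvd
      omega
    have hd1lt : d₁ < r := by
      have := Nat.le_of_dvd (by omega) hdvd
      omega
    exact ih d₁ hd1lt hd1odd (by omega) g hg ⟨y, rfl⟩
  · -- survivor case
    push_neg at hkill
    -- survivor: every flip touches the last-absorbed point
    have hMne3 : M (r-3) ≠ Ofin := by
      obtain ⟨c, d, hf⟩ := hflipex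
      intro hfull
      have h1 : c ∈ M (r-3) := by rw [hfull]; exact hf.1
      have h2 : d ∈ M (r-3) := by rw [hfull]; exact hf.2.1
      exact hkill c d hf h1 h2
    have hMne' : ∀ j, j ≤ r-3 → M j ≠ Ofin := by
      intro j hj h
      apply hMne3
      apply Finset.Subset.antisymm (hMsub _)
      rw [← h]
      exact hMmono j (r-3) hj
    have hcard3 : (M (r-3)).card = r - 1 := by
      have h1 := hMlow (r-3) hMne3
      have h2 : (M (r-3)).card < r := by
        have hss : M (r-3) ⊂ Ofin := Finset.ssubset_iff_subset_ne.mpr ⟨hMsub _, hMne3⟩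
        have := Finset.card_lt_card hss
        omega
      omega
    have hdown : ∀ k j, j + k = r-3 → (M j).card + k ≤ r-1 := by
      intro k
      induction k with
      | zero => intro j hj; rw [show j = r-3 by omega]; omega
      | succ n ihn =>
        intro j hj
        have h1 := Finset.card_lt_card (hMgrow j (hMne' j (by omega)))
        have h2 := ihn (j+1) (by omega)
        omega
    have hcardE : ∀ j, j ≤ r-2 → (M j).card = j + 2 := by
      intro j hj
      rcases (show j ≤ r-3 ∨ j = r-2 by omega) with h | h
      · have h1 := hMlow j (hMne' j h)
        have h2 := hdown (r-3-j) j (by omega)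
        omega
      · rw [h, hMfull, hcardO]; omega
    have hnew : ∀ j, j ≤ r-3 → (M (j+1) \ M j).card = 1 := by
      intro j hj
      rw [Finset.card_sdiff_of_subset (hMmono j (j+1) (by omega))]
      rw [hcardE (j+1) (by omega), hcardE j (by omega)]
      omega
    have hpick : ∀ j, ∃ t, (j ≤ r-3 → M (j+1) \ M j = {t}) := by
      intro j
      by_cases hj : j ≤ r-3
      · obtain ⟨t, ht⟩ := Finset.card_eq_one.mp (hnew j hj)
        exact ⟨t, fun _ => ht⟩
      · exact ⟨0, fun h => absurd h hj⟩
    choose nz hnz using hpick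
    set z : ℕ → ℝ := fun n => if n = 0 then p else if n = 1 then q else nz (n-2) with hzdef
    have hz0 : z 0 = p := by simp [hzdef]
    have hz1 : z 1 = q := by simp [hzdef]
    have hzdiff : ∀ i, 2 ≤ i → i ≤ r-1 → M (i-1) \ M (i-2) = {z i} := by
      intro i h2 hi
      have := hnz (i-2) (by omega)
      rw [show i-2+1 = i-1 by omega] at this
      rw [hzdef]
      simp only [if_neg (by omega : ¬ i = 0), if_neg (by omega : ¬ i = 1)]
      exact this
    have hznew : ∀ i, 2 ≤ i → i ≤ r-1 → z i ∈ M (i-1) ∧ z i ∉ M (i-2) := by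
      intro i h2 hi
      have h := hzdiff i h2 hi
      have : z i ∈ M (i-1) \ M (i-2) := by rw [h]; exact Finset.mem_singleton_self _
      exact ⟨(Finset.mem_sdiff.mp this).1, (Finset.mem_sdiff.mp this).2⟩
    have hzMfwd : ∀ i j, i ≤ r-1 → j ≤ r-2 → i ≤ j+1 → z i ∈ M j := by
      intro i j hi hj hij
      rcases (show i = 0 ∨ i = 1 ∨ 2 ≤ i by omega) with h | h | h
      · rw [h, hz0]; exact hpM j
      · rw [h, hz1]; exact hqM j
      · exact hMmono (i-1) j (by omega) (hznew i h hi).1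
    have hzMrev : ∀ i j, i ≤ r-1 → j ≤ r-2 → z i ∈ M j → i ≤ j+1 := by
      intro i j hi hj hmem
      by_contra hcon2
      push_neg at hcon2
      have h2 : 2 ≤ i := by omega
      exact (hznew i h2 hi).2 (hMmono j (i-2) (by omega) hmem)
    have hzO : ∀ i, i ≤ r-1 → z i ∈ Ofin := by
      intro i hi
      exact hMsub (r-2) (hzMfwd i (r-2) hi (by omega) (by omega))
    have hzinj : ∀ i j, i ≤ r-1 → j ≤ r-1 → z i = z j → i = j := by
      have key : ∀ i j, i < j → j ≤ r-1 → z i = z j → False := by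
        intro i j hij hj heq
        rcases (show j = 1 ∨ 2 ≤ j by omega) with h | h
        · have : i = 0 := by omega
          rw [this, h, hz0, hz1] at heq
          exact absurd heq (ne_of_lt hpq)
        · have h1 : z i ∈ M (j-2) := hzMfwd i (j-2) (by omega) (by omega) (by omega)
          rw [heq] at h1
          exact (hznew j h hj).2 h1
      intro i j hi hj heq
      rcases lt_trichotomy i j with h | h | h
      · exact absurd heq (fun e => key i j h hj e)
      · exact h
      · exact absurd heq (fun e => key j i h hi e.symm)
    have hzsurj : ∀ t, t ∈ Ofin → ∃ i, i ≤ r-1 ∧ z i = t := by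
      have hSeq : (Finset.range r).image z = Ofin := by
        apply Finset.eq_of_subset_of_card_le
        · intro t ht
          obtain ⟨i, hi, rfl⟩ := Finset.mem_image.mp ht
          exact hzO i (by have := Finset.mem_range.mp hi; omega)
        · rw [hcardO, Finset.card_image_of_injOn, Finset.card_range]
          intro i hi j hj hij
          exact hzinj i j (by have := Finset.mem_range.mp hi; omega)
            (by have := Finset.mem_range.mp hj; omega) hij
      intro t ht
      rw [← hSeq] at ht
      obtain ⟨i, hi, hzi⟩ := Finset.mem_image.mp ht
      exact ⟨i, by have := Finset.mem_range.mp hi; omega, hzi⟩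
    -- ω := z (r-1) is the unique point outside M (r-3), and it is an endpoint of the orbit
    have homega : ∀ t, t ∈ Ofin → t ≠ z (r-1) → t ∈ M (r-3) := by
      intro t ht hne
      obtain ⟨i, hi, rfl⟩ := hzsurj t ht
      apply hzMfwd i (r-3) hi (by omega)
      by_contra hcon2
      exact hne (by rw [show i = r-1 by omega])
    have hωO : z (r-1) ∈ Ofin := hzO (r-1) le_rfl
    have hωnotM : z (r-1) ∉ M (r-3) := by
      have := (hznew (r-1) (by omega) le_rfl).2
      rwa [show r-1-2 = r-3 by omega] at this
    have hextreme : (∀ t, t ∈ Ofin → t ≠ z (r-1) → z (r-1) < t) ∨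
        (∀ t, t ∈ Ofin → t ≠ z (r-1) → t < z (r-1)) := by
      have hnotIcc : ¬ ((ab (r-3)).1 ≤ z (r-1) ∧ z (r-1) ≤ (ab (r-3)).2) := by
        intro h
        exact hωnotM ((hMmem (r-3) (z (r-1))).mpr ⟨hωO, h.1, h.2⟩)
      rw [not_and_or] at hnotIcc
      rcases hnotIcc with h | h
      · push_neg at h
        left
        intro t ht hne
        have := ((hMmem (r-3) t).mp (homega t ht hne)).2.1
        linarith
      · push_neg at h
        right
        intro t ht hne
        have := ((hMmem (r-3) t).mp (homega t ht hne)).2.2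
        linarith
    have hpneω : p ≠ z (r-1) := by
      intro h
      apply hωnotM
      rw [← h]
      exact hpM (r-3)
    have hqneω : q ≠ z (r-1) := by
      intro h
      apply hωnotM
      rw [← h]
      exact hqM (r-3)
    have hsurvflip : ∀ c d, Flip c d → c = z (r-1) ∨ d = z (r-1) := by
      intro c d hf
      by_contra hcon2
      push_neg at hcon2
      exact hkill c d hf (homega c hf.1 hcon2.1) (homega d hf.2.1 hcon2.2)
    have hextremeR : (∃ s, s ∈ Ofin ∧ q ≤ s ∧ q ≤ g s) →
        ∀ t, t ∈ Ofin → t ≠ z (r-1) → t < z (r-1) := by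
      rintro ⟨s, hsO, hqs, hqgs⟩
      -- build a flip on the right side
      set W : Finset ℝ := Ofin.filter (fun u => q ≤ u ∧ q ≤ g u) with hW
      have hWne : W.Nonempty := ⟨s, by rw [hW, Finset.mem_filter]; exact ⟨hsO, hqs, hqgs⟩⟩
      set w := W.min' hWne with hw
      have hwW : w ∈ W := Finset.min'_mem _ _
      have hwO : w ∈ Ofin := (Finset.mem_filter.mp hwW).1
      have hqw : q ≤ w := (Finset.mem_filter.mp hwW).2.1
      have hgw : q ≤ g w := (Finset.mem_filter.mp hwW).2.2
      have hqwlt : q < w := by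
        rcases lt_or_eq_of_le hqw with h | h
        · exact h
        · exfalso; rw [← h] at hgw; linarith
      set C : Finset ℝ := Ofin.filter (fun u => q ≤ u ∧ u < w) with hC
      have hCne : C.Nonempty := ⟨q, by rw [hC, Finset.mem_filter]; exact ⟨hqO, le_rfl, hqwlt⟩⟩
      set c := C.max' hCne with hc
      have hcC : c ∈ C := Finset.max'_mem _ _
      have hcO : c ∈ Ofin := (Finset.mem_filter.mp hcC).1
      have hqc : q ≤ c := (Finset.mem_filter.mp hcC).2.1
      have hcw : c < w := (Finset.mem_filter.mp hcC).2.2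
      have hgc : g c ≤ p := by
        rcases hgap (g c) (hgO c hcO) with h | h
        · exact h
        · exfalso
          have hcW : c ∈ W := by rw [hW, Finset.mem_filter]; exact ⟨hcO, hqc, h⟩
          have := Finset.min'_le W c hcW
          rw [← hw] at this
          linarith
      have hflipcw : Flip c w := ⟨hcO, hwO, hcw, hgc, hgw, Or.inl hqc⟩
      have hωside : q ≤ z (r-1) := by
        rcases hsurvflip c w hflipcw with h | h
        · rw [← h]; exact hqc
        · rw [← h]; exact hqw
      have hright : ∀ t, t ∈ Ofin → t ≠ z (r-1) → t < z (r-1) := by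
        rcases hextreme with hL | hR
        · exfalso
          have := hL p hpO hpneω
          linarith
        · exact hR
      exact hright
    have hextremeL : (∃ s, s ∈ Ofin ∧ s ≤ p ∧ g s ≤ p) →
        ∀ t, t ∈ Ofin → t ≠ z (r-1) → z (r-1) < t := by
      rintro ⟨s, hsO, hps, hpgs⟩
      set W : Finset ℝ := Ofin.filter (fun u => u ≤ p ∧ g u ≤ p) with hW
      have hWne : W.Nonempty := ⟨s, by rw [hW, Finset.mem_filter]; exact ⟨hsO, hps, hpgs⟩⟩
      set w := W.max' hWne with hw
      have hwW : w ∈ W := Finset.max'_mem _ _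
      have hwO : w ∈ Ofin := (Finset.mem_filter.mp hwW).1
      have hwp : w ≤ p := (Finset.mem_filter.mp hwW).2.1
      have hgw : g w ≤ p := (Finset.mem_filter.mp hwW).2.2
      have hwplt : w < p := by
        rcases lt_or_eq_of_le hwp with h | h
        · exact h
        · exfalso; rw [h] at hgw; linarith
      set C : Finset ℝ := Ofin.filter (fun u => w < u ∧ u ≤ p) with hC
      have hCne : C.Nonempty := ⟨p, by rw [hC, Finset.mem_filter]; exact ⟨hpO, hwplt, le_rfl⟩⟩
      set c := C.min' hCne with hc
      have hcC : c ∈ C := Finset.min'_mem _ _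
      have hcO : c ∈ Ofin := (Finset.mem_filter.mp hcC).1
      have hwc : w < c := (Finset.mem_filter.mp hcC).2.1
      have hcp : c ≤ p := (Finset.mem_filter.mp hcC).2.2
      have hgc : q ≤ g c := by
        rcases hgap (g c) (hgO c hcO) with h | h
        · exfalso
          have hcW : c ∈ W := by rw [hW, Finset.mem_filter]; exact ⟨hcO, hcp, h⟩
          have := Finset.le_max' W c hcW
          rw [← hw] at this
          linarith
        · exact h
      have hflipwc : Flip w c := ⟨hwO, hcO, hwc, hgw, hgc, Or.inr hcp⟩
      have hωside : z (r-1) ≤ p := by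
        rcases hsurvflip w c hflipwc with h | h
        · rw [← h]; exact hwp
        · rw [← h]; exact hcp
      rcases hextreme with hL | hR
      · exact hL
      · exfalso
        have := hR q hqO hqneω
        linarith
    have hWR : ∀ t, t ∈ Ofin → q ≤ t → q ≤ g t → t = z (r-1) := by
      intro t ht hqt hqgt
      by_contra hne
      have hright := hextremeR ⟨t, ht, hqt, hqgt⟩
      -- re-derive the flip data to pin w = ω and get min-property
      set W : Finset ℝ := Ofin.filter (fun u => q ≤ u ∧ q ≤ g u) with hW
      have htW : t ∈ W := by rw [hW, Finset.mem_filter]; exact ⟨ht, hqt, hqgt⟩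
      have hWne : W.Nonempty := ⟨t, htW⟩
      set w := W.min' hWne with hw
      have hwW : w ∈ W := Finset.min'_mem _ _
      have hwO : w ∈ Ofin := (Finset.mem_filter.mp hwW).1
      have hqw : q ≤ w := (Finset.mem_filter.mp hwW).2.1
      have hgw : q ≤ g w := (Finset.mem_filter.mp hwW).2.2
      have hqwlt : q < w := by
        rcases lt_or_eq_of_le hqw with h | h
        · exact h
        · exfalso; rw [← h] at hgw; linarith
      set C : Finset ℝ := Ofin.filter (fun u => q ≤ u ∧ u < w) with hC
      have hCne : C.Nonempty := ⟨q, by rw [hC, Finset.mem_filter]; exact ⟨hqO, le_rfl, hqwlt⟩⟩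
      set c := C.max' hCne with hc
      have hcC : c ∈ C := Finset.max'_mem _ _
      have hcO : c ∈ Ofin := (Finset.mem_filter.mp hcC).1
      have hqc : q ≤ c := (Finset.mem_filter.mp hcC).2.1
      have hcw : c < w := (Finset.mem_filter.mp hcC).2.2
      have hgc : g c ≤ p := by
        rcases hgap (g c) (hgO c hcO) with h | h
        · exact h
        · exfalso
          have hcW : c ∈ W := by rw [hW, Finset.mem_filter]; exact ⟨hcO, hqc, h⟩
          have := Finset.min'_le W c hcW
          rw [← hw] at this
          linarith
      have hflipcw : Flip c w := ⟨hcO, hwO, hcw, hgc, hgw, Or.inl hqc⟩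
      rcases hsurvflip c w hflipcw with hcase | hcase
      · -- c = ω : but w ≠ ω so w < ω = c < w
        have hwne : w ≠ z (r-1) := by
          intro h
          rw [hcase, h] at hcw
          exact lt_irrefl _ hcw
        have := hright w hwO hwne
        rw [← hcase] at this
        linarith
      · -- w = ω : then t ≥ w = ω but t < ω
        have hwt : w ≤ t := by
          have := Finset.min'_le W t htW
          rw [← hw] at this
          exact this
        have := hright t ht hne
        rw [← hcase] at this
        linarith
    have hWL : ∀ t, t ∈ Ofin → t ≤ p → g t ≤ p → t = z (r-1) := by
      intro t ht hpt hpgt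
      by_contra hne
      have hleft := hextremeL ⟨t, ht, hpt, hpgt⟩
      set W : Finset ℝ := Ofin.filter (fun u => u ≤ p ∧ g u ≤ p) with hW
      have htW : t ∈ W := by rw [hW, Finset.mem_filter]; exact ⟨ht, hpt, hpgt⟩
      have hWne : W.Nonempty := ⟨t, htW⟩
      set w := W.max' hWne with hw
      have hwW : w ∈ W := Finset.max'_mem _ _
      have hwO : w ∈ Ofin := (Finset.mem_filter.mp hwW).1
      have hwp : w ≤ p := (Finset.mem_filter.mp hwW).2.1
      have hgw : g w ≤ p := (Finset.mem_filter.mp hwW).2.2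
      have hwplt : w < p := by
        rcases lt_or_eq_of_le hwp with h | h
        · exact h
        · exfalso; rw [h] at hgw; linarith
      set C : Finset ℝ := Ofin.filter (fun u => w < u ∧ u ≤ p) with hC
      have hCne : C.Nonempty := ⟨p, by rw [hC, Finset.mem_filter]; exact ⟨hpO, hwplt, le_rfl⟩⟩
      set c := C.min' hCne with hc
      have hcC : c ∈ C := Finset.min'_mem _ _
      have hcO : c ∈ Ofin := (Finset.mem_filter.mp hcC).1
      have hwc : w < c := (Finset.mem_filter.mp hcC).2.1
      have hcp : c ≤ p := (Finset.mem_filter.mp hcC).2.2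
      have hgc : q ≤ g c := by
        rcases hgap (g c) (hgO c hcO) with h | h
        · exfalso
          have hcW : c ∈ W := by rw [hW, Finset.mem_filter]; exact ⟨hcO, hcp, h⟩
          have := Finset.le_max' W c hcW
          rw [← hw] at this
          linarith
        · exact h
      have hflipwc : Flip w c := ⟨hwO, hcO, hwc, hgw, hgc, Or.inr hcp⟩
      rcases hsurvflip w c hflipwc with hcase | hcase
      · -- w = ω : then t ≤ w = ω but ω < t
        have hwt : t ≤ w := by
          have := Finset.le_max' W t htW
          rw [← hw] at this
          exact this
        have := hleft t ht hne
        rw [← hcase] at this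
        linarith
      · -- c = ω : then w ≠ ω and ω < w contradicts w < c = ω
        have hwne : w ≠ z (r-1) := by
          intro h
          rw [h, hcase] at hwc
          exact lt_irrefl _ hwc
        have := hleft w hwO hwne
        rw [← hcase] at this
        linarith
    have hcross : ∀ t, t ∈ Ofin → t ≠ z (r-1) →
        ((t ≤ p → q ≤ g t) ∧ (q ≤ t → g t ≤ p)) := by
      intro t ht hne
      constructor
      · intro htp
        rcases hgap (g t) (hgO t ht) with h | h
        · exact absurd (hWL t ht htp h) hne
        · exact h
      · intro hqt
        rcases hgap (g t) (hgO t ht) with h | h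
        · exact h
        · exact absurd (hWR t ht hqt h) hne
    -- the filling lemma
    have hfill' : ∀ i, 1 ≤ i → i ≤ r-2 → ∃ j, j ≤ i ∧ g (z j) = z (i+1) := by
      intro i h1 h2
      by_contra hno
      push_neg at hno
      set S : Finset ℝ := (Finset.range (i+1)).image z with hS
      have hSO : ∀ a, a ∈ S → a ∈ Ofin := by
        intro a ha
        obtain ⟨j, hj, rfl⟩ := Finset.mem_image.mp ha
        exact hzO j (by have := Finset.mem_range.mp hj; omega)
      have hpS : p ∈ S := by
        rw [hS]
        exact Finset.mem_image.mpr ⟨0, Finset.mem_range.mpr (by omega), hz0⟩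
      have hSg : ∀ a, a ∈ S → g a ∈ S := by
        intro a ha
        obtain ⟨j, hjmem, rfl⟩ := Finset.mem_image.mp ha
        have hj : j ≤ i := by have := Finset.mem_range.mp hjmem; omega
        have hzjM : z j ∈ M (i-1) := hzMfwd j (i-1) (by omega) (by omega) (by omega)
        have hgiM : g (z j) ∈ M i := by
          have := hgM (i-1) (z j) hzjM
          rwa [show i-1+1 = i by omega] at this
        obtain ⟨k, hk, hzk⟩ := hzsurj (g (z j)) (hMsub i hgiM)
        have hkle : k ≤ i+1 := hzMrev k i hk (by omega) (by rw [hzk]; exact hgiM)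
        have hkne : k ≠ i+1 := by
          intro he
          exact hno j hj (by rw [← hzk, he])
        rw [← hzk]
        exact Finset.mem_image.mpr ⟨k, Finset.mem_range.mpr (by omega), rfl⟩
      have hall := hclosure S hSO hpS hSg (z (i+1)) (hzO (i+1) (by omega))
      obtain ⟨j, hjmem, hzj⟩ := Finset.mem_image.mp hall
      have hj : j ≤ i := by have := Finset.mem_range.mp hjmem; omega
      have := hzinj j (i+1) (by omega) (by omega) hzj
      omega
    have hfillmain : ∀ i, 2 ≤ i → i ≤ r-2 → g (z i) = z (i+1) := by
      intro i h2 hi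
      obtain ⟨j, hj, hgj⟩ := hfill' i (by omega) hi
      rcases (show j = 0 ∨ 1 ≤ j by omega) with h | h
      · exfalso
        subst h
        rw [hz0] at hgj
        have hgpM : g p ∈ M 1 := hgM 0 p (hpM 0)
        rw [hgj] at hgpM
        have := hzMrev (i+1) 1 (by omega) (by omega) hgpM
        omega
      · have hzjM : z j ∈ M (j-1) := hzMfwd j (j-1) (by omega) (by omega) (by omega)
        have hgjM : g (z j) ∈ M j := by
          have := hgM (j-1) (z j) hzjM
          rwa [show j-1+1 = j by omega] at this
        rw [hgj] at hgjM
        have hle2 := hzMrev (i+1) j (by omega) (by omega) hgjM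
        have hji : j = i := by omega
        rw [hji] at hgj
        exact hgj
    have hgpM : g p ∈ M 1 := hgM 0 p (hpM 0)
    obtain ⟨k₀, hk₀, hk₀z⟩ := hzsurj (g p) (hMsub 1 hgpM)
    have hk₀le : k₀ ≤ 2 := hzMrev k₀ 1 hk₀ (by omega) (by rw [hk₀z]; exact hgpM)
    have hk₀ne : k₀ ≠ 0 := by
      intro h
      rw [h, hz0] at hk₀z
      exact hOne p hpO hk₀z.symm
    -- common beyond lemma
    have hbeyond : ∀ i t, 2 ≤ i → i ≤ r-1 → t < i →
        ((z i ≤ p → z i < z t) ∧ (q ≤ z i → z t < z i)) := by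
      intro i t h2 hi ht
      have hzi := (hznew i h2 hi).2
      have hnot : ¬((ab (i-2)).1 ≤ z i ∧ z i ≤ (ab (i-2)).2) := by
        intro h
        exact hzi ((hMmem (i-2) (z i)).mpr ⟨hzO i hi, h.1, h.2⟩)
      rw [not_and_or] at hnot
      have hztM : z t ∈ M (i-2) := hzMfwd t (i-2) (by omega) (by omega) (by omega)
      have hzt := ((hMmem (i-2) (z t)).mp hztM).2
      rw [mem_Icc] at hzt
      have hpV := (hpqV (i-2)).1
      have hqV := (hpqV (i-2)).2
      rw [mem_Icc] at hpV hqV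
      constructor
      · intro hzip
        rcases hnot with h | h
        · push_neg at h
          linarith [hzt.1]
        · push_neg at h
          exfalso
          linarith [hqV.2, hpq]
      · intro hqzi
        rcases hnot with h | h
        · push_neg at h
          exfalso
          linarith [hpV.1, hpq]
        · push_neg at h
          linarith [hzt.2]
    rcases (show k₀ = 1 ∨ k₀ = 2 by omega) with hA | hB
    · -- CASE A : g p = q
      have hgpq : g (z 0) = z 1 := by rw [hz0, ← hk₀z, hA]
      have hA1 : g (z 1) = z 2 := by
        obtain ⟨j, hj, hgj⟩ := hfill' 1 le_rfl (by omega)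
        rcases (show j = 0 ∨ j = 1 by omega) with h | h
        · exfalso
          subst h
          rw [hgpq] at hgj
          have := hzinj 1 2 (by omega) (by omega) hgj
          omega
        · subst h
          exact hgj
      have chainA : ∀ i, i ≤ r-2 → g (z i) = z (i+1) := by
        intro i hi
        rcases (show i = 0 ∨ i = 1 ∨ 2 ≤ i by omega) with h|h|h
        · subst h; exact hgpq
        · subst h; exact hA1
        · exact hfillmain i h hi
      have wrapA : g (z (r-1)) = z 0 := by
        obtain ⟨k, hk, hkz⟩ := hzsurj (g (z (r-1))) (hgO _ (hzO (r-1) le_rfl))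
        rcases (show k = 0 ∨ 1 ≤ k by omega) with h | h
        · rw [← hkz, h]
        · exfalso
          have hchain := chainA (k-1) (by omega)
          rw [show k-1+1 = k by omega] at hchain
          have he1 := hginj (z (k-1)) (z (r-1)) (hzO (k-1) (by omega)) (hzO (r-1) le_rfl)
            (by rw [hchain, hkz])
          have := hzinj (k-1) (r-1) (by omega) (by omega) he1
          omega
      have hσ : ∀ i, i ≤ r-1 → (Even i → z i ≤ p) ∧ (Odd i → q ≤ z i) := by
        intro i
        induction i with
        | zero =>
          intro _
          constructor
          · intro _; rw [hz0]
          · intro h; exact absurd h (by simp)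
        | succ n ihn =>
          intro hn1
          have hzn : z (n+1) = g (z n) := (chainA n (by omega)).symm
          have hnω : z n ≠ z (r-1) := by
            intro h
            have := hzinj n (r-1) (by omega) le_rfl h
            omega
          have hcr := hcross (z n) (hzO n (by omega)) hnω
          constructor
          · intro he
            have hodd : Odd n := by
              rw [Nat.even_iff] at he; rw [Nat.odd_iff]; omega
            have := (ihn (by omega)).2 hodd
            rw [hzn]
            exact hcr.2 this
          · intro ho
            have heven : Even n := by
              rw [Nat.odd_iff] at ho; rw [Nat.even_iff]; omega
            have := (ihn (by omega)).1 heven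
            rw [hzn]
            exact hcr.1 this
      have hord : ∀ i t, t < i → i < r → 2 ≤ i →
          ((Even i → z i < z t) ∧ (Odd i → z t < z i)) := by
        intro i t hti hir h2
        have hb := hbeyond i t h2 (by omega) hti
        have hs := hσ i (by omega)
        exact ⟨fun he => hb.1 (hs.1 he), fun ho => hb.2 (hs.2 ho)⟩
      exact spiral hg r hr hr5 z (fun i hi => chainA i (by omega)) wrapA
        (by rw [hz0]; exact hOper p hpO) (by rw [hz0, hz1]; exact hpq) hord
    · -- CASE B : g p = z 2, g q = p
      have hgp2 : g (z 0) = z 2 := by rw [hz0, ← hk₀z, hB]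
      have hgqp : g (z 1) = z 0 := by
        have hgqM : g q ∈ M 1 := hgM 0 q (hqM 0)
        obtain ⟨k, hk, hkz⟩ := hzsurj (g q) (hMsub 1 hgqM)
        have hkle : k ≤ 2 := hzMrev k 1 hk (by omega) (by rw [hkz]; exact hgqM)
        have hkne1 : k ≠ 1 := by
          intro h
          rw [h, hz1] at hkz
          exact hOne q hqO hkz.symm
        have hkne2 : k ≠ 2 := by
          intro h
          rw [h, ← hB, hk₀z] at hkz
          have := hginj p q hpO hqO hkz
          exact absurd this (ne_of_lt hpq)
        rw [hz1, ← hkz, show k = 0 by omega]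
      have chainB : ∀ i, 2 ≤ i → i ≤ r-2 → g (z i) = z (i+1) := hfillmain
      have wrapB : g (z (r-1)) = z 1 := by
        obtain ⟨k, hk, hkz⟩ := hzsurj (g (z (r-1))) (hgO _ (hzO (r-1) le_rfl))
        have hkne0 : k ≠ 0 := by
          intro h
          rw [h] at hkz
          have he1 := hginj (z 1) (z (r-1)) (hzO 1 (by omega)) (hzO (r-1) le_rfl)
            (by rw [hgqp, hkz])
          have := hzinj 1 (r-1) (by omega) (by omega) he1
          omega
        have hkne2 : k ≠ 2 := by
          intro h
          rw [h] at hkz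
          have he1 := hginj (z 0) (z (r-1)) (hzO 0 (by omega)) (hzO (r-1) le_rfl)
            (by rw [hgp2, hkz])
          have := hzinj 0 (r-1) (by omega) (by omega) he1
          omega
        have hkle : k ≤ 2 ∨ 3 ≤ k := by omega
        rcases hkle with h | h
        · rw [← hkz, show k = 1 by omega]
        · exfalso
          have hchain := chainB (k-1) (by omega) (by omega)
          rw [show k-1+1 = k by omega] at hchain
          have he1 := hginj (z (k-1)) (z (r-1)) (hzO (k-1) (by omega)) (hzO (r-1) le_rfl)
            (by rw [hchain, hkz])
          have := hzinj (k-1) (r-1) (by omega) (by omega) he1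
          omega
      have hσB : ∀ i, 2 ≤ i → i ≤ r-1 → (Even i → q ≤ z i) ∧ (Odd i → z i ≤ p) := by
        intro i
        induction i with
        | zero => intro h _; omega
        | succ n ihn =>
          intro h2 hn1
          rcases (show n+1 = 2 ∨ 3 ≤ n+1 by omega) with hb | hb
          · rw [hb]
            constructor
            · intro _
              have h0ω : z 0 ≠ z (r-1) := by
                intro h
                have := hzinj 0 (r-1) (by omega) le_rfl h
                omega
              have hcr := hcross (z 0) (hzO 0 (by omega)) h0ω
              rw [← hgp2]
              exact hcr.1 (by rw [hz0])
            · intro ho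
              exfalso
              rw [Nat.odd_iff] at ho
              omega
          · have hzn : z (n+1) = g (z n) := (chainB n (by omega) (by omega)).symm
            have hnω : z n ≠ z (r-1) := by
              intro h
              have := hzinj n (r-1) (by omega) le_rfl h
              omega
            have hcr := hcross (z n) (hzO n (by omega)) hnω
            have ihn' := ihn (by omega) (by omega)
            constructor
            · intro he
              have hodd : Odd n := by
                rw [Nat.even_iff] at he; rw [Nat.odd_iff]; omega
              have := ihn'.2 hodd
              rw [hzn]
              exact hcr.1 this
            · intro ho
              have heven : Even n := by
                rw [Nat.odd_iff] at ho; rw [Nat.even_iff]; omega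
              have := ihn'.1 heven
              rw [hzn]
              exact hcr.2 this
      -- reflect
      set g' : ℝ → ℝ := fun s => -g (-s) with hg'
      have hg'c : Continuous g' := by
        rw [hg']
        exact (hg.comp continuous_neg).neg
      set v : ℕ → ℝ := fun i => if i = 0 then -(z 1) else if i = 1 then -(z 0) else -(z i)
        with hv
      have hv0 : v 0 = -(z 1) := by simp [hv]
      have hv1 : v 1 = -(z 0) := by simp [hv]
      have hvi : ∀ i, 2 ≤ i → v i = -(z i) := by
        intro i hi
        simp only [hv, if_neg (by omega : ¬ i = 0), if_neg (by omega : ¬ i = 1)]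
      have hg'z : ∀ t : ℝ, g' (-t) = -(g t) := by
        intro t
        simp [hg']
      have hchainv : ∀ i, i < r-1 → g' (v i) = v (i+1) := by
        intro i hi
        rcases (show i = 0 ∨ i = 1 ∨ 2 ≤ i by omega) with h|h|h
        · subst h
          rw [hv0, hv1, hg'z, hgqp]
        · subst h
          rw [hv1, hvi 2 le_rfl, hg'z, hgp2]
        · rw [hvi i h, hvi (i+1) (by omega), hg'z, chainB i h (by omega)]
      have hwrapv : g' (v (r-1)) = v 0 := by
        rw [hvi (r-1) (by omega), hv0, hg'z, wrapB]
      have hperv : minimalPeriod g' (v 0) = r := by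
        rw [hv0, hg']
        rw [reflect_minimalPeriod g (z 1)]
        rw [hz1]
        exact hOper q hqO
      have h01v : v 0 < v 1 := by
        rw [hv0, hv1, hz0, hz1]
        linarith
      have hordv : ∀ i t, t < i → i < r → 2 ≤ i →
          ((Even i → v i < v t) ∧ (Odd i → v t < v i)) := by
        intro i t hti hir h2
        have hb := hbeyond i _ h2 (by omega) (show (if t = 0 then 1 else if t = 1 then 0 else t) < i by
          split
          · omega
          · split <;> omega)
        have hs := (hσB i h2 (by omega))
        have hvt : v t = -(z (if t = 0 then 1 else if t = 1 then 0 else t)) := by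
          rcases (show t = 0 ∨ t = 1 ∨ 2 ≤ t by omega) with h|h|h
          · subst h; simpa using hv0
          · subst h; simpa using hv1
          · rw [hvi t h, if_neg (by omega : ¬ t = 0), if_neg (by omega : ¬ t = 1)]
        constructor
        · intro he
          rw [hvi i h2, hvt]
          have := hb.2 (hs.1 he)
          linarith
        · intro ho
          rw [hvi i h2, hvt]
          have := hb.1 (hs.2 ho)
          linarith
      obtain ⟨y', hy'⟩ := spiral hg'c r hr hr5 v hchainv hwrapv hperv h01v hordv
      refine ⟨-y', ?_⟩
      have h2 : minimalPeriod g' y' = minimalPeriod g (-y') := by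
        rw [hg']
        rw [← reflect_minimalPeriod g (-y'), neg_neg]
      rw [← h2]
      exact hy'


end Shark

theorem odd_times_power_forces_next_level (f : ℝ → ℝ) (hf : Continuous f)
    (k r : ℕ) (hr : Odd r) (hr1 : 1 < r)
    (x : ℝ) (hx : f^[2 ^ k * r] x = x)
    (hx' : ∀ j : ℕ, 0 < j → j < 2 ^ k * r → f^[j] x ≠ x) :
    ∃ y : ℝ, f^[2 ^ (k + 1) * 3] y = y ∧
      ∀ j : ℕ, 0 < j → j < 2 ^ (k + 1) * 3 → f^[j] y ≠ y := by
  have h2k : 0 < 2 ^ k := Nat.pow_pos (by norm_num)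
  have hn : 0 < 2 ^ k * r := Nat.mul_pos h2k (by omega)
  have hxper : Function.IsPeriodicPt f (2 ^ k * r) x := hx
  have hxmem : x ∈ Function.periodicPts f := Function.mk_mem_periodicPts hn hxper
  have hmx : Function.minimalPeriod f x = 2 ^ k * r := by
    have h1 : Function.minimalPeriod f x ≤ 2 ^ k * r := hxper.minimalPeriod_le hn
    have h2 : 0 < Function.minimalPeriod f x := Function.minimalPeriod_pos_of_mem_periodicPts hxmem
    rcases lt_or_eq_of_le h1 with h | h
    · exact absurd (Function.iterate_minimalPeriod (f := f) (x := x)) (hx' _ h2 h)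
    · exact h
  set g : ℝ → ℝ := f^[2 ^ k] with hg
  have hgc : Continuous g := hf.iterate _
  have hgiter : ∀ m : ℕ, g^[m] = f^[2 ^ k * m] := by
    intro m; rw [hg, ← Function.iterate_mul]
  have hgx : Function.minimalPeriod g x = r := by
    have hper : Function.IsPeriodicPt g r x := by
      show g^[r] x = x
      rw [hgiter]; exact hx
    have hdvd : Function.minimalPeriod g x ∣ r := hper.minimalPeriod_dvd
    have hpos : 0 < Function.minimalPeriod g x :=
      hper.minimalPeriod_pos (by omega)
    have hper2 : f^[2 ^ k * Function.minimalPeriod g x] x = x := by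
      rw [← hgiter]; exact Function.iterate_minimalPeriod
    have hdvd2 : 2 ^ k * r ∣ 2 ^ k * Function.minimalPeriod g x := by
      rw [← hmx]
      exact Function.IsPeriodicPt.minimalPeriod_dvd hper2
    have : r ∣ Function.minimalPeriod g x := (mul_dvd_mul_iff_left (by omega : (2:ℕ)^k ≠ 0)).mp hdvd2
    exact Nat.dvd_antisymm hdvd this
  obtain ⟨y, hy⟩ := Shark.core r hr hr1 g hgc ⟨x, hgx⟩
  have hymem : y ∈ Function.periodicPts g := by
    rw [← Function.minimalPeriod_pos_iff_mem_periodicPts, hy]; norm_num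
  have hyN : f^[2 ^ (k + 1) * 3] y = y := by
    have : (2:ℕ) ^ (k+1) * 3 = 2 ^ k * 6 := by ring
    rw [this, ← hgiter]
    have : g^[Function.minimalPeriod g y] y = y := Function.iterate_minimalPeriod
    rwa [hy] at this
  refine ⟨y, hyN, ?_⟩
  intro j hj hjN hfj
  -- d := minimalPeriod f y
  set d := Function.minimalPeriod f y with hd
  have hdj : d ∣ j := Function.IsPeriodicPt.minimalPeriod_dvd hfj
  have hdN : d ∣ 2 ^ (k+1) * 3 := Function.IsPeriodicPt.minimalPeriod_dvd hyN
  have hgdvd : ∀ m : ℕ, f^[m] y = y → (6 ∣ m) := by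
    intro m hm
    have : g^[m] y = y := by
      rw [hgiter, mul_comm, Function.iterate_mul]
      exact Function.IsFixedPt.iterate hm _
    have := Function.IsPeriodicPt.minimalPeriod_dvd this
    rwa [hy] at this
  have h6d : 6 ∣ d := hgdvd d (by rw [hd]; exact Function.iterate_minimalPeriod)
  obtain ⟨c, hc⟩ := h6d
  have hcdvd : c ∣ 2 ^ k := by
    have : 6 * c ∣ 6 * 2 ^ k := by
      rw [← hc]
      have : (2:ℕ) ^ (k+1) * 3 = 6 * 2 ^ k := by ring
      rwa [this] at hdN
    exact (mul_dvd_mul_iff_left (by norm_num : (6:ℕ) ≠ 0)).mp this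
  obtain ⟨j', hj'le, hj'⟩ := (Nat.dvd_prime_pow Nat.prime_two).mp hcdvd
  have hjk : j' = k := by
    by_contra hne
    have hj'lt : j' < k := lt_of_le_of_ne hj'le hne
    have : f^[2 ^ k * 3] y = y := by
      have hddvd : d ∣ 2 ^ k * 3 := by
        rw [hc, hj']
        have : 6 * 2 ^ j' = 3 * 2 ^ (j'+1) := by ring
        rw [this]
        have : 2 ^ k * 3 = 3 * 2 ^ k := by ring
        rw [this]
        exact Nat.mul_dvd_mul_left 3 (pow_dvd_pow 2 (by omega))
      obtain ⟨e, he⟩ := hddvd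
      rw [he, Function.iterate_mul]
      exact Function.IsFixedPt.iterate (Function.iterate_minimalPeriod) _
    have hg3 : g^[3] y = y := by rw [hgiter]; exact this
    have : (6:ℕ) ∣ 3 := by
      have := Function.IsPeriodicPt.minimalPeriod_dvd hg3
      rwa [hy] at this
    omega
  have : d = 2 ^ (k+1) * 3 := by rw [hc, hj', hjk]; ring
  rw [this] at hdj
  have := Nat.le_of_dvd hj hdj
  omega
end

section
/- Let f : ℝ → ℝ be continuous with a periodic point of least period 2^k where k ≥ 1. Then f has a periodic point of least period 2^l for every 0 ≤ l ≤ k. -/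
open Set Function

/-- Trim an interval crossing: inside `[u,v]` with `g u = c < d = g v`, find a subinterval
`[s,t]` with `g s = c`, `g t = d` and `g` mapping `[s,t]` into `[c,d]`. -/
private lemma trim (g : ℝ → ℝ) (hg : Continuous g) {u v c d : ℝ} (huv : u < v) (hcd : c < d)
    (hu : g u = c) (hv : g v = d) :
    ∃ s t, u ≤ s ∧ s < t ∧ t ≤ v ∧ g s = c ∧ g t = d ∧
      ∀ r, s ≤ r → r ≤ t → c ≤ g r ∧ g r ≤ d := by
  classical
  set A : Set ℝ := {s | s ∈ Set.Icc u v ∧ g s = d} with hA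
  have hAne : A.Nonempty := ⟨v, ⟨le_of_lt huv, le_refl v⟩, hv⟩
  have hAclosed : IsClosed A := by
    have hset : A = Set.Icc u v ∩ g ⁻¹' {d} := by
      ext r; simp [hA, Set.mem_Icc]
    rw [hset]; exact isClosed_Icc.inter (isClosed_singleton.preimage hg)
  have hAbdd : BddBelow A := ⟨u, fun s hs => hs.1.1⟩
  set t := sInf A with ht
  have htA : t ∈ A := hAclosed.csInf_mem hAne hAbdd
  have htu : u ≤ t := htA.1.1
  have htv : t ≤ v := htA.1.2
  have hgt : g t = d := htA.2
  have hut : u < t := by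
    rcases eq_or_lt_of_le htu with h | h
    · exfalso; rw [← h, hu] at hgt; exact absurd hgt (ne_of_lt hcd)
    · exact h
  have claim1 : ∀ r, u ≤ r → r < t → g r < d := by
    intro r hur hrt
    by_contra hge
    push_neg at hge
    rcases eq_or_lt_of_le hge with heq | hlt
    · exact absurd (csInf_le hAbdd ⟨⟨hur, le_trans hrt.le htv⟩, heq.symm⟩) (not_le.mpr hrt)
    · have hmem : d ∈ Set.Icc (g u) (g r) := ⟨by rw [hu]; exact hcd.le, hlt.le⟩
      obtain ⟨ρ, hρmem, hρ⟩ := intermediate_value_Icc hur hg.continuousOn hmem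
      have : t ≤ ρ :=
        csInf_le hAbdd ⟨⟨hρmem.1, le_trans (le_trans hρmem.2 hrt.le) htv⟩, hρ⟩
      linarith [hρmem.2]
  set B : Set ℝ := {s | s ∈ Set.Icc u t ∧ g s = c} with hB
  have hBne : B.Nonempty := ⟨u, ⟨le_refl u, htu⟩, hu⟩
  have hBclosed : IsClosed B := by
    have hset : B = Set.Icc u t ∩ g ⁻¹' {c} := by
      ext r; simp [hB, Set.mem_Icc]
    rw [hset]; exact isClosed_Icc.inter (isClosed_singleton.preimage hg)
  have hBbdd : BddAbove B := ⟨t, fun s hs => hs.1.2⟩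
  set s := sSup B with hs
  have hsB : s ∈ B := hBclosed.csSup_mem hBne hBbdd
  have hsu : u ≤ s := hsB.1.1
  have hst' : s ≤ t := hsB.1.2
  have hgs : g s = c := hsB.2
  have hst : s < t := by
    rcases eq_or_lt_of_le hst' with h | h
    · exfalso; rw [h, hgt] at hgs; exact absurd hgs (ne_of_gt hcd)
    · exact h
  have claim2 : ∀ r, s < r → r ≤ t → c < g r := by
    intro r hsr hrt
    by_contra hle
    push_neg at hle
    rcases eq_or_lt_of_le hle with heq | hlt
    · exact absurd (le_csSup hBbdd ⟨⟨le_trans hsu hsr.le, hrt⟩, heq⟩) (not_le.mpr hsr)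
    · have hmem : c ∈ Set.Icc (g r) (g t) := ⟨hlt.le, by rw [hgt]; exact hcd.le⟩
      obtain ⟨ρ, hρmem, hρ⟩ := intermediate_value_Icc hrt hg.continuousOn hmem
      have : ρ ≤ s :=
        le_csSup hBbdd ⟨⟨le_trans hsu (le_trans hsr.le hρmem.1), hρmem.2⟩, hρ⟩
      linarith [hρmem.1]
  refine ⟨s, t, hsu, hst, htv, hgs, hgt, ?_⟩
  intro r hr1 hr2
  constructor
  · rcases eq_or_lt_of_le hr1 with h | h
    · rw [← h, hgs]
    · exact (claim2 r h hr2).le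
  · rcases eq_or_lt_of_le hr2 with h | h
    · rw [h, hgt]
    · exact (claim1 r (le_trans hsu hr1) h).le

/-- From a controlled subinterval with a sign change of `g∘g - id`, produce a point of
least period two. -/
private lemma ending (g : ℝ → ℝ) (hg : Continuous g) {a b c d e₁ e₂ : ℝ}
    (h12 : e₁ ≤ e₂) (ha : a ≤ e₁) (hb : e₂ ≤ b)
    (hK : ∀ r, e₁ ≤ r → r ≤ e₂ → c ≤ g r ∧ g r ≤ d)
    (hsign : (0:ℝ) ∈ Set.uIcc (g (g e₁) - e₁) (g (g e₂) - e₂))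
    (h4 : ∀ z, a ≤ z → z ≤ b → c ≤ z → z ≤ d → g z ≠ z) :
    ∃ y, g (g y) = y ∧ g y ≠ y := by
  set ψ : ℝ → ℝ := fun r => g (g r) - r with hψ
  have hcont : ContinuousOn ψ (Set.uIcc e₁ e₂) :=
    ((hg.comp hg).sub continuous_id).continuousOn
  obtain ⟨y, hy, hy0⟩ := intermediate_value_uIcc hcont hsign
  rw [Set.uIcc_of_le h12] at hy
  have hyy : g (g y) = y := by
    have : g (g y) - y = 0 := hy0
    linarith
  refine ⟨y, hyy, ?_⟩
  intro hgyy
  have h1 := hK y hy.1 hy.2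
  rw [hgyy] at h1
  exact h4 y (le_trans ha hy.1) (le_trans hy.2 hb) h1.1 h1.2 hgyy

/-- Two-interval covering loop lemma: if `[a,b]` contains preimages of `c` and `d`,
and `g c, g d` throw back across `[a,b]`, with no fixed points in `[a,b] ∩ [c,d]`,
then there is a point of least period two. -/
private lemma two_loop (g : ℝ → ℝ) (hg : Continuous g) {a b c d u v : ℝ} (hcd : c < d)
    (hua : a ≤ u) (hub : u ≤ b) (hva : a ≤ v) (hvb : v ≤ b)
    (hgu : g u = c) (hgv : g v = d)
    (h3 : (g c ≤ a ∧ b ≤ g d) ∨ (b ≤ g c ∧ g d ≤ a))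
    (h4 : ∀ z, a ≤ z → z ≤ b → c ≤ z → z ≤ d → g z ≠ z) :
    ∃ y, g (g y) = y ∧ g y ≠ y := by
  have huv : u ≠ v := by
    intro h; rw [h, hgv] at hgu; exact absurd hgu (ne_of_gt hcd)
  rcases lt_or_gt_of_ne huv with h | h
  · obtain ⟨s, t, hus, hst, htv, hgs, hgt, hK⟩ := trim g hg h hcd hgu hgv
    have has : a ≤ s := le_trans hua hus
    have htb : t ≤ b := le_trans htv hvb
    refine ending g hg hst.le has htb hK ?_ h4
    rw [hgs, hgt]
    rcases h3 with ⟨h31, h32⟩ | ⟨h31, h32⟩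
    · exact Set.mem_uIcc.mpr (Or.inl ⟨by linarith, by linarith⟩)
    · exact Set.mem_uIcc.mpr (Or.inr ⟨by linarith, by linarith⟩)
  · -- v < u : conjugate by negation
    set g' : ℝ → ℝ := fun r => g (-r) with hg'def
    have hg'cont : Continuous g' := hg.comp continuous_neg
    have hneg : -u < -v := neg_lt_neg h
    have hgu' : g' (-u) = c := by simp [hg'def, hgu]
    have hgv' : g' (-v) = d := by simp [hg'def, hgv]
    obtain ⟨s, t, hus, hst, htv, hgs, hgt, hK⟩ := trim g' hg'cont hneg hcd hgu' hgv'
    -- endpoints e₁ = -t, e₂ = -s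
    have hgs' : g (-s) = c := hgs
    have hgt' : g (-t) = d := hgt
    have ha1 : a ≤ -t := by
      have : v ≤ -t := by linarith
      linarith
    have hb1 : -s ≤ b := by
      have : -s ≤ u := by linarith
      linarith
    refine ending g hg (e₁ := -t) (e₂ := -s) (by linarith) ha1 hb1 ?_ ?_ h4
    · intro r hr1 hr2
      have := hK (-r) (by linarith) (by linarith)
      simpa [hg'def] using this
    · rw [hgt', hgs']
      rcases h3 with ⟨h31, h32⟩ | ⟨h31, h32⟩
      · exact Set.mem_uIcc.mpr (Or.inr ⟨by linarith, by linarith⟩)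
      · exact Set.mem_uIcc.mpr (Or.inl ⟨by linarith, by linarith⟩)

/-- Period four forces period two, assuming the base point is the minimum of its orbit. -/
private lemma four_forces_two' (g : ℝ → ℝ) (hg : Continuous g) (x : ℝ)
    (h4 : g (g (g (g x))) = x) (h2 : g (g x) ≠ x)
    (hm1 : x < g x) (hm2 : x < g (g x)) (hm3 : x < g (g (g x))) :
    ∃ y, g (g y) = y ∧ g y ≠ y := by
  set x1 := g x with hx1
  set x2 := g x1 with hx2
  set x3 := g x2 with hx3
  have e4 : g x3 = x := h4
  have d12 : x1 ≠ x2 := by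
    intro h
    have e1 : x2 = x3 := congrArg g h
    have : g x1 = x := by rw [h, e1]; exact e4
    rw [← hx2] at this
    exact absurd this.symm (ne_of_lt hm2)
  have d13 : x1 ≠ x3 := by
    intro h
    have : x2 = x := by rw [hx2, h]; exact e4
    exact absurd this.symm (ne_of_lt hm2)
  have d23 : x2 ≠ x3 := by
    intro h
    have : x3 = x := by rw [hx3, h]; exact e4
    exact absurd this.symm (ne_of_lt hm3)
  rcases lt_trichotomy x1 x2 with h12 | h12 | h12
  · rcases lt_trichotomy x2 x3 with h23 | h23 | h23
    · -- Case A : x < x1 < x2 < x3, cycle p1→p2→p3→p4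
      refine two_loop g hg (a := x1) (b := x2) (c := x2) (d := x3) (u := x1) (v := x2)
        h23 le_rfl h12.le h12.le le_rfl rfl rfl ?_ ?_
      · exact Or.inr ⟨by rw [← hx3]; exact h23.le, by rw [e4]; exact hm1.le⟩
      · intro z hz1 hz2 hz3 hz4
        have : z = x2 := le_antisymm hz2 hz3
        rw [this, ← hx3]
        exact ne_of_gt h23
    · exact absurd h23 d23
    · rcases lt_trichotomy x1 x3 with h13 | h13 | h13
      · -- Case B : x < x1 < x3 < x2, cycle p1→p2→p4→p3
        have hmem : x3 ∈ Set.Icc (g x) (g x1) := ⟨h13.le, h23.le⟩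
        obtain ⟨u, humem, hu⟩ := intermediate_value_Icc hm1.le hg.continuousOn hmem
        refine two_loop g hg (a := x) (b := x1) (c := x3) (d := x2) (u := u) (v := x1)
          h23 humem.1 humem.2 hm1.le le_rfl hu rfl ?_ ?_
        · exact Or.inl ⟨by rw [e4], by rw [← hx3]; exact h13.le⟩
        · intro z hz1 hz2 hz3 hz4
          exact absurd (le_trans hz3 hz2) (not_le.mpr h13)
      · exact absurd h13 d13
      · -- Case D : x < x3 < x1 < x2, cycle p1→p3→p4→p2
        have hmem : x3 ∈ Set.Icc (g x3) (g x) := ⟨by rw [e4]; exact hm3.le, h13.le⟩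
        obtain ⟨u, humem, hu⟩ := intermediate_value_Icc' hm3.le hg.continuousOn hmem
        refine two_loop g hg (a := x) (b := x3) (c := x3) (d := x1) (u := u) (v := x)
          h13 humem.1 humem.2 le_rfl hm3.le hu rfl ?_ ?_
        · exact Or.inl ⟨by rw [e4], by rw [← hx2]; linarith⟩
        · intro z hz1 hz2 hz3 hz4
          have : z = x3 := le_antisymm hz2 hz3
          rw [this, e4]
          exact ne_of_lt hm3
  · exact absurd h12 d12
  · rcases lt_trichotomy x1 x3 with h13 | h13 | h13
    · -- Case C : x < x2 < x1 < x3, cycle p1→p3→p2→p4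
      refine two_loop g hg (a := x) (b := x2) (c := x1) (d := x3) (u := x) (v := x2)
        h13 le_rfl hm2.le hm2.le le_rfl rfl rfl ?_ ?_
      · exact Or.inr ⟨by rw [← hx2], by rw [e4]⟩
      · intro z hz1 hz2 hz3 hz4
        exact absurd (le_trans hz3 hz2) (not_le.mpr h12)
    · exact absurd h13 d13
    · rcases lt_trichotomy x2 x3 with h23 | h23 | h23
      · -- Case E : x < x2 < x3 < x1, cycle p1→p4→p2→p3
        refine two_loop g hg (a := x) (b := x2) (c := x3) (d := x1) (u := x2) (v := x)
          h13 hm2.le le_rfl le_rfl hm2.le rfl rfl ?_ ?_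
        · exact Or.inl ⟨by rw [e4], by rw [← hx2]⟩
        · intro z hz1 hz2 hz3 hz4
          exact absurd (le_trans hz3 hz2) (not_le.mpr h23)
      · exact absurd h23 d23
      · -- Case F : x < x3 < x2 < x1, cycle p1→p4→p3→p2
        refine two_loop g hg (a := x3) (b := x2) (c := x) (d := x3) (u := x3) (v := x2)
          hm3 le_rfl h23.le h23.le le_rfl e4 rfl ?_ ?_
        · exact Or.inr ⟨by rw [← hx1]; exact h12.le, by rw [e4]; exact hm3.le⟩
        · intro z hz1 hz2 hz3 hz4
          have : z = x3 := le_antisymm hz4 hz1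
          rw [this, e4]
          exact ne_of_lt hm3

/-- Period four forces period two. -/
private lemma four_forces_two (g : ℝ → ℝ) (hg : Continuous g) (x : ℝ)
    (h4 : g^[4] x = x) (h2 : g^[2] x ≠ x) : ∃ y, g (g y) = y ∧ g y ≠ y := by
  have e4 : g (g (g (g x))) = x := by
    simpa [Function.iterate_succ_apply'] using h4
  have e2 : g (g x) ≠ x := by
    simpa [Function.iterate_succ_apply'] using h2
  set x0 := x with hx0
  set x1 := g x0 with hx1
  set x2 := g x1 with hx2
  set x3 := g x2 with hx3
  have hcyc : g x3 = x0 := e4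
  -- pairwise distinctness
  have n02 : x0 ≠ x2 := fun h => e2 h.symm
  have n01 : x0 ≠ x1 := by
    intro h
    have h1 : x1 = x2 := congrArg g h
    exact n02 (h.trans h1)
  have n03 : x0 ≠ x3 := by
    intro h
    have h1 : x1 = g x3 := congrArg g h
    rw [hcyc] at h1
    exact n01 h1.symm
  have n13 : x1 ≠ x3 := by
    intro h
    have h1 : x2 = g x3 := congrArg g h
    rw [hcyc] at h1
    exact n02 h1.symm
  have n23 : x2 ≠ x3 := by
    intro h
    have h1 : x3 = g x3 := congrArg g h
    rw [hcyc] at h1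
    exact n03 h1.symm
  have n12 : x1 ≠ x2 := by
    intro h
    exact n23 (congrArg g h)
  -- cyclic data for each base point
  have e4_1 : g (g (g (g x1))) = x1 := congrArg g e4
  have e4_2 : g (g (g (g x2))) = x2 := congrArg g e4_1
  have e4_3 : g (g (g (g x3))) = x3 := congrArg g e4_2
  have e2_1 : g (g x1) ≠ x1 := by
    show x3 ≠ x1
    exact fun h => n13 h.symm
  have e2_2 : g (g x2) ≠ x2 := by
    show g x3 ≠ x2
    rw [hcyc]; exact n02
  have e2_3 : g (g x3) ≠ x3 := by
    show g (g x3) ≠ x3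
    rw [hcyc, ← hx1]; exact n13
  -- find the minimum of the orbit and conclude
  rcases le_total x0 x1 with h01 | h01
  · rcases le_total x0 x2 with h02 | h02
    · rcases le_total x0 x3 with h03 | h03
      · exact four_forces_two' g hg x0 e4 e2
          (lt_of_le_of_ne h01 n01) (lt_of_le_of_ne h02 n02) (lt_of_le_of_ne h03 n03)
      · -- x3 minimal among x0; need x3 ≤ x1, x3 ≤ x2 too
        rcases le_total x3 x1 with h31 | h31
        · rcases le_total x3 x2 with h32 | h32
          · refine four_forces_two' g hg x3 e4_3 e2_3 ?_ ?_ ?_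
            · show x3 < g x3; rw [hcyc]; exact lt_of_le_of_ne h03 (fun h => n03 h.symm)
            · show x3 < g (g x3); rw [hcyc, ← hx1]; exact lt_of_le_of_ne h31 (fun h => n13 h.symm)
            · show x3 < g (g (g x3)); rw [hcyc, ← hx1, ← hx2]; exact lt_of_le_of_ne h32 (fun h => n23 h.symm)
          · -- x2 ≤ x3 ≤ x0 ≤ x1 : x2 minimal
            refine four_forces_two' g hg x2 e4_2 e2_2 ?_ ?_ ?_
            · show x2 < g x2; rw [← hx3]; exact lt_of_le_of_ne h32 n23
            · show x2 < g (g x2); rw [← hx3, hcyc]; exact lt_of_le_of_ne (le_trans h32 h03) (fun h => n02 h.symm)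
            · show x2 < g (g (g x2)); rw [← hx3, hcyc, ← hx1]
              exact lt_of_le_of_ne (le_trans (le_trans h32 h03) h01) (fun h => n12 h.symm)
        · -- x1 ≤ x3 ≤ x0 ≤ x1 forces x1 = x0 contradiction? x1 ≤ x3 and x3 ≤ x0 and x0 ≤ x1 ⇒ all equal
          exact absurd (le_antisymm h01 (le_trans h31 h03)) n01
    · -- x2 ≤ x0 ≤ x1
      rcases le_total x2 x3 with h23 | h23
      · refine four_forces_two' g hg x2 e4_2 e2_2 ?_ ?_ ?_
        · show x2 < g x2; rw [← hx3]; exact lt_of_le_of_ne h23 n23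
        · show x2 < g (g x2); rw [← hx3, hcyc]; exact lt_of_le_of_ne h02 (fun h => n02 h.symm)
        · show x2 < g (g (g x2)); rw [← hx3, hcyc, ← hx1]
          exact lt_of_le_of_ne (le_trans h02 h01) (fun h => n12 h.symm)
      · -- x3 ≤ x2 ≤ x0 ≤ x1 : x3 minimal
        refine four_forces_two' g hg x3 e4_3 e2_3 ?_ ?_ ?_
        · show x3 < g x3; rw [hcyc]
          exact lt_of_le_of_ne (le_trans h23 h02) (fun h => n03 h.symm)
        · show x3 < g (g x3); rw [hcyc, ← hx1]
          exact lt_of_le_of_ne (le_trans (le_trans h23 h02) h01) (fun h => n13 h.symm)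
        · show x3 < g (g (g x3)); rw [hcyc, ← hx1, ← hx2]
          exact lt_of_le_of_ne h23 (fun h => n23 h.symm)
  · -- x1 ≤ x0
    rcases le_total x1 x2 with h12 | h12
    · rcases le_total x1 x3 with h13 | h13
      · refine four_forces_two' g hg x1 e4_1 e2_1 ?_ ?_ ?_
        · show x1 < g x1; rw [← hx2]; exact lt_of_le_of_ne h12 n12
        · show x1 < g (g x1); rw [← hx2, ← hx3]; exact lt_of_le_of_ne h13 n13
        · show x1 < g (g (g x1)); rw [← hx2, ← hx3, hcyc]
          exact lt_of_le_of_ne h01 (fun h => n01 h.symm)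
      · -- x3 ≤ x1 ≤ x0, x1 ≤ x2
        rcases le_total x3 x2 with h32 | h32
        · refine four_forces_two' g hg x3 e4_3 e2_3 ?_ ?_ ?_
          · show x3 < g x3; rw [hcyc]
            exact lt_of_le_of_ne (le_trans h13 h01) (fun h => n03 h.symm)
          · show x3 < g (g x3); rw [hcyc, ← hx1]
            exact lt_of_le_of_ne h13 (fun h => n13 h.symm)
          · show x3 < g (g (g x3)); rw [hcyc, ← hx1, ← hx2]
            exact lt_of_le_of_ne h32 (fun h => n23 h.symm)
        · -- x2 ≤ x3 ≤ x1 ≤ x2 forces equality contradiction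
          exact absurd (le_antisymm h12 (le_trans h32 h13)) n12
    · -- x2 ≤ x1 ≤ x0
      rcases le_total x2 x3 with h23 | h23
      · refine four_forces_two' g hg x2 e4_2 e2_2 ?_ ?_ ?_
        · show x2 < g x2; rw [← hx3]; exact lt_of_le_of_ne h23 n23
        · show x2 < g (g x2); rw [← hx3, hcyc]
          exact lt_of_le_of_ne (le_trans h12 h01) (fun h => n02 h.symm)
        · show x2 < g (g (g x2)); rw [← hx3, hcyc, ← hx1]
          exact lt_of_le_of_ne h12 (fun h => n12 h.symm)
      · -- x3 ≤ x2 ≤ x1 ≤ x0 : x3 minimal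
        refine four_forces_two' g hg x3 e4_3 e2_3 ?_ ?_ ?_
        · show x3 < g x3; rw [hcyc]
          exact lt_of_le_of_ne (le_trans (le_trans h23 h12) h01) (fun h => n03 h.symm)
        · show x3 < g (g x3); rw [hcyc, ← hx1]
          exact lt_of_le_of_ne (le_trans h23 h12) (fun h => n13 h.symm)
        · show x3 < g (g (g x3)); rw [hcyc, ← hx1, ← hx2]
          exact lt_of_le_of_ne h23 (fun h => n23 h.symm)

/-- A continuous map with a periodic point has a fixed point. -/
private lemma exists_fixed (g : ℝ → ℝ) (hg : Continuous g) (x : ℝ) (n : ℕ) (hn : 0 < n)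
    (hx : g^[n] x = x) : ∃ y, g y = y := by
  classical
  have hne : (Finset.range n).Nonempty := ⟨0, Finset.mem_range.mpr hn⟩
  obtain ⟨i0, hi0, hmin⟩ := Finset.exists_min_image (Finset.range n) (fun i => g^[i] x) hne
  obtain ⟨i1, hi1, hmax⟩ := Finset.exists_max_image (Finset.range n) (fun i => g^[i] x) hne
  set m := g^[i0] x with hm
  set M := g^[i1] x with hM
  have hiter : ∀ i < n, ∃ j ∈ Finset.range n, g^[j] x = g (g^[i] x) := by
    intro i hi
    by_cases h : i + 1 < n
    · exact ⟨i + 1, Finset.mem_range.mpr h, (Function.iterate_succ_apply' g i x).symm ▸ rfl⟩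
    · have hin : i + 1 = n := by omega
      refine ⟨0, Finset.mem_range.mpr hn, ?_⟩
      have : g^[i+1] x = g (g^[i] x) := Function.iterate_succ_apply' g i x
      rw [← this, hin, hx, Function.iterate_zero_apply]
  obtain ⟨j0, hj0, hj0e⟩ := hiter i0 (Finset.mem_range.mp hi0)
  obtain ⟨j1, hj1, hj1e⟩ := hiter i1 (Finset.mem_range.mp hi1)
  have h1 : m ≤ g m := by rw [← hj0e]; exact hmin j0 hj0
  have h2 : g M ≤ M := by rw [← hj1e]; exact hmax j1 hj1
  have hmM : m ≤ M := hmin i1 hi1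
  set ψ : ℝ → ℝ := fun r => g r - r with hψ
  have hcont : ContinuousOn ψ (Set.Icc m M) := (hg.sub continuous_id).continuousOn
  have hmem : (0:ℝ) ∈ Set.Icc (ψ M) (ψ m) := ⟨by simp [hψ]; linarith, by simp [hψ]; linarith⟩
  obtain ⟨y, _, hy0⟩ := intermediate_value_Icc' hmM hcont hmem
  refine ⟨y, ?_⟩
  have : g y - y = 0 := hy0
  linarith

theorem power_of_two_forces_smaller_powers (f : ℝ → ℝ) (hf : Continuous f)
    (k : ℕ) (hk : 1 ≤ k)
    (x : ℝ) (hx : f^[2 ^ k] x = x)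
    (hx' : ∀ j : ℕ, 0 < j → j < 2 ^ k → f^[j] x ≠ x) :
    ∀ l : ℕ, l ≤ k →
      ∃ y : ℝ, f^[2 ^ l] y = y ∧
        ∀ j : ℕ, 0 < j → j < 2 ^ l → f^[j] y ≠ y := by
  set P : ℕ → Prop := fun n =>
    ∃ y : ℝ, f^[2 ^ n] y = y ∧ ∀ j : ℕ, 0 < j → j < 2 ^ n → f^[j] y ≠ y with hP
  have step : ∀ n, P (n + 1) → P n := by
    intro n hPn
    obtain ⟨y, hy, hy'⟩ := hPn
    cases n with
    | zero =>
      obtain ⟨w, hw⟩ := exists_fixed f hf y 2 (by norm_num) (by simpa using hy)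
      exact ⟨w, by simpa using hw, fun j hj1 hj2 => by omega⟩
    | succ m =>
      set g : ℝ → ℝ := f^[2 ^ m] with hgdef
      have hgcont : Continuous g := hf.iterate _
      have hy4 : g^[4] y = y := by
        rw [hgdef, ← Function.iterate_mul]
        have : 2 ^ m * 4 = 2 ^ (m + 2) := by ring
        rw [this]
        exact hy
      have hy2 : g^[2] y ≠ y := by
        rw [hgdef, ← Function.iterate_mul]
        have : 2 ^ m * 2 = 2 ^ (m + 1) := by ring
        rw [this]
        exact hy' (2 ^ (m + 1)) (Nat.pow_pos (by norm_num))
          (Nat.pow_lt_pow_right (by norm_num) (by omega))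
      obtain ⟨z, hz1, hz2⟩ := four_forces_two g hgcont y hy4 hy2
      have hz1' : f^[2 ^ (m + 1)] z = z := by
        have : g (g z) = f^[2 ^ m + 2 ^ m] z := by
          rw [Function.iterate_add_apply]
        rw [this] at hz1
        have h2 : 2 ^ m + 2 ^ m = 2 ^ (m + 1) := by ring
        rwa [h2] at hz1
      have hz2' : f^[2 ^ m] z ≠ z := by
        have : g z = f^[2 ^ m] z := rfl
        rwa [this] at hz2
      refine ⟨z, hz1', ?_⟩
      intro j hj0 hjlt hjz
      have hper1 : Function.IsPeriodicPt f j z := hjz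
      have hper2 : Function.IsPeriodicPt f (2 ^ (m + 1)) z := hz1'
      have hgcd := hper1.gcd hper2
      have hdvd : Nat.gcd j (2 ^ (m + 1)) ∣ 2 ^ (m + 1) := Nat.gcd_dvd_right _ _
      obtain ⟨i, hile, hieq⟩ := (Nat.dvd_prime_pow Nat.prime_two).mp hdvd
      have hle : Nat.gcd j (2 ^ (m + 1)) ≤ j := Nat.le_of_dvd hj0 (Nat.gcd_dvd_left _ _)
      have hlt2 : 2 ^ i < 2 ^ (m + 1) := by rw [← hieq]; exact lt_of_le_of_lt hle hjlt
      have him : i ≤ m := by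
        by_contra h'
        push_neg at h'
        have : 2 ^ (m + 1) ≤ 2 ^ i := Nat.pow_le_pow_right (by norm_num) h'
        omega
      rw [hieq] at hgcd
      have hper3 : Function.IsPeriodicPt f (2 ^ i * 2 ^ (m - i)) z := hgcd.mul_const _
      have hpe : 2 ^ i * 2 ^ (m - i) = 2 ^ m := by
        rw [← pow_add]
        congr 1
        omega
      rw [hpe] at hper3
      exact hz2' hper3
  have down : ∀ n, P n → ∀ l, l ≤ n → P l := by
    intro n
    induction n with
    | zero => intro h l hl; rw [Nat.le_zero.mp hl]; exact h
    | succ m ih =>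
      intro h l hl
      rcases Nat.eq_or_lt_of_le hl with h' | h'
      · rw [h']; exact h
      · exact ih (step m h) l (by omega)
  intro l hl
  exact down k ⟨x, hx, hx'⟩ l hl
end

section
/- For a permutation θ of {1,…,n}, define the oriented Markov matrix M(θ) as the (n−1)×(n−1) matrix whose (i,j) entry is the signed degree of L_θ|_{E_j} over E_i, i.e. the signed count of times the interval E_i = [i, i+1] is covered (with orientation) by the image of E_j = [j, j+1] under the connect-the-dots map L_θ. Then for permutations α, β of {1,…,n}, M(α)·M(β) = M(α∘β). -/
/-- The oriented Markov matrix of the connect-the-dots map of a permutation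
`σ` of `{1, …, n}`.  Index `i : Fin (n-1)` corresponds to the interval
`E_{i+1} = [i+1, i+2]`.  The `(i,j)` entry is `+1` if `L_σ` maps `E_{j+1}`
across `E_{i+1}` preserving orientation, `-1` if it does so reversing
orientation, and `0` otherwise. -/
def orientedMarkovMatrix (n : ℕ) (σ : Equiv.Perm ℕ) :
    Matrix (Fin (n - 1)) (Fin (n - 1)) ℤ :=
  fun i j =>
    if σ (j.val + 1) ≤ i.val + 1 ∧ i.val + 2 ≤ σ (j.val + 2) then 1
    else if σ (j.val + 2) ≤ i.val + 1 ∧ i.val + 2 ≤ σ (j.val + 1) then -1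
    else 0

lemma orientedMarkovMatrix_entry_eq (n : ℕ) (σ : Equiv.Perm ℕ) (i j : Fin (n - 1)) :
    orientedMarkovMatrix n σ i j =
      (if i.val + 2 ≤ σ (j.val + 2) then (1 : ℤ) else 0)
        - (if i.val + 2 ≤ σ (j.val + 1) then (1 : ℤ) else 0) := by
  unfold orientedMarkovMatrix
  split_ifs <;> omega

lemma telescope_sum (n b : ℕ) (hb1 : 1 ≤ b) (hbn : b ≤ n) (f : ℕ → ℤ) :
    ∑ k : Fin (n - 1), (f (k.val + 2) - f (k.val + 1)) *
        (if k.val + 2 ≤ b then (1 : ℤ) else 0) = f b - f 1 := by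
  rw [Fin.sum_univ_eq_sum_range
    (fun k => (f (k + 2) - f (k + 1)) * (if k + 2 ≤ b then (1 : ℤ) else 0))]
  have hsub : Finset.range (b - 1) ⊆ Finset.range (n - 1) := by
    apply Finset.range_subset_range.mpr; omega
  rw [← Finset.sum_subset hsub (by
    intro k hk hk'
    simp only [Finset.mem_range] at hk hk'
    have : ¬ (k + 2 ≤ b) := by omega
    simp [this])]
  have : ∀ k ∈ Finset.range (b - 1),
      (f (k + 2) - f (k + 1)) * (if k + 2 ≤ b then (1 : ℤ) else 0)
        = f (k + 1 + 1) - f (k + 1) := by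
    intro k hk
    simp only [Finset.mem_range] at hk
    have : k + 2 ≤ b := by omega
    simp [this]
  rw [Finset.sum_congr rfl this, Finset.sum_range_sub (fun k => f (k + 1))]
  congr 2
  omega

theorem orientedMarkovMatrix_mul (n : ℕ) (α β : Equiv.Perm ℕ)
    (hα : ∀ i ∈ Finset.Icc 1 n, α i ∈ Finset.Icc 1 n)
    (hβ : ∀ i ∈ Finset.Icc 1 n, β i ∈ Finset.Icc 1 n) :
    orientedMarkovMatrix n α * orientedMarkovMatrix n β =
      orientedMarkovMatrix n (α * β) := by
  ext i j
  rw [Matrix.mul_apply]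
  have hjlt := j.isLt
  have hb1 := hβ (j.val + 1) (by simp only [Finset.mem_Icc]; omega)
  have hb2 := hβ (j.val + 2) (by simp only [Finset.mem_Icc]; omega)
  simp only [Finset.mem_Icc] at hb1 hb2
  have key : ∀ b, 1 ≤ b → b ≤ n →
      ∑ k : Fin (n - 1), orientedMarkovMatrix n α i k *
          (if k.val + 2 ≤ b then (1 : ℤ) else 0)
        = (if i.val + 2 ≤ α b then (1 : ℤ) else 0)
            - (if i.val + 2 ≤ α 1 then (1 : ℤ) else 0) := by
    intro b h1 h2
    have := telescope_sum n b h1 h2 (fun m => if i.val + 2 ≤ α m then (1 : ℤ) else 0)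
    rw [← this]
    apply Finset.sum_congr rfl
    intro k _
    rw [orientedMarkovMatrix_entry_eq]
  calc ∑ k : Fin (n - 1), orientedMarkovMatrix n α i k * orientedMarkovMatrix n β k j
      = ∑ k : Fin (n - 1), (orientedMarkovMatrix n α i k *
            (if k.val + 2 ≤ β (j.val + 2) then (1 : ℤ) else 0)
          - orientedMarkovMatrix n α i k *
            (if k.val + 2 ≤ β (j.val + 1) then (1 : ℤ) else 0)) := by
        apply Finset.sum_congr rfl
        intro k _
        rw [orientedMarkovMatrix_entry_eq n β k j, mul_sub]
    _ = (∑ k : Fin (n - 1), orientedMarkovMatrix n α i k *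
            (if k.val + 2 ≤ β (j.val + 2) then (1 : ℤ) else 0))
          - ∑ k : Fin (n - 1), orientedMarkovMatrix n α i k *
            (if k.val + 2 ≤ β (j.val + 1) then (1 : ℤ) else 0) :=
        Finset.sum_sub_distrib _ _
    _ = ((if i.val + 2 ≤ α (β (j.val + 2)) then (1 : ℤ) else 0)
            - (if i.val + 2 ≤ α 1 then (1 : ℤ) else 0))
          - ((if i.val + 2 ≤ α (β (j.val + 1)) then (1 : ℤ) else 0)
            - (if i.val + 2 ≤ α 1 then (1 : ℤ) else 0)) := by
        rw [key _ hb2.1 hb2.2, key _ hb1.1 hb1.2]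
    _ = orientedMarkovMatrix n (α * β) i j := by
        rw [orientedMarkovMatrix_entry_eq]
        simp only [Equiv.Perm.mul_apply]
        ring
end

section
/- Let f : ℝ → ℝ be continuous and suppose the points p₁ < p₂ < p₃ < p₄ form a periodic orbit with f(p₁)=p₂, f(p₂)=p₃, f(p₃)=p₄, f(p₄)=p₁. Then f has periodic points of every least period m ≥ 1. -/
open Set

/-- Helper: if `f u = c`, `f v = d` with `u ≤ v`, `c ≤ d`, there is a subinterval of
`[u,v]` mapping exactly onto `[c,d]`. -/
lemma cover_helper (f : ℝ → ℝ) (hf : Continuous f) (u v c d : ℝ) (huv : u ≤ v)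
    (hcd : c ≤ d) (hfu : f u = c) (hfv : f v = d) :
    ∃ a' b', u ≤ a' ∧ a' ≤ b' ∧ b' ≤ v ∧ f '' Icc a' b' = Icc c d := by
  set S : Set ℝ := {x | x ∈ Icc u v ∧ f x = d} with hS
  have hSne : S.Nonempty := ⟨v, ⟨huv, le_rfl⟩, hfv⟩
  have hSclosed : IsClosed S := by
    have : S = Icc u v ∩ f ⁻¹' {d} := by
      ext x; simp [hS, Set.mem_inter_iff]
    rw [this]
    exact isClosed_Icc.inter (isClosed_singleton.preimage hf)
  have hSbdd : BddBelow S := ⟨u, fun x hx => hx.1.1⟩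
  set b' := sInf S with hb'
  have hb'mem : b' ∈ S := hSclosed.csInf_mem hSne hSbdd
  have hub' : u ≤ b' := hb'mem.1.1
  have hb'v : b' ≤ v := hb'mem.1.2
  have hfb' : f b' = d := hb'mem.2
  set T : Set ℝ := {x | x ∈ Icc u b' ∧ f x = c} with hT
  have hTne : T.Nonempty := ⟨u, ⟨le_rfl, hub'⟩, hfu⟩
  have hTclosed : IsClosed T := by
    have : T = Icc u b' ∩ f ⁻¹' {c} := by
      ext x; simp [hT, Set.mem_inter_iff]
    rw [this]
    exact isClosed_Icc.inter (isClosed_singleton.preimage hf)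
  have hTbdd : BddAbove T := ⟨b', fun x hx => hx.1.2⟩
  set a' := sSup T with ha'
  have ha'mem : a' ∈ T := hTclosed.csSup_mem hTne hTbdd
  have hua' : u ≤ a' := ha'mem.1.1
  have ha'b' : a' ≤ b' := ha'mem.1.2
  have hfa' : f a' = c := ha'mem.2
  refine ⟨a', b', hua', ha'b', hb'v, ?_⟩
  apply Set.Subset.antisymm
  · rintro _ ⟨x, hx, rfl⟩
    constructor
    · by_contra h
      push_neg at h
      -- f x < c; find y between x and b' with f y = c, contradicting sSup
      have hxa' : a' < x := by
        rcases lt_or_eq_of_le hx.1 with h' | h'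
        · exact h'
        · exfalso; rw [← h', hfa'] at h; exact lt_irrefl c h
      have : c ∈ Icc (f x) (f b') := ⟨le_of_lt h, hfb' ▸ hcd⟩
      obtain ⟨y, hy, hfy⟩ := intermediate_value_Icc hx.2 hf.continuousOn this
      have hyT : y ∈ T := ⟨⟨le_trans hua' (le_trans (le_of_lt hxa') hy.1), hy.2⟩, hfy⟩
      have : y ≤ a' := le_csSup hTbdd hyT
      exact absurd (lt_of_lt_of_le hxa' hy.1) (not_lt.mpr this)
    · by_contra h
      push_neg at h
      -- d < f x; find y between a' and x with f y = d, contradicting sInf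
      have hxb' : x < b' := by
        rcases lt_or_eq_of_le hx.2 with h' | h'
        · exact h'
        · rw [h', hfb'] at h; exact absurd h (lt_irrefl d)
      have : d ∈ Icc (f a') (f x) := ⟨hfa' ▸ hcd, le_of_lt h⟩
      obtain ⟨y, hy, hfy⟩ := intermediate_value_Icc hx.1 hf.continuousOn this
      have hyS : y ∈ S := ⟨⟨le_trans hua' hy.1, le_trans hy.2 (le_trans (le_of_lt hxb') hb'v)⟩, hfy⟩
      have : b' ≤ y := csInf_le hSbdd hyS
      exact absurd (lt_of_le_of_lt hy.2 hxb') (not_lt.mpr this)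
  · have := intermediate_value_Icc ha'b' hf.continuousOn
    rw [hfa', hfb'] at this
    exact this

/-- Covering lemma: if `[c,d] ⊆ f '' [a,b]`, there is a subinterval of `[a,b]`
mapping exactly onto `[c,d]`. -/
lemma cover_lemma (f : ℝ → ℝ) (hf : Continuous f) (a b c d : ℝ)
    (hcd : c ≤ d) (h : Icc c d ⊆ f '' Icc a b) :
    ∃ a' b', a ≤ a' ∧ a' ≤ b' ∧ b' ≤ b ∧ f '' Icc a' b' = Icc c d := by
  obtain ⟨u, hu, hfu⟩ := h ⟨le_rfl, hcd⟩
  obtain ⟨v, hv, hfv⟩ := h ⟨hcd, le_rfl⟩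
  rcases le_total u v with huv | hvu
  · obtain ⟨a', b', h1, h2, h3, h4⟩ := cover_helper f hf u v c d huv hcd hfu hfv
    exact ⟨a', b', le_trans hu.1 h1, h2, le_trans h3 hv.2, h4⟩
  · -- f v = d at the left, f u = c at the right; reflect
    set g : ℝ → ℝ := fun x => f (-x) with hg
    have hgc : Continuous g := hf.comp continuous_neg
    have h1 : g (-u) = c := by simp [hg, hfu]
    have h2 : g (-v) = d := by simp [hg, hfv]
    obtain ⟨s, t, hs1, hs2, hs3, hs4⟩ := cover_helper g hgc (-u) (-v) c d
      (neg_le_neg hvu) hcd h1 h2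
    refine ⟨-t, -s, ?_, neg_le_neg hs2, ?_, ?_⟩
    · have : -t ≥ v := by linarith [hs3, hv.1, hs2]
      linarith [hv.1]
    · linarith [hs1, hu.2]
    · rw [← hs4]
      ext y
      constructor
      · rintro ⟨x, hx, rfl⟩
        exact ⟨-x, ⟨by linarith [hx.2], by linarith [hx.1]⟩, by simp [hg]⟩
      · rintro ⟨x, hx, rfl⟩
        exact ⟨-x, ⟨by linarith [hx.2], by linarith [hx.1]⟩, by simp [hg]⟩

/-- Itinerary lemma: given a chain of covering relations of length `m`, there is a
subinterval of the initial interval whose `m`-th iterate image is exactly the final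
interval, and whose intermediate iterates stay in the prescribed intervals. -/
lemma itinerary (f : ℝ → ℝ) (hf : Continuous f) (lo hi : ℕ → ℝ)
    (hlh : ∀ n, lo n ≤ hi n) :
    ∀ m : ℕ, (∀ n < m, Icc (lo (n+1)) (hi (n+1)) ⊆ f '' Icc (lo n) (hi n)) →
    ∃ a b, lo 0 ≤ a ∧ a ≤ b ∧ b ≤ hi 0 ∧
      f^[m] '' Icc a b = Icc (lo m) (hi m) ∧
      ∀ i ≤ m, f^[i] '' Icc a b ⊆ Icc (lo i) (hi i) := by
  intro m
  induction m with
  | zero =>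
    intro _
    refine ⟨lo 0, hi 0, le_rfl, hlh 0, le_rfl, by simp, ?_⟩
    intro i hi0
    interval_cases i
    simp
  | succ m ih =>
    intro hedge
    obtain ⟨a, b, hla, hab, hbh, him, hit⟩ := ih (fun n hn => hedge n (Nat.lt_succ_of_lt hn))
    have hedgem := hedge m (Nat.lt_succ_self m)
    obtain ⟨c', d', hc1, hc2, hc3, hc4⟩ :=
      cover_lemma f hf (lo m) (hi m) (lo (m+1)) (hi (m+1)) (hlh (m+1)) hedgem
    have hsub : Icc c' d' ⊆ f^[m] '' Icc a b := by
      rw [him]; exact fun x hx => ⟨le_trans hc1 hx.1, le_trans hx.2 hc3⟩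
    obtain ⟨a'', b'', ha1, ha2, ha3, ha4⟩ :=
      cover_lemma (f^[m]) (hf.iterate m) a b c' d' hc2 hsub
    refine ⟨a'', b'', le_trans hla ha1, ha2, le_trans ha3 hbh, ?_, ?_⟩
    · rw [Function.iterate_succ']
      rw [Set.image_comp]
      rw [ha4, hc4]
    · intro i hi'
      rcases Nat.lt_succ_iff_lt_or_eq.mp (Nat.lt_succ_of_le hi') with h' | h'
      · have hle : i ≤ m := Nat.lt_succ_iff.mp h'
        exact subset_trans (Set.image_mono (Icc_subset_Icc ha1 ha3)) (hit i hle)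
      · subst h'
        rw [Function.iterate_succ', Set.image_comp, ha4, hc4]

theorem stefan_four_cycle_all_periods (f : ℝ → ℝ) (hf : Continuous f)
    (p₁ p₂ p₃ p₄ : ℝ) (h12 : p₁ < p₂) (h23 : p₂ < p₃) (h34 : p₃ < p₄)
    (hf1 : f p₁ = p₂) (hf2 : f p₂ = p₃) (hf3 : f p₃ = p₄) (hf4 : f p₄ = p₁) :
    ∀ m : ℕ, 1 ≤ m →
      ∃ x : ℝ, f^[m] x = x ∧ ∀ k : ℕ, 0 < k → k < m → f^[k] x ≠ x := by
  intro m hm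
  -- basic covering facts
  have cov23 : Icc p₃ p₄ ⊆ f '' Icc p₂ p₃ := by
    have := intermediate_value_Icc h23.le hf.continuousOn
    rwa [hf2, hf3] at this
  have cov3all : Icc p₁ p₄ ⊆ f '' Icc p₃ p₄ := by
    have := intermediate_value_Icc' h34.le hf.continuousOn
    rwa [hf3, hf4] at this
  rcases eq_or_lt_of_le hm with hm1 | hm2
  · -- m = 1: fixed point in [p₃, p₄]
    have : (0:ℝ) ∈ Icc (f p₄ - p₄) (f p₃ - p₃) := by
      rw [hf3, hf4]; constructor <;> linarith
    have hcont : ContinuousOn (fun x => f x - x) (Icc p₃ p₄) :=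
      (hf.sub continuous_id).continuousOn
    obtain ⟨x, _, hx⟩ := intermediate_value_Icc' h34.le hcont this
    refine ⟨x, ?_, ?_⟩
    · rw [← hm1]
      have hx' : f x - x = 0 := hx
      simp only [Function.iterate_one]
      linarith
    · intro k hk0 hkm
      rw [← hm1] at hkm
      omega
  · -- m ≥ 2: itinerary I₂, I₃, I₃, ..., I₃ (closing back to I₂)
    set lo : ℕ → ℝ := fun n => if n = 0 ∨ n = m then p₂ else p₃ with hlo
    set hi : ℕ → ℝ := fun n => if n = 0 ∨ n = m then p₃ else p₄ with hhi
    have hlh : ∀ n, lo n ≤ hi n := by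
      intro n; simp only [hlo, hhi]
      split <;> linarith
    have hedge : ∀ n < m, Icc (lo (n+1)) (hi (n+1)) ⊆ f '' Icc (lo n) (hi n) := by
      intro n hn
      rcases Nat.eq_zero_or_pos n with rfl | hn0
      · -- from I₂ to I₃ (note 1 ≠ m since m ≥ 2, and 1 ≠ 0)
        have h1m : ¬(0 + 1 = 0 ∨ 0 + 1 = m) := by omega
        simp only [hlo, hhi, if_pos (Or.inl rfl), if_neg h1m]
        exact cov23
      · -- from I₃ to either I₃ or I₂, both inside [p₁, p₄] ⊆ f '' I₃
        have hnm : ¬(n = 0 ∨ n = m) := by omega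
        simp only [hlo, hhi, if_neg hnm]
        refine subset_trans ?_ cov3all
        intro x hx
        rw [Set.mem_Icc] at hx ⊢
        by_cases h1 : n + 1 = 0 ∨ n + 1 = m
        · simp only [if_pos h1] at hx
          constructor <;> linarith [hx.1, hx.2]
        · simp only [if_neg h1] at hx
          constructor <;> linarith [hx.1, hx.2]
    obtain ⟨a, b, hla, hab, hbh, him, hit⟩ := itinerary f hf lo hi hlh m hedge
    have hlo0 : lo 0 = p₂ := by simp [hlo]
    have hhi0 : hi 0 = p₃ := by simp [hhi]
    have hlom : lo m = p₂ := by simp [hlo]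
    have hhim : hi m = p₃ := by simp [hhi]
    rw [hlo0] at hla; rw [hhi0] at hbh
    rw [hlom, hhim] at him
    -- fixed point of f^[m] in [a,b]
    have hmem_a : a ∈ Icc p₂ p₃ := ⟨hla, le_trans hab hbh⟩
    have hmem_b : b ∈ Icc p₂ p₃ := ⟨le_trans hla hab, hbh⟩
    obtain ⟨u, hu, hfu⟩ : a ∈ f^[m] '' Icc a b := him ▸ hmem_a
    obtain ⟨v, hv, hfv⟩ : b ∈ f^[m] '' Icc a b := him ▸ hmem_b
    have hcont : ContinuousOn (fun x => f^[m] x - x) (uIcc u v) :=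
      ((hf.iterate m).sub continuous_id).continuousOn
    have h0 : (0:ℝ) ∈ uIcc ((fun x => f^[m] x - x) u) ((fun x => f^[m] x - x) v) := by
      simp only [hfu, hfv]
      rcases le_total u v with h' | h'
      · rw [uIcc_of_le (by linarith [hu.1, hv.2] : a - u ≤ b - v)]
        constructor <;> [linarith [hu.1]; linarith [hv.2]]
      · rw [uIcc_of_le (by linarith [hu.1, hv.2] : a - u ≤ b - v)]
        constructor <;> [linarith [hu.1]; linarith [hv.2]]
    obtain ⟨x, hx, hfx⟩ := intermediate_value_uIcc hcont h0
    have hxab : x ∈ Icc a b := by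
      rcases le_total u v with h' | h'
      · rw [uIcc_of_le h'] at hx
        exact ⟨le_trans hu.1 hx.1, le_trans hx.2 hv.2⟩
      · rw [uIcc_of_ge h'] at hx
        exact ⟨le_trans hv.1 hx.1, le_trans hx.2 hu.2⟩
    have hxfix : f^[m] x = x := by simpa using sub_eq_zero.mp hfx
    refine ⟨x, hxfix, ?_⟩
    intro k hk0 hkm hfk
    -- x ∈ I₂ and f^[k] x ∈ I₃, so x = p₃
    have hxI2 : x ∈ Icc p₂ p₃ := ⟨le_trans hla hxab.1, le_trans hxab.2 hbh⟩
    have hkI3 : f^[k] x ∈ Icc p₃ p₄ := by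
      have := hit k (le_of_lt hkm) ⟨x, hxab, rfl⟩
      have hknm : ¬(k = 0 ∨ k = m) := by omega
      simpa [hlo, hhi, if_neg hknm] using this
    rw [hfk] at hkI3
    have hxp3 : x = p₃ := le_antisymm hxI2.2 hkI3.1
    -- derive contradiction
    rcases eq_or_lt_of_le (show 2 ≤ m by omega) with hm2' | hm3
    · -- m = 2: k = 1, f p₃ = p₄ ≠ p₃
      have hk1 : k = 1 := by omega
      rw [hk1, hxp3] at hfk
      simp [hf3] at hfk
      linarith
    · -- m ≥ 3: f^[2] x ∈ I₃ but f^[2] p₃ = p₁ < p₃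
      have h2I3 : f^[2] x ∈ Icc p₃ p₄ := by
        have := hit 2 (by omega) ⟨x, hxab, rfl⟩
        have h2nm : ¬(2 = 0 ∨ 2 = m) := by omega
        simpa [hlo, hhi, if_neg h2nm] using this
      rw [hxp3] at h2I3
      simp [Function.iterate_succ_apply, hf3, hf4] at h2I3
      linarith [h2I3.1]
end

section
/- Let f : ℝ → ℝ be continuous with a periodic point of least period n. Then for every m obtained from n by repeatedly subtracting the lowest set bit of the binary expansion (removing ones from the right), with m ≥ 1, f has a periodic point of least period m. -/
/-- Remove the rightmost `1` of the binary expansion of `n`, i.e. subtract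
the lowest set bit (the largest power of two dividing `n`). -/
def removeLowBit (n : ℕ) : ℕ := n - 2 ^ (n.factorization 2)

open Set Function

section IVT
variable {g : ℝ → ℝ}

lemma exists_fixed_of_cover (hg : Continuous g) {a b : ℝ} (hab : a ≤ b)
    (h : Icc a b ⊆ g '' Icc a b) : ∃ y ∈ Icc a b, g y = y := by
  obtain ⟨s, hs, hgs⟩ := h (left_mem_Icc.2 hab)
  obtain ⟨t, ht, hgt⟩ := h (right_mem_Icc.2 hab)
  have hc : Continuous fun y => g y - y := hg.sub continuous_id
  have h0 : (0:ℝ) ∈ uIcc (g s - s) (g t - t) := by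
    rw [Set.mem_uIcc]
    left
    constructor
    · rw [hgs]; linarith [hs.1]
    · rw [hgt]; linarith [ht.2]
  obtain ⟨y, hy, hy0⟩ := intermediate_value_uIcc (f := fun y => g y - y) hc.continuousOn h0
  have hysub : uIcc s t ⊆ Icc a b := Set.uIcc_subset_Icc hs ht
  have : g y = y := by
    have : g y - y = 0 := hy0
    linarith
  exact ⟨y, hysub hy, this⟩

variable {g : ℝ → ℝ}

lemma onto_aux (hg : Continuous g) {u v c d : ℝ} (huv : u ≤ v) (hcd : c ≤ d)
    (hu : g u = c) (hv : g v = d) :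
    ∃ s t, u ≤ s ∧ s ≤ t ∧ t ≤ v ∧ g '' Icc s t = Icc c d := by
  classical
  set S : Set ℝ := {r | r ∈ Icc u v ∧ g r = c} with hS
  have hSc : IsClosed S := (isClosed_Icc.inter (isClosed_eq hg continuous_const))
  have hSne : u ∈ S := ⟨⟨le_refl u, huv⟩, hu⟩
  have hSbdd : BddAbove S := ⟨v, fun r hr => hr.1.2⟩
  set s := sSup S with hs
  have hsS : s ∈ S := hSc.csSup_mem ⟨u, hSne⟩ hSbdd
  have hsv : s ≤ v := hsS.1.2
  have hus : u ≤ s := le_csSup hSbdd hSne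
  have hgs : g s = c := hsS.2
  set T : Set ℝ := {r | r ∈ Icc s v ∧ g r = d} with hT
  have hTc : IsClosed T := (isClosed_Icc.inter (isClosed_eq hg continuous_const))
  have hTne : v ∈ T := ⟨⟨hsv, le_refl v⟩, hv⟩
  have hTbdd : BddBelow T := ⟨s, fun r hr => hr.1.1⟩
  set t := sInf T with ht
  have htT : t ∈ T := hTc.csInf_mem ⟨v, hTne⟩ hTbdd
  have hst : s ≤ t := htT.1.1
  have htv : t ≤ v := htT.1.2
  have hgt : g t = d := htT.2
  refine ⟨s, t, hus, hst, htv, ?_⟩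
  apply Subset.antisymm
  · rintro w ⟨r, hr, rfl⟩
    by_contra hw
    rw [mem_Icc, not_and_or, not_le, not_le] at hw
    rcases hw with hw | hw
    · -- g r < c, find r' ∈ [r, t] with g r' = c, r' > s : contra
      have hrs : s < r := by
        rcases eq_or_lt_of_le hr.1 with h | h
        · exfalso; rw [← h] at hw; rw [hgs] at hw; exact lt_irrefl _ hw
        · exact h
      have : c ∈ Icc (g r) (g t) := ⟨le_of_lt hw, by rw [hgt]; exact hcd⟩
      obtain ⟨r', hr', hgr'⟩ := intermediate_value_Icc hr.2 hg.continuousOn this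
      have : r' ∈ S := ⟨⟨le_trans hus (le_trans (le_of_lt hrs) hr'.1), le_trans hr'.2 htv⟩, hgr'⟩
      have : r' ≤ s := le_csSup hSbdd this
      exact absurd (lt_of_lt_of_le hrs (le_trans hr'.1 this)) (lt_irrefl s)
    · -- g r > d, find r' ∈ [s, r] with g r' = d, r' < t : contra
      have hrt : r < t := by
        rcases eq_or_lt_of_le hr.2 with h | h
        · exfalso; rw [h] at hw; rw [hgt] at hw; exact lt_irrefl _ hw
        · exact h
      have : d ∈ Icc (g s) (g r) := ⟨by rw [hgs]; exact hcd, le_of_lt hw⟩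
      obtain ⟨r', hr', hgr'⟩ := intermediate_value_Icc hr.1 hg.continuousOn this
      have : r' ∈ T := ⟨⟨hr'.1, le_trans (le_trans hr'.2 (le_of_lt hrt)) htv⟩, hgr'⟩
      have : t ≤ r' := csInf_le hTbdd this
      exact absurd (lt_of_le_of_lt (le_trans this hr'.2) hrt) (lt_irrefl t)
  · have : Icc (g s) (g t) ⊆ g '' Icc s t := intermediate_value_Icc hst hg.continuousOn
    rw [hgs, hgt] at this
    exact this

lemma onto_sub (hg : Continuous g) {a b c d : ℝ} (hab : a ≤ b) (hcd : c ≤ d)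
    (h : Icc c d ⊆ g '' Icc a b) :
    ∃ s t, a ≤ s ∧ s ≤ t ∧ t ≤ b ∧ g '' Icc s t = Icc c d := by
  obtain ⟨u, hu, hgu⟩ := h (left_mem_Icc.2 hcd)
  obtain ⟨v, hv, hgv⟩ := h (right_mem_Icc.2 hcd)
  rcases le_total u v with h' | h'
  · obtain ⟨s, t, h1, h2, h3, h4⟩ := onto_aux hg h' hcd hgu hgv
    exact ⟨s, t, le_trans hu.1 h1, h2, le_trans h3 hv.2, h4⟩
  · -- mirror
    have hg' : Continuous fun r => g (-r) := hg.comp continuous_neg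
    have h1 : (fun r => g (-r)) (-u) = c := by simpa using hgu
    have h2 : (fun r => g (-r)) (-v) = d := by simpa using hgv
    obtain ⟨s, t, hs1, hs2, hs3, hs4⟩ := onto_aux hg' (neg_le_neg h') hcd h1 h2
    refine ⟨-t, -s, ?_, neg_le_neg hs2, ?_, ?_⟩
    · have : t ≤ -v := hs3
      have : v ≤ -t := by linarith
      linarith [hv.1]
    · have : -u ≤ s := hs1
      have : -s ≤ u := by linarith
      linarith [hu.2]
    · rw [← hs4]
      ext w
      constructor
      · rintro ⟨r, hr, rfl⟩
        exact ⟨-r, by constructor <;> [linarith [hr.2]; linarith [hr.1]], by simp⟩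
      · rintro ⟨r, hr, rfl⟩
        exact ⟨-r, by constructor <;> [linarith [hr.2]; linarith [hr.1]], by simp⟩

lemma follow (hg : Continuous g) (W : ℕ → ℝ × ℝ)
    (hle : ∀ i, (W i).1 ≤ (W i).2)
    (hcov : ∀ i, Icc (W (i+1)).1 (W (i+1)).2 ⊆ g '' Icc (W i).1 (W i).2) :
    ∀ N, ∃ s t, s ≤ t ∧ (∀ i, i ≤ N → g^[i] '' Icc s t ⊆ Icc (W i).1 (W i).2) ∧
      g^[N] '' Icc s t = Icc (W N).1 (W N).2 := by
  intro N
  induction N with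
  | zero =>
    exact ⟨(W 0).1, (W 0).2, hle 0, by intro i hi; simp [Nat.le_zero.1 hi], by simp⟩
  | succ N ih =>
    obtain ⟨s, t, hst, hsub, heq⟩ := ih
    obtain ⟨s₁, t₁, h1, h2, h3, h4⟩ := onto_sub hg (hle N) (hle (N+1)) (heq ▸ hcov N)
    have hsub1 : Icc s₁ t₁ ⊆ g^[N] '' Icc s t := by
      rw [heq]; exact fun r hr => ⟨h1.trans hr.1, hr.2.trans h3⟩
    obtain ⟨s₂, t₂, g1, g2, g3, g4⟩ := onto_sub (hg.iterate N) hst h2 hsub1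
    have hsub2 : Icc s₂ t₂ ⊆ Icc s t := fun r hr => ⟨g1.trans hr.1, hr.2.trans g3⟩
    have hlast : g^[N+1] '' Icc s₂ t₂ = Icc (W (N+1)).1 (W (N+1)).2 := by
      rw [Function.iterate_succ', Set.image_comp, g4, h4]
    refine ⟨s₂, t₂, g2, ?_, hlast⟩
    intro i hi
    rcases Nat.lt_or_ge i (N+1) with h | h
    · exact (Set.image_mono hsub2).trans (hsub i (Nat.lt_succ_iff.1 h))
    · have : i = N + 1 := le_antisymm hi h
      rw [this, hlast]

lemma loop_pt (hg : Continuous g) (ℓ : ℕ) (hℓ : 0 < ℓ) (W : ℕ → ℝ × ℝ)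
    (hle : ∀ i, (W i).1 ≤ (W i).2)
    (hper : ∀ i, W (i + ℓ) = W i)
    (hcov : ∀ i, Icc (W (i+1)).1 (W (i+1)).2 ⊆ g '' Icc (W i).1 (W i).2) :
    ∃ y, g^[ℓ] y = y ∧ ∀ i, g^[i] y ∈ Icc (W i).1 (W i).2 := by
  obtain ⟨s, t, hst, hsub, heq⟩ := follow hg W hle hcov ℓ
  have hWl : W ℓ = W 0 := by simpa using hper 0
  have hcover : Icc s t ⊆ g^[ℓ] '' Icc s t := by
    rw [heq, hWl]
    have := hsub 0 (Nat.zero_le ℓ)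
    simpa using this
  obtain ⟨y, hy, hfix⟩ := exists_fixed_of_cover (hg.iterate ℓ) hst hcover
  have hper' : IsPeriodicPt g ℓ y := hfix
  refine ⟨y, hfix, ?_⟩
  have hWmod : ∀ i, W i = W (i % ℓ) := by
    intro i
    conv_lhs => rw [← Nat.mod_add_div i ℓ]
    generalize i / ℓ = k
    induction k with
    | zero => simp
    | succ k ih => rw [Nat.mul_succ, ← Nat.add_assoc, hper, ih]
  intro i
  have h1 : g^[i] y = g^[i % ℓ] y := (hper'.iterate_mod_apply i).symm
  rw [h1, hWmod i]
  have : g^[i % ℓ] y ∈ g^[i % ℓ] '' Icc s t := ⟨y, hy, rfl⟩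
  exact hsub _ (le_of_lt (Nat.mod_lt i hℓ)) this

/-- Abstract sorted enumeration of a periodic orbit. -/
structure Orb (g : ℝ → ℝ) (m : ℕ) (u : ℕ → ℝ) : Prop where
  hm3 : 3 ≤ m
  hodd : Odd m
  mono : ∀ {i j}, i < j → j < m → u i < u j
  close : ∀ i, i < m → ∃ j, j < m ∧ g (u i) = u j
  hmp : ∀ i, i < m → Function.minimalPeriod g (u i) = m
  htrans : ∀ i j, i < m → j < m → ∃ t, g^[t] (u i) = u j

namespace Orb

variable {g : ℝ → ℝ} {m : ℕ} {u : ℕ → ℝ}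

lemma mono' (O : Orb g m u) : ∀ {i j}, i ≤ j → j < m → u i ≤ u j := by
  intro i j hij hj
  rcases eq_or_lt_of_le hij with rfl | h
  · exact le_refl _
  · exact le_of_lt (O.mono h hj)

lemma inj (O : Orb g m u) : ∀ {i j}, i < m → j < m → u i = u j → i = j := by
  intro i j hi hj h
  rcases lt_trichotomy i j with hl | he | hl
  · exact absurd h (ne_of_lt (O.mono hl hj))
  · exact he
  · exact absurd h.symm (ne_of_lt (O.mono hl hi))

lemma noFix (O : Orb g m u) : ∀ {i}, i < m → g (u i) ≠ u i := by
  intro i hi hfix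
  have hm := O.hm3
  have h1 : Function.IsPeriodicPt g 1 (u i) := by
    simpa [Function.IsPeriodicPt, Function.IsFixedPt] using hfix
  have h2 := h1.minimalPeriod_dvd
  rw [O.hmp i hi] at h2
  have := Nat.le_of_dvd one_pos h2
  omega

lemma idx_le (O : Orb g m u) {i j : ℕ} (hi : i < m) (hj : j < m) (h : u i ≤ u j) : i ≤ j := by
  by_contra hc
  push_neg at hc
  exact absurd h (not_le.2 (O.mono hc hi))

lemma idx_lt (O : Orb g m u) {i j : ℕ} (hi : i < m) (hj : j < m) (h : u i < u j) : i < j := by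
  by_contra hc
  push_neg at hc
  exact absurd h (not_lt.2 (O.mono' hc hi))

/-- Existence of the center pair. -/
lemma center (O : Orb g m u) : ∃ c, c + 1 < m ∧ u (c+1) ≤ g (u c) ∧ g (u (c+1)) ≤ u c ∧
    u c < g (u c) ∧ g (u (c+1)) < u (c+1) := by
  classical
  have hm := O.hm3
  set P : ℕ → Prop := fun i => u i < g (u i) with hP
  have hP0 : P 0 := by
    obtain ⟨j, hj, hgj⟩ := O.close 0 (by omega)
    have hj0 : j ≠ 0 := by
      intro h; rw [h] at hgj; exact O.noFix (i := 0) (by omega) hgj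
    rw [hP]; simp only
    rw [hgj]
    exact O.mono (by omega) hj
  have hPm : ¬ P (m-1) := by
    obtain ⟨j, hj, hgj⟩ := O.close (m-1) (by omega)
    have hjm : j ≠ m - 1 := by
      intro h; rw [h] at hgj; exact O.noFix (i := m - 1) (by omega) hgj
    rw [hP]; simp only
    rw [hgj]
    exact not_lt.2 (le_of_lt (O.mono (by omega) (by omega)))
  set c := Nat.findGreatest P (m-1) with hc
  have hcP : P c := Nat.findGreatest_spec (Nat.zero_le _) hP0
  have hcle : c ≤ m - 1 := Nat.findGreatest_le _
  have hcne : c ≠ m - 1 := fun h => hPm (h ▸ hcP)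
  have hclt : c + 1 < m := by omega
  have hgr : ∀ i, c < i → i < m → g (u i) < u i := by
    intro i hci him
    have : ¬ P i := Nat.findGreatest_is_greatest hci (by omega)
    rw [hP] at this; simp only at this
    push_neg at this
    rcases eq_or_lt_of_le this with h | h
    · exact absurd h (O.noFix him)
    · exact h
  refine ⟨c, hclt, ?_, ?_, hcP, hgr (c+1) (by omega) hclt⟩
  · obtain ⟨j, hj, hgj⟩ := O.close c (by omega)
    rw [hgj]
    have : c < j := O.idx_lt (by omega) hj (by rw [← hgj]; exact hcP)
    exact O.mono' (by omega) hj
  · obtain ⟨j, hj, hgj⟩ := O.close (c+1) (by omega)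
    rw [hgj]
    have : j < c + 1 := O.idx_lt hj hclt (by rw [← hgj]; exact hgr (c+1) (by omega) hclt)
    exact O.mono' (by omega) (by omega)

end Orb

/-- Edge in the covering graph of orbit intervals. -/
def Edg (g : ℝ → ℝ) (u : ℕ → ℝ) (m : ℕ) (j k : ℕ) : Prop :=
  k + 1 < m ∧ Icc (u k) (u (k+1)) ⊆ Set.uIcc (g (u j)) (g (u (j+1)))

/-- Reachability from the center vertex in `n` steps. -/
inductive Reach (g : ℝ → ℝ) (u : ℕ → ℝ) (m c : ℕ) : ℕ → ℕ → Prop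
  | zero : Reach g u m c 0 c
  | succ {n j k : ℕ} : Reach g u m c n j → Edg g u m j k → Reach g u m c (n+1) k

lemma reach_valid {g u m c} (hc : c + 1 < m) {n j} (h : Reach g u m c n j) : j + 1 < m := by
  induction h with
  | zero => exact hc
  | succ _ e _ => exact e.1

lemma reach_path {g u m c} {n j} (h : Reach g u m c n j) :
    ∃ P : ℕ → ℕ, P 0 = c ∧ P n = j ∧ ∀ i, i < n → Edg g u m (P i) (P (i+1)) := by
  induction h with
  | zero => exact ⟨fun _ => c, rfl, rfl, by intro i hi; omega⟩
  | @succ n j k _ e ih =>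
    obtain ⟨P, hP0, hPn, hPe⟩ := ih
    refine ⟨fun i => if i = n + 1 then k else P i, by simp [hP0], by simp, ?_⟩
    intro i hi
    rcases Nat.lt_or_ge i n with h' | h'
    · simpa [Nat.ne_of_lt (by omega : i < n+1), Nat.ne_of_lt (by omega : i + 1 < n+1), Nat.ne_of_lt h']
        using hPe i h'
    · have : i = n := by omega
      subst this
      simpa [Nat.ne_of_lt (by omega : i < i+1), hPn] using e

lemma reach_extend {g u m c} {a j} (h : Reach g u m c a j) (Q : ℕ → ℕ) (hQ0 : Q 0 = j) :
    ∀ b, (∀ i, i < b → Edg g u m (Q i) (Q (i+1))) → Reach g u m c (a + b) (Q b) := by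
  intro b
  induction b with
  | zero => intro _; simpa [hQ0] using h
  | succ b ih =>
    intro he
    exact Reach.succ (ih (fun i hi => he i (by omega))) (he b (by omega))

section ReachAll
variable {g : ℝ → ℝ} {m : ℕ} {u : ℕ → ℝ}

lemma reach_all (O : Orb g m u) {c : ℕ} (hc : c + 1 < m)
    (hpq : u (c+1) ≤ g (u c)) (hqp : g (u (c+1)) ≤ u c) :
    ∀ j, j + 1 < m → ∃ n, Reach g u m c n j := by
  classical
  have hm := O.hm3
  set Sol : ℕ → ℕ → Prop := fun lo hi => lo ≤ c ∧ c+1 ≤ hi ∧ hi ≤ m-1 ∧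
    ∀ j, lo ≤ j → j+1 ≤ hi → ∃ n, Reach g u m c n j with hSolDef
  have hSol0 : Sol c (c+1) := by
    refine ⟨le_refl c, le_refl _, by omega, ?_⟩
    intro j h1 h2
    have : j = c := by omega
    subst this; exact ⟨0, Reach.zero⟩
  have hUnion : ∀ {lo hi lo' hi'}, Sol lo hi → Sol lo' hi' →
      Sol (min lo lo') (max hi hi') := by
    rintro lo hi lo' hi' ⟨h1, h2, h3, h4⟩ ⟨h1', h2', h3', h4'⟩
    refine ⟨by omega, by omega, by omega, ?_⟩
    intro j hj1 hj2
    rcases le_or_gt (j+1) hi with hA | hA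
    · rcases le_or_gt lo j with hB | hB
      · exact h4 j hB hA
      · exact h4' j (by omega) (by omega)
    · exact h4' j (by omega) (by omega)
  have hex : ∃ lo, ∃ hi, Sol lo hi := ⟨c, c+1, hSol0⟩
  set lo₀ := Nat.find hex with hlo₀def
  obtain ⟨hi_w, hSol_v⟩ := Nat.find_spec hex
  set B : ℕ → Prop := fun hi => ∃ lo, Sol lo hi with hBdef
  have hBex : B (c+1) := ⟨c, hSol0⟩
  set hi₀ := Nat.findGreatest B (m-1) with hhi₀def
  obtain ⟨lo_w, hSol_w⟩ : B hi₀ := Nat.findGreatest_spec (show c+1 ≤ m-1 by omega) hBex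
  have hmain : Sol lo₀ hi₀ := by
    have h := hUnion hSol_v hSol_w
    have e1 : min lo₀ lo_w = lo₀ := by
      have : lo₀ ≤ lo_w := Nat.find_min' hex ⟨hi₀, hSol_w⟩
      omega
    have e2 : max hi_w hi₀ = hi₀ := by
      have : hi_w ≤ hi₀ := Nat.le_findGreatest hSol_v.2.2.1 ⟨lo₀, hSol_v⟩
      omega
    rwa [e1, e2] at h
  obtain ⟨hlo_c, hc_hi, hhi_m, hreach⟩ := hmain
  have hlom : lo₀ < m := by omega
  have hhim : hi₀ < m := by omega
  -- no extension to the right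
  have hRext : ∀ j, lo₀ ≤ j → j+1 ≤ hi₀ → min (g (u j)) (g (u (j+1))) ≤ u hi₀ →
      u hi₀ < max (g (u j)) (g (u (j+1))) → False := by
    intro j hj1 hj2 hMn hMx
    obtain ⟨iM, hiMm, hiM⟩ : ∃ iM, iM < m ∧ u iM = max (g (u j)) (g (u (j+1))) := by
      rcases max_choice (g (u j)) (g (u (j+1))) with h | h
      · obtain ⟨ia, hiam, hia⟩ := O.close j (by omega)
        exact ⟨ia, hiam, by rw [h, hia]⟩
      · obtain ⟨ib, hibm, hib⟩ := O.close (j+1) (by omega)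
        exact ⟨ib, hibm, by rw [h, hib]⟩
    have hgtiM : hi₀ < iM := O.idx_lt hhim hiMm (by rw [hiM]; exact hMx)
    have hval : hi₀ + 1 < m := by omega
    have hup : u (hi₀+1) ≤ max (g (u j)) (g (u (j+1))) := by
      rw [← hiM]; exact O.mono' (by omega) hiMm
    have hedge : Edg g u m j hi₀ := by
      refine ⟨hval, ?_⟩
      intro z hz
      rw [Set.mem_uIcc]
      rcases le_total (g (u j)) (g (u (j+1))) with h | h
      · left
        constructor
        · calc g (u j) = min (g (u j)) (g (u (j+1))) := (min_eq_left h).symm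
            _ ≤ u hi₀ := hMn
            _ ≤ z := hz.1
        · calc z ≤ u (hi₀+1) := hz.2
            _ ≤ max (g (u j)) (g (u (j+1))) := hup
            _ = g (u (j+1)) := max_eq_right h
      · right
        constructor
        · calc g (u (j+1)) = min (g (u j)) (g (u (j+1))) := (min_eq_right h).symm
            _ ≤ u hi₀ := hMn
            _ ≤ z := hz.1
        · calc z ≤ u (hi₀+1) := hz.2
            _ ≤ max (g (u j)) (g (u (j+1))) := hup
            _ = g (u j) := max_eq_left h
    have hSext : Sol lo₀ (hi₀ + 1) := by
      refine ⟨hlo_c, by omega, by omega, ?_⟩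
      intro j' hj'1 hj'2
      rcases le_or_gt (j'+1) hi₀ with h | h
      · exact hreach j' hj'1 h
      · have : j' = hi₀ := by omega
        subst this
        obtain ⟨n, hn⟩ := hreach j hj1 hj2
        exact ⟨n+1, hn.succ hedge⟩
    exact Nat.findGreatest_is_greatest (show hi₀ < hi₀ + 1 by omega) (by omega)
      ⟨lo₀, hSext⟩
  -- no extension to the left
  have hLext : ∀ j, lo₀ ≤ j → j+1 ≤ hi₀ → min (g (u j)) (g (u (j+1))) < u lo₀ →
      u lo₀ ≤ max (g (u j)) (g (u (j+1))) → False := by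
    intro j hj1 hj2 hMn hMx
    obtain ⟨iN, hiNm, hiN⟩ : ∃ iN, iN < m ∧ u iN = min (g (u j)) (g (u (j+1))) := by
      rcases min_choice (g (u j)) (g (u (j+1))) with h | h
      · obtain ⟨ia, hiam, hia⟩ := O.close j (by omega)
        exact ⟨ia, hiam, by rw [h, hia]⟩
      · obtain ⟨ib, hibm, hib⟩ := O.close (j+1) (by omega)
        exact ⟨ib, hibm, by rw [h, hib]⟩
    have hltiN : iN < lo₀ := O.idx_lt hiNm hlom (by rw [hiN]; exact hMn)
    have hlopos : 1 ≤ lo₀ := by omega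
    have hdn : min (g (u j)) (g (u (j+1))) ≤ u (lo₀ - 1) := by
      rw [← hiN]; exact O.mono' (by omega) (by omega)
    have heq1 : lo₀ - 1 + 1 = lo₀ := by omega
    have hedge : Edg g u m j (lo₀ - 1) := by
      refine ⟨by omega, ?_⟩
      intro z hz
      rw [heq1] at hz
      rw [Set.mem_uIcc]
      rcases le_total (g (u j)) (g (u (j+1))) with h | h
      · left
        constructor
        · calc g (u j) = min (g (u j)) (g (u (j+1))) := (min_eq_left h).symm
            _ ≤ u (lo₀ - 1) := hdn
            _ ≤ z := hz.1
        · calc z ≤ u lo₀ := hz.2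
            _ ≤ max (g (u j)) (g (u (j+1))) := hMx
            _ = g (u (j+1)) := max_eq_right h
      · right
        constructor
        · calc g (u (j+1)) = min (g (u j)) (g (u (j+1))) := (min_eq_right h).symm
            _ ≤ u (lo₀ - 1) := hdn
            _ ≤ z := hz.1
        · calc z ≤ u lo₀ := hz.2
            _ ≤ max (g (u j)) (g (u (j+1))) := hMx
            _ = g (u j) := max_eq_left h
    have hSext : Sol (lo₀ - 1) hi₀ := by
      refine ⟨by omega, by omega, by omega, ?_⟩
      intro j' hj'1 hj'2
      rcases le_or_gt lo₀ j' with h | h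
      · exact hreach j' h hj'2
      · have : j' = lo₀ - 1 := by omega
        subst this
        obtain ⟨n, hn⟩ := hreach j hj1 hj2
        exact ⟨n+1, hn.succ hedge⟩
    exact Nat.find_min hex (show lo₀ - 1 < lo₀ by omega) ⟨hi₀, hSext⟩
  -- trichotomy for pairs
  have hIm : ∀ j, lo₀ ≤ j → j + 1 ≤ hi₀ →
      (u lo₀ ≤ min (g (u j)) (g (u (j+1))) ∧ max (g (u j)) (g (u (j+1))) ≤ u hi₀) ∨
      (u hi₀ < min (g (u j)) (g (u (j+1)))) ∨
      (max (g (u j)) (g (u (j+1))) < u lo₀) := by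
    intro j h1 h2
    rcases le_or_gt (max (g (u j)) (g (u (j+1)))) (u hi₀) with hMx | hMx
    · rcases le_or_gt (u lo₀) (min (g (u j)) (g (u (j+1)))) with hMn | hMn
      · exact Or.inl ⟨hMn, hMx⟩
      · rcases lt_or_ge (max (g (u j)) (g (u (j+1)))) (u lo₀) with h | h
        · exact Or.inr (Or.inr h)
        · exact absurd (hLext j h1 h2 hMn h) not_false
    · rcases lt_or_ge (u hi₀) (min (g (u j)) (g (u (j+1)))) with h | h
      · exact Or.inr (Or.inl h)
      · exact absurd (hRext j h1 h2 h hMx) not_false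
  set IN : ℕ → Prop := fun j => u lo₀ ≤ min (g (u j)) (g (u (j+1))) ∧
      max (g (u j)) (g (u (j+1))) ≤ u hi₀ with hINdef
  have hIN_of_im : ∀ j, lo₀ ≤ j → j+1 ≤ hi₀ →
      ((u lo₀ ≤ g (u j) ∧ g (u j) ≤ u hi₀) ∨
       (u lo₀ ≤ g (u (j+1)) ∧ g (u (j+1)) ≤ u hi₀)) → IN j := by
    intro j h1 h2 him
    rcases hIm j h1 h2 with h | h | h
    · exact h
    · exfalso
      rcases him with ⟨_, hb⟩ | ⟨_, hb⟩
      · exact absurd (lt_of_lt_of_le h (min_le_left _ _)) (not_lt.2 hb)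
      · exact absurd (lt_of_lt_of_le h (min_le_right _ _)) (not_lt.2 hb)
    · exfalso
      rcases him with ⟨ha, _⟩ | ⟨ha, _⟩
      · exact absurd (lt_of_le_of_lt (le_max_left _ _) h) (not_lt.2 ha)
      · exact absurd (lt_of_le_of_lt (le_max_right _ _) h) (not_lt.2 ha)
  have hINc : IN c := by
    rcases hIm c hlo_c hc_hi with h | h | h
    · exact h
    · exfalso
      have h1 : min (g (u c)) (g (u (c+1))) ≤ u hi₀ :=
        le_trans (min_le_right _ _) (le_trans hqp (O.mono' (by omega) hhim))
      exact absurd h (not_lt.2 h1)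
    · exfalso
      have h1 : u lo₀ ≤ max (g (u c)) (g (u (c+1))) :=
        le_trans (le_trans (O.mono' (by omega) (by omega)) hpq) (le_max_left _ _)
      exact absurd h (not_lt.2 h1)
  have upIN : ∀ t, c + t + 1 ≤ hi₀ → IN (c + t) := by
    intro t
    induction t with
    | zero => intro _; simpa using hINc
    | succ t ih =>
      intro h
      have hprev : IN (c + t) := ih (by omega)
      have him : u lo₀ ≤ g (u (c + t + 1)) ∧ g (u (c + t + 1)) ≤ u hi₀ := by
        constructor
        · exact le_trans hprev.1 (min_le_right _ _)
        · exact le_trans (le_max_right _ _) hprev.2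
      have : c + (t + 1) = c + t + 1 := by omega
      rw [this]
      exact hIN_of_im (c + t + 1) (by omega) (by omega) (Or.inl him)
  have downIN : ∀ t, t ≤ c - lo₀ → IN (c - t) := by
    intro t
    induction t with
    | zero => intro _; simpa using hINc
    | succ t ih =>
      intro h
      have hprev : IN (c - t) := ih (by omega)
      have heq : c - (t + 1) + 1 = c - t := by omega
      have him : u lo₀ ≤ g (u (c - t)) ∧ g (u (c - t)) ≤ u hi₀ := by
        constructor
        · exact le_trans hprev.1 (min_le_left _ _)
        · exact le_trans (le_max_left _ _) hprev.2
      apply hIN_of_im (c - (t+1)) (by omega) (by omega)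
      rw [heq]
      exact Or.inr him
  have hInv : ∀ i, lo₀ ≤ i → i ≤ hi₀ → u lo₀ ≤ g (u i) ∧ g (u i) ≤ u hi₀ := by
    intro i h1 h2
    rcases le_or_gt i c with h | h
    · have hIN : IN i := by
        have := downIN (c - i) (by omega)
        rwa [show c - (c - i) = i by omega] at this
      exact ⟨le_trans hIN.1 (min_le_left _ _), le_trans (le_max_left _ _) hIN.2⟩
    · have hIN : IN (i - 1) := by
        have := upIN (i - 1 - c) (by omega)
        rwa [show c + (i - 1 - c) = i - 1 by omega] at this
      have heq : i - 1 + 1 = i := by omega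
      rw [← heq]
      exact ⟨le_trans hIN.1 (min_le_right _ _), le_trans (le_max_right _ _) hIN.2⟩
  have hOrb : ∀ t, ∃ i, lo₀ ≤ i ∧ i ≤ hi₀ ∧ g^[t] (u c) = u i := by
    intro t
    induction t with
    | zero => exact ⟨c, hlo_c, by omega, rfl⟩
    | succ t ih =>
      obtain ⟨i, h1, h2, heq⟩ := ih
      obtain ⟨i', hi'm, hgi⟩ := O.close i (by omega)
      refine ⟨i', ?_, ?_, ?_⟩
      · exact O.idx_le hlom hi'm (by rw [← hgi]; exact (hInv i h1 h2).1)
      · exact O.idx_le hi'm hhim (by rw [← hgi]; exact (hInv i h1 h2).2)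
      · rw [Function.iterate_succ_apply', heq, hgi]
  have hfin : lo₀ = 0 ∧ hi₀ = m - 1 := by
    by_contra hcon
    rw [not_and_or] at hcon
    rcases hcon with h | h
    · obtain ⟨t, ht⟩ := O.htrans c 0 (by omega) (by omega)
      obtain ⟨i, h1, h2, heq⟩ := hOrb t
      rw [ht] at heq
      have : 0 = i := O.inj (by omega) (by omega) heq
      omega
    · obtain ⟨t, ht⟩ := O.htrans c (m-1) (by omega) (by omega)
      obtain ⟨i, h1, h2, heq⟩ := hOrb t
      rw [ht] at heq
      have : m - 1 = i := O.inj (by omega) (by omega) heq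
      omega
  intro j hj
  exact hreach j (by omega) (by omega)

end ReachAll

section Loop
variable {g : ℝ → ℝ} {m : ℕ} {u : ℕ → ℝ}

lemma iter_close (O : Orb g m u) : ∀ t i, i < m → ∃ i', i' < m ∧ g^[t] (u i) = u i' := by
  intro t
  induction t with
  | zero => exact fun i hi => ⟨i, hi, rfl⟩
  | succ t ih =>
    intro i hi
    obtain ⟨i', hi', heq⟩ := ih i hi
    obtain ⟨i'', hi'', heq'⟩ := O.close i' hi'
    exact ⟨i'', hi'', by rw [Function.iterate_succ_apply', heq, heq']⟩

lemma vert_inter (O : Orb g m u) {j k : ℕ} (hj : j + 1 < m) (hk : k + 1 < m) (hne : j ≠ k)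
    {z : ℝ} (hzj : z ∈ Icc (u j) (u (j+1))) (hzk : z ∈ Icc (u k) (u (k+1))) :
    ∃ i, i < m ∧ z = u i := by
  rcases Nat.lt_or_ge j k with h | h
  · have h1 : u (j+1) ≤ u k := O.mono' (by omega) (by omega)
    have h2 : z ≤ u (j+1) := hzj.2
    have h3 : u (j+1) ≤ z := le_trans h1 hzk.1
    exact ⟨j+1, by omega, le_antisymm h2 h3⟩
  · have hlt : k < j := by omega
    have h1 : u (k+1) ≤ u j := O.mono' (by omega) (by omega)
    have h2 : z ≤ u (k+1) := hzk.2
    have h3 : u (k+1) ≤ z := le_trans h1 hzj.1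
    exact ⟨k+1, by omega, le_antisymm h2 h3⟩


lemma loop_period (hg : Continuous g) (O : Orb g m u) (ℓ : ℕ) (hℓ : 0 < ℓ) (W : ℕ → ℕ)
    (hval : ∀ i, W i + 1 < m)
    (hper : ∀ i, W (i + ℓ) = W i)
    (hedg : ∀ i, Edg g u m (W i) (W (i+1)))
    (huniq : ∀ i, 0 < i → i < ℓ → W i ≠ W 0) :
    ∃ y, g^[ℓ] y = y ∧ (∀ i, g^[i] y ∈ Icc (u (W i)) (u (W i + 1))) ∧
      (Function.minimalPeriod g y = ℓ ∨ ∃ iy, iy < m ∧ y = u iy) := by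
  have hle : ∀ i, u (W i) ≤ u (W i + 1) := fun i => le_of_lt (O.mono (by omega) (hval i))
  obtain ⟨y, hfix, hitin⟩ := loop_pt hg ℓ hℓ (fun i => (u (W i), u (W i + 1)))
    (fun i => hle i)
    (fun i => by simp only [hper i])
    (fun i => by
      have h2 := (hedg i).2
      have := intermediate_value_uIcc (f := g) (a := u (W i)) (b := u (W i + 1))
        hg.continuousOn
      rw [Set.uIcc_of_le (hle i)] at this
      exact fun z hz => this (h2 hz))
  refine ⟨y, hfix, hitin, ?_⟩
  have hyper : Function.IsPeriodicPt g ℓ y := hfix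
  have hmem : y ∈ Function.periodicPts g := Function.mk_mem_periodicPts hℓ hyper
  have hpos : 0 < Function.minimalPeriod g y :=
    Function.minimalPeriod_pos_of_mem_periodicPts hmem
  have hdvd : Function.minimalPeriod g y ∣ ℓ := hyper.minimalPeriod_dvd
  rcases eq_or_ne (Function.minimalPeriod g y) ℓ with he | hne
  · exact Or.inl he
  · have hlt : Function.minimalPeriod g y < ℓ :=
      lt_of_le_of_ne (Nat.le_of_dvd hℓ hdvd) hne
    have hWne : W (Function.minimalPeriod g y) ≠ W 0 := huniq _ hpos hlt
    have hy0 : y ∈ Icc (u (W 0)) (u (W 0 + 1)) := by simpa using hitin 0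
    have hymp : y ∈ Icc (u (W (Function.minimalPeriod g y)))
        (u (W (Function.minimalPeriod g y) + 1)) := by
      have := hitin (Function.minimalPeriod g y)
      rwa [Function.iterate_minimalPeriod] at this
    obtain ⟨i, him, hi⟩ := vert_inter O (hval _) (hval 0) hWne hymp hy0
    exact Or.inr ⟨i, him, hi⟩

lemma edg_cc (O : Orb g m u) {c : ℕ} (hc : c + 1 < m)
    (hpq : u (c+1) ≤ g (u c)) (hqp : g (u (c+1)) ≤ u c) : Edg g u m c c := by
  refine ⟨hc, ?_⟩
  intro z hz
  rw [Set.mem_uIcc]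
  exact Or.inr ⟨le_trans hqp hz.1, le_trans hz.2 hpq⟩

lemma exists_pred (O : Orb g m u) {c : ℕ} (hc : c + 1 < m)
    (hpq : u (c+1) ≤ g (u c)) (hqp : g (u (c+1)) ≤ u c) :
    ∃ k, k + 1 < m ∧ k ≠ c ∧ Edg g u m k c := by
  classical
  have hm := O.hm3
  by_contra hcon
  push_neg at hcon
  -- images avoid the gap
  have hgap : ∀ i, i < m → g (u i) ≤ u c ∨ u (c+1) ≤ g (u i) := by
    intro i hi
    obtain ⟨j, hj, hgj⟩ := O.close i hi
    rcases le_or_gt j c with h | h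
    · exact Or.inl (by rw [hgj]; exact O.mono' h (by omega))
    · exact Or.inr (by rw [hgj]; exact O.mono' h hj)
  -- a straddling pair k ≠ c would be a predecessor
  have hstrad : ∀ k, k + 1 < m → k ≠ c →
      ¬ ((g (u k) ≤ u c ∧ u (c+1) ≤ g (u (k+1))) ∨
         (g (u (k+1)) ≤ u c ∧ u (c+1) ≤ g (u k))) := by
    intro k hk hkc hstr
    apply hcon k hk hkc
    refine ⟨hc, ?_⟩
    intro z hz
    rw [Set.mem_uIcc]
    rcases hstr with ⟨h1, h2⟩ | ⟨h1, h2⟩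
    · exact Or.inl ⟨le_trans h1 hz.1, le_trans hz.2 h2⟩
    · exact Or.inr ⟨le_trans h1 hz.1, le_trans hz.2 h2⟩
  -- hence along each side the image side is constant
  have hsame : ∀ k, k + 1 < m → k ≠ c →
      (g (u k) ≤ u c ↔ g (u (k+1)) ≤ u c) := by
    intro k hk hkc
    have h1 := hgap k (by omega)
    have h2 := hgap (k+1) (by omega)
    have h3 := hstrad k hk hkc
    constructor
    · intro h
      rcases h2 with h' | h'
      · exact h'
      · exact absurd (Or.inl ⟨h, h'⟩) h3
    · intro h
      rcases h1 with h' | h'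
      · exact h'
      · exact absurd (Or.inr ⟨h, h'⟩) h3
  have hgp : ¬ g (u c) ≤ u c := by
    intro h
    have : u c < g (u c) := lt_of_lt_of_le (O.mono (by omega) hc) hpq
    linarith
  have hgq : g (u (c+1)) ≤ u c := hqp
  -- all left points map right
  have hleft : ∀ i, i ≤ c → ¬ g (u i) ≤ u c := by
    intro i hi
    induction' hd : c - i with t iht generalizing i
    · have : i = c := by omega
      subst this; exact hgp
    · have hic : i < c := by omega
      intro h
      have hnext : ¬ g (u (i+1)) ≤ u c := by
        apply iht (i+1) (by omega) (by omega)
      exact hnext ((hsame i (by omega) (by omega)).1 h)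
  -- all right points map left
  have hright : ∀ i, c + 1 ≤ i → i < m → g (u i) ≤ u c := by
    intro i hi him
    induction' hd : i - (c+1) with t iht generalizing i
    · have : i = c + 1 := by omega
      subst this; exact hgq
    · have : g (u (i-1)) ≤ u c := iht (i-1) (by omega) (by omega) (by omega)
      have heq : i - 1 + 1 = i := by omega
      have := (hsame (i-1) (by omega) (by omega)).1 this
      rwa [heq] at this
  -- injection left -> right and right -> left give a parity contradiction
  set φ : ℕ → ℕ := fun i => if h : i < m then Classical.choose (O.close i h) else 0
    with hφdef
  have hφspec : ∀ i, (h : i < m) → φ i < m ∧ g (u i) = u (φ i) := by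
    intro i h
    have := Classical.choose_spec (O.close i h)
    simp only [hφdef, dif_pos h]
    exact this
  have hφinj : ∀ i i', i < m → i' < m → φ i = φ i' → i = i' := by
    intro i i' hi hi' heq
    have h1 := hφspec i hi
    have h2 := hφspec i' hi'
    have hg1 : g (u i) = g (u i') := by rw [h1.2, h2.2, heq]
    have hper1 : g^[m] (u i) = u i := by
      have := Function.iterate_minimalPeriod (f := g) (x := u i)
      rwa [O.hmp i hi] at this
    have hper2 : g^[m] (u i') = u i' := by
      have := Function.iterate_minimalPeriod (f := g) (x := u i')
      rwa [O.hmp i' hi'] at this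
    have hm1 : m - 1 + 1 = m := by omega
    have : u i = u i' := by
      rw [← hper1, ← hper2, ← hm1, Function.iterate_succ_apply, Function.iterate_succ_apply,
        hg1]
    exact O.inj hi hi' this
  have hcard1 : Finset.card (Finset.range (c+1)) ≤ Finset.card (Finset.Ico (c+1) m) := by
    apply Finset.card_le_card_of_injOn φ
    · intro i hi
      rw [Finset.mem_coe, Finset.mem_range] at hi
      rw [Finset.mem_coe, Finset.mem_Ico]
      have hs := hφspec i (by omega)
      have : ¬ u (φ i) ≤ u c := by rw [← hs.2]; exact hleft i (by omega)
      constructor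
      · by_contra hcc
        push_neg at hcc
        exact this (O.mono' (by omega) (by omega))
      · exact hs.1
    · intro i hi i' hi' heq
      rw [Finset.coe_range, Set.mem_Iio] at hi hi'
      exact hφinj i i' (by omega) (by omega) heq
  have hcard2 : Finset.card (Finset.Ico (c+1) m) ≤ Finset.card (Finset.range (c+1)) := by
    apply Finset.card_le_card_of_injOn φ
    · intro i hi
      rw [Finset.mem_coe, Finset.mem_Ico] at hi
      rw [Finset.mem_coe, Finset.mem_range]
      have hs := hφspec i hi.2
      have : u (φ i) ≤ u c := by rw [← hs.2]; exact hright i hi.1 hi.2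
      exact Nat.lt_succ_of_le (O.idx_le hs.1 (by omega) this)
    · intro i hi i' hi' heq
      rw [Finset.coe_Ico, Set.mem_Ico] at hi hi'
      exact hφinj i i' (by omega) (by omega) heq
  rw [Finset.card_range, Nat.card_Ico] at hcard1 hcard2
  obtain ⟨t, ht⟩ := O.hodd
  omega

end Loop

section Core
variable {g : ℝ → ℝ} {m : ℕ} {u : ℕ → ℝ}

lemma core (hg : Continuous g) (O : Orb g m u) :
    (∃ m', Odd m' ∧ 3 ≤ m' ∧ m' < m ∧ ∃ y, Function.minimalPeriod g y = m') ∨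
    (∀ ℓ, Even ℓ → m - 1 ≤ ℓ → ∃ y, Function.minimalPeriod g y = ℓ) := by
  classical
  have hm := O.hm3
  obtain ⟨c, hc, hpq, hqp, hcup, hcdown⟩ := O.center
  have hreach := reach_all O hc hpq hqp
  obtain ⟨k₀, hk₀m, hk₀c, hk₀e⟩ := exists_pred O hc hpq hqp
  have hF : ∃ n, Reach g u m c n k₀ := hreach k₀ hk₀m
  set d := Nat.find hF with hddef
  have hdspec : Reach g u m c d k₀ := Nat.find_spec hF
  have hdmin : ∀ n', n' < d → ¬ Reach g u m c n' k₀ := fun n' h => Nat.find_min hF h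
  obtain ⟨P, hP0, hPd, hPe⟩ := reach_path hdspec
  have hPreach : ∀ i, i ≤ d → Reach g u m c i (P i) := by
    intro i hi
    have := reach_extend (Reach.zero) P hP0 i (fun t ht => hPe t (by omega))
    simpa using this
  have hPmin : ∀ i, i ≤ d → ∀ n', Reach g u m c n' (P i) → i ≤ n' := by
    intro i hi n' hn'
    by_contra hlt
    push_neg at hlt
    have hext := reach_extend hn' (fun t => P (i + t)) rfl (d - i) (fun t ht => by
      have h2 := hPe (i + t) (by omega)
      have e1 : i + t + 1 = i + (t + 1) := by omega
      rwa [e1] at h2)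
    have e2 : i + (d - i) = d := by omega
    simp only [e2, hPd] at hext
    exact hdmin _ (by omega) hext
  have hPinj : ∀ i i', i ≤ d → i' ≤ d → P i = P i' → i = i' := by
    intro i i' hi hi' heq
    have h1 := hPmin i hi i' (by rw [heq]; exact hPreach i' hi')
    have h2 := hPmin i' hi' i (by rw [← heq]; exact hPreach i hi)
    omega
  have hPval : ∀ i, i ≤ d → P i + 1 < m := fun i hi => reach_valid hc (hPreach i hi)
  have hd1 : 1 ≤ d := by
    rcases Nat.eq_zero_or_pos d with h | h
    · exfalso
      have h2 := hdspec
      rw [h] at h2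
      cases h2 with
      | zero => exact hk₀c rfl
    · exact h
  have hdub : d ≤ m - 2 := by
    have hcard := Finset.card_le_card_of_injOn P
      (s := Finset.range (d+1)) (t := Finset.range (m-1))
      (fun i hi => by
        rw [Finset.mem_coe, Finset.mem_range] at hi ⊢
        have := hPval i (by omega); omega)
      (fun i hi i' hi' heq => by
        rw [Finset.coe_range, Set.mem_Iio] at hi hi'
        exact hPinj i i' (by omega) (by omega) heq)
    rw [Finset.card_range, Finset.card_range] at hcard
    omega
  have hP1c : P 1 ≠ c := by
    intro h
    have := hPmin 1 (by omega) 0 (by rw [h]; exact Reach.zero)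
    omega
  have hedgcc := edg_cc O hc hpq hqp
  have hmodsucc : ∀ (L i : ℕ), 2 ≤ L →
      (i + 1) % L = if i % L + 1 = L then 0 else i % L + 1 := by
    intro L i hL
    have h0 : (i + 1) % L = (i % L + 1) % L := by
      rw [Nat.add_mod, Nat.mod_eq_of_lt (show 1 < L by omega)]
    rw [h0]
    by_cases h : i % L + 1 = L
    · rw [if_pos h, h, Nat.mod_self]
    · have : i % L < L := Nat.mod_lt _ (by omega)
      rw [if_neg h, Nat.mod_eq_of_lt (by omega)]
  have hword : ∀ L, d + 1 ≤ L → ∃ y, g^[L] y = y ∧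
      (∀ i, g^[i] y ∈ Icc (u ((if i % L < d then P (i % L + 1) else c)))
        (u ((if i % L < d then P (i % L + 1) else c) + 1))) ∧
      (Function.minimalPeriod g y = L ∨ ∃ iy, iy < m ∧ y = u iy) := by
    intro L hL
    have hL2 : 2 ≤ L := by omega
    set W : ℕ → ℕ := fun i => if i % L < d then P (i % L + 1) else c with hWdef
    apply loop_period hg O L (by omega) W
    · intro i
      by_cases h : i % L < d
      · simp only [hWdef, if_pos h]; exact hPval _ (by omega)
      · simp only [hWdef, if_neg h]; omega
    · intro i
      simp only [hWdef, Nat.add_mod_right]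
    · intro i
      have hmlt : i % L < L := Nat.mod_lt _ (by omega)
      have hsucc := hmodsucc L i hL2
      by_cases h : i % L < d
      · by_cases h2 : i % L + 1 = L
        · exfalso; omega
        · by_cases h3 : i % L + 1 < d
          · simp only [hWdef, hsucc, if_neg h2, if_pos h, if_pos h3]
            exact hPe (i % L + 1) (by omega)
          · have h4 : i % L + 1 = d := by omega
            simp only [hWdef, hsucc, if_neg h2, if_pos h, if_neg h3]
            rw [h4, hPd]
            exact hk₀e
      · by_cases h2 : i % L + 1 = L
        · simp only [hWdef, hsucc, if_pos h2, if_neg h, Nat.zero_mod,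
            if_pos (show (0:ℕ) < d by omega)]
          have h5 := hPe 0 (by omega)
          rwa [hP0] at h5
        · simp only [hWdef, hsucc, if_neg h2, if_neg h,
            if_neg (show ¬ (i % L + 1 < d) by omega)]
          exact hedgcc
    · intro i h1 h2
      have h0 : W 0 = P 1 := by
        simp only [hWdef, Nat.zero_mod, if_pos (show (0:ℕ) < d by omega)]
        simp [show (0:ℕ) < d by omega]
      rw [h0]
      have hmi : i % L = i := Nat.mod_eq_of_lt h2
      by_cases h : i < d
      · simp only [hWdef, hmi, if_pos h]
        intro heq
        have := hPinj (i+1) 1 (by omega) (by omega) heq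
        omega
      · simp only [hWdef, hmi, if_neg h]
        exact fun heq => hP1c heq.symm
  rcases Nat.lt_or_ge d (m - 2) with hcase | hcase
  · -- Case 1: a short loop gives a smaller odd least period
    left
    set ℓ' := if Odd (d + 1) then d + 1 else d + 2 with hldef
    have hoddl : Odd ℓ' := by
      by_cases h : Odd (d+1)
      · rwa [hldef, if_pos h]
      · rw [hldef, if_neg h]
        rcases Nat.even_or_odd (d+1) with he | ho
        · exact he.add_one
        · exact absurd ho h
    have hlb : d + 1 ≤ ℓ' := by
      by_cases h : Odd (d+1)
      · rw [hldef, if_pos h]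
      · rw [hldef, if_neg h]; omega
    have hub : ℓ' ≤ m - 1 := by
      by_cases h : Odd (d+1)
      · rw [hldef, if_pos h]; omega
      · rw [hldef, if_neg h]; omega
    obtain ⟨y, hfix, hitin, hmpy⟩ := hword ℓ' hlb
    rcases hmpy with h | ⟨iy, hiym, rfl⟩
    · have hodd2 := hoddl
      obtain ⟨t, ht⟩ := hodd2
      exact ⟨ℓ', hoddl, by omega, by omega, y, h⟩
    · exfalso
      have hdv : (m : ℕ) ∣ ℓ' := by
        have hper : Function.IsPeriodicPt g ℓ' (u iy) := hfix
        have := hper.minimalPeriod_dvd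
        rwa [O.hmp iy hiym] at this
      have := Nat.le_of_dvd (by omega) hdv
      omega
  · -- Case 2: Stefan-type structure
    right
    have hdeq : d = m - 2 := by omega
    have hsurj : ∀ k, k + 1 < m → ∃ i, i ≤ d ∧ P i = k := by
      have hs := Finset.surj_on_of_inj_on_of_card_le
        (s := Finset.range (d+1)) (t := Finset.range (m-1))
        (fun a _ => P a)
        (fun a ha => by
          rw [Finset.mem_range] at ha
          show P a ∈ Finset.range (m-1)
          rw [Finset.mem_range]
          have := hPval a (by omega); omega)
        (fun a₁ a₂ ha₁ ha₂ heq => by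
          rw [Finset.mem_range] at ha₁ ha₂
          exact hPinj _ _ (by omega) (by omega) (by simpa using heq))
        (by rw [Finset.card_range, Finset.card_range]; omega)
      intro k hk
      obtain ⟨a, ha, heq⟩ := hs k (by rw [Finset.mem_range]; omega)
      rw [Finset.mem_range] at ha
      exact ⟨a, by omega, heq.symm⟩
    have hdist1 : ∀ k, k + 1 < m → Edg g u m c k → k = c ∨ k = P 1 := by
      intro k hk he
      obtain ⟨i, hi, rfl⟩ := hsurj k hk
      have hr1 : Reach g u m c 1 (P i) := Reach.succ Reach.zero he
      have := hPmin i hi 1 hr1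
      have : i = 0 ∨ i = 1 := by omega
      rcases this with rfl | rfl
      · left; exact hP0
      · right; rfl
    obtain ⟨ip, hipm, hip⟩ := O.close c (by omega)
    obtain ⟨iq, hiqm, hiq⟩ := O.close (c+1) (by omega)
    have hipc : c + 1 ≤ ip := O.idx_le hc hipm (by rw [← hip]; exact hpq)
    have hiqc : iq ≤ c := O.idx_le hiqm (by omega) (by rw [← hiq]; exact hqp)
    have hcov : ∀ k, iq ≤ k → k + 1 ≤ ip → Edg g u m c k := by
      intro k h1 h2
      refine ⟨by omega, ?_⟩
      intro z hz
      rw [Set.mem_uIcc]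
      right
      constructor
      · rw [hiq]; exact le_trans (O.mono' h1 (by omega)) hz.1
      · rw [hip]; exact le_trans hz.2 (O.mono' h2 hipm)
    have hno2 : ¬ (ip = c + 1 ∧ iq = c) := by
      rintro ⟨h1, h2⟩
      have hper2 : Function.IsPeriodicPt g 2 (u c) := by
        show g^[2] (u c) = u c
        have hgg : g (g (u c)) = u c := by rw [hip, h1, hiq, h2]
        simpa [Function.iterate_succ_apply] using hgg
      have hdvd := hper2.minimalPeriod_dvd
      rw [O.hmp c (by omega)] at hdvd
      have := Nat.le_of_dvd (by omega) hdvd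
      omega
    have hwin : ∀ k, iq ≤ k → k + 1 ≤ ip → k = c ∨ k = P 1 :=
      fun k h1 h2 => hdist1 k (by omega) (hcov k h1 h2)
    have hip2 : ip - iq = 2 := by
      rcases Nat.lt_or_ge (ip - iq) 3 with h | h
      · rcases Nat.lt_or_ge (ip - iq) 2 with h' | h'
        · exfalso; exact hno2 ⟨by omega, by omega⟩
        · omega
      · exfalso
        have ha := hwin iq (le_refl _) (by omega)
        have hb := hwin (iq+1) (by omega) (by omega)
        have hc' := hwin (iq+2) (by omega) (by omega)
        rcases ha with ha|ha <;> rcases hb with hb|hb <;> rcases hc' with hc''|hc'' <;> omega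
    have hAB : (ip = c + 1 ∧ iq + 1 = c) ∨ (iq = c ∧ ip = c + 2) := by omega
    intro ℓ hev hℓ
    have hℓm : ℓ ≠ m := by
      intro h; subst h
      obtain ⟨a, ha⟩ := O.hodd
      obtain ⟨b, hb⟩ := hev
      omega
    rcases Nat.lt_or_ge ℓ m with hsml | hbig
    · obtain ⟨y, hfix, hitin, hmpy⟩ := hword ℓ (by omega)
      rcases hmpy with h | ⟨iy, hiym, rfl⟩
      · exact ⟨y, h⟩
      · exfalso
        have hdv : (m : ℕ) ∣ ℓ := by
          have hper : Function.IsPeriodicPt g ℓ (u iy) := hfix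
          have := hper.minimalPeriod_dvd
          rwa [O.hmp iy hiym] at this
        have := Nat.le_of_dvd (by omega) hdv
        omega
    · have hbig' : m + 1 ≤ ℓ := by omega
      obtain ⟨y, hfix, hitin, hmpy⟩ := hword ℓ (by omega)
      rcases hmpy with h | ⟨iy, hiym, hyeq⟩
      · exact ⟨y, h⟩
      · exfalso
        have hWc : ∀ t, m - 2 ≤ t → t < ℓ →
            (if t % ℓ < d then P (t % ℓ + 1) else c) = c := by
          intro t h1 h2
          rw [Nat.mod_eq_of_lt h2, if_neg (by omega)]
        have hz0 := hitin (m-2)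
        have hz1 := hitin (m-1)
        have hz2 := hitin m
        rw [hWc (m-2) (le_refl _) (by omega)] at hz0
        rw [hWc (m-1) (by omega) (by omega)] at hz1
        rw [hWc m (by omega) (by omega)] at hz2
        obtain ⟨iz, hizm, hizeq⟩ := iter_close O (m-2) iy hiym
        rw [← hyeq] at hizeq
        have hizc : iz = c ∨ iz = c + 1 := by
          have hl : u c ≤ u iz := by rw [← hizeq]; exact hz0.1
          have hr : u iz ≤ u (c+1) := by rw [← hizeq]; exact hz0.2
          have h5 := O.idx_le (by omega) hizm hl
          have h6 := O.idx_le hizm (by omega) hr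
          omega
        have hgz : g^[m-1] y = g (u iz) := by
          rw [show m - 1 = (m-2) + 1 by omega, Function.iterate_succ_apply', hizeq]
        have hggz : g^[m] y = g (g (u iz)) := by
          rw [show m = (m-1) + 1 by omega, Function.iterate_succ_apply', hgz]
        rcases hAB with ⟨hA1, hA2⟩ | ⟨hB1, hB2⟩
        · rcases hizc with hzc | hzc
          · have e1 : g (g (u iz)) = u iq := by rw [hzc, hip, hA1, hiq]
            rw [e1] at hggz
            have h7 : u c ≤ u iq := by rw [← hggz]; exact hz2.1
            have := O.idx_le (by omega) hiqm h7
            omega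
          · have e1 : g (u iz) = u iq := by rw [hzc, hiq]
            rw [e1] at hgz
            have h7 : u c ≤ u iq := by rw [← hgz]; exact hz1.1
            have := O.idx_le (by omega) hiqm h7
            omega
        · rcases hizc with hzc | hzc
          · have e1 : g (u iz) = u (c+2) := by rw [hzc, hip, hB2]
            rw [e1] at hgz
            have h7 : u (c+2) ≤ u (c+1) := by rw [← hgz]; exact hz1.2
            have := O.idx_le (show c+2 < m by omega) (show c+1 < m by omega) h7
            omega
          · have e1 : g (g (u iz)) = u (c+2) := by rw [hzc, hiq, hB1, hip, hB2]
            rw [e1] at hggz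
            have h7 : u (c+2) ≤ u (c+1) := by rw [← hggz]; exact hz2.2
            have := O.idx_le (show c+2 < m by omega) (show c+1 < m by omega) h7
            omega

end Core

lemma build_orb (g : ℝ → ℝ) (m : ℕ) (hm3 : 3 ≤ m) (hodd : Odd m) (x : ℝ)
    (hx : Function.minimalPeriod g x = m) : ∃ u : ℕ → ℝ, Orb g m u := by
  classical
  have hxper : x ∈ Function.periodicPts g := by
    rw [← Function.minimalPeriod_pos_iff_mem_periodicPts, hx]; omega
  have hmper : g^[m] x = x := by
    rw [← hx]; exact Function.iterate_minimalPeriod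
  set O : Finset ℝ := (Finset.range m).image (fun i => g^[i] x) with hO
  have hinj : Set.InjOn (fun i => g^[i] x) (Finset.range m) := by
    intro i hi j hj heq
    rw [Finset.coe_range, Set.mem_Iio] at hi hj
    exact Function.iterate_injOn_Iio_minimalPeriod (f := g) (x := x)
      (by rw [hx]; exact hi) (by rw [hx]; exact hj) heq
  have hcard : O.card = m := by
    rw [hO, Finset.card_image_of_injOn hinj, Finset.card_range]
  set e := O.orderIsoOfFin hcard with he
  set u : ℕ → ℝ := fun i => if h : i < m then (e ⟨i, h⟩ : ℝ) else 0 with hu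
  have humem : ∀ i, i < m → u i ∈ O := by
    intro i hi
    rw [hu]; simp only [dif_pos hi]
    exact (e ⟨i, hi⟩).2
  have hmono : ∀ {i j}, i < j → j < m → u i < u j := by
    intro i j hij hj
    rw [hu]; simp only [dif_pos (lt_trans hij hj), dif_pos hj]
    have hlt : (⟨i, lt_trans hij hj⟩ : Fin m) < ⟨j, hj⟩ := hij
    exact e.strictMono hlt
  have husurj : ∀ z, z ∈ O → ∃ i, i < m ∧ u i = z := by
    intro z hz
    obtain ⟨⟨i, hi⟩, hie⟩ := e.surjective ⟨z, hz⟩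
    refine ⟨i, hi, ?_⟩
    rw [hu]; simp only [dif_pos hi]
    rw [hie]
  have hOmem : ∀ z, z ∈ O ↔ ∃ k, k < m ∧ g^[k] x = z := by
    intro z
    rw [hO]
    simp only [Finset.mem_image, Finset.mem_range]
  have hOclose : ∀ z, z ∈ O → g z ∈ O := by
    intro z hz
    rw [hOmem] at hz ⊢
    obtain ⟨k, hk, rfl⟩ := hz
    rcases Nat.lt_or_ge (k+1) m with h | h
    · exact ⟨k+1, h, (Function.iterate_succ_apply' g k x)⟩
    · have hkm : k + 1 = m := by omega
      refine ⟨0, by omega, ?_⟩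
      have : g^[k+1] x = x := by rw [hkm]; exact hmper
      rw [Function.iterate_succ_apply'] at this
      simpa using this.symm
  refine ⟨u, hm3, hodd, hmono, ?_, ?_, ?_⟩
  · intro i hi
    obtain ⟨j, hj, hju⟩ := husurj _ (hOclose _ (humem i hi))
    exact ⟨j, hj, hju.symm⟩
  · intro i hi
    obtain ⟨k, hk, hke⟩ := (hOmem _).1 (humem i hi)
    rw [← hke, Function.minimalPeriod_apply_iterate hxper, hx]
  · intro i j hi hj
    obtain ⟨a, ha, hae⟩ := (hOmem _).1 (humem i hi)
    obtain ⟨b, hb, hbe⟩ := (hOmem _).1 (humem j hj)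
    refine ⟨b + (m - a), ?_⟩
    rw [← hae, ← hbe, ← Function.iterate_add_apply]
    have h1 : b + (m - a) + a = b + m := by omega
    rw [h1, Function.iterate_add_apply, hmper]

lemma evens_of_odd (g : ℝ → ℝ) (hg : Continuous g) :
    ∀ m, Odd m → 3 ≤ m → (∃ x, Function.minimalPeriod g x = m) →
      ∀ ℓ, Even ℓ → m - 1 ≤ ℓ → ∃ y, Function.minimalPeriod g y = ℓ := by
  intro m
  induction m using Nat.strong_induction_on with
  | _ m ih =>
    rintro hodd hm3 ⟨x, hx⟩ ℓ hev hℓ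
    obtain ⟨u, O⟩ := build_orb g m hm3 hodd x hx
    rcases core hg O with ⟨m', ho', h3', hlt', y, hy⟩ | h
    · exact ih m' hlt' ho' h3' ⟨y, hy⟩ ℓ hev (by omega)
    · exact h ℓ hev hℓ

lemma single_step (f : ℝ → ℝ) (hf : Continuous f) (n : ℕ) (x : ℝ)
    (hx : Function.minimalPeriod f x = n) (hn : 1 ≤ removeLowBit n) :
    ∃ y, Function.minimalPeriod f y = removeLowBit n := by
  have hn0 : n ≠ 0 := by
    intro h; subst h; simp [removeLowBit] at hn
  set a := n.factorization 2 with ha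
  obtain ⟨b, hfact, hbodd⟩ : ∃ b, 2 ^ a * b = n ∧ ¬ 2 ∣ b :=
    ⟨n / 2 ^ (n.factorization 2), Nat.ordProj_mul_ordCompl_eq_self n 2,
      Nat.not_dvd_ordCompl Nat.prime_two hn0⟩
  have hposa : 0 < 2 ^ a := Nat.pow_pos (by omega)
  have hrm : removeLowBit n = 2 ^ a * (b - 1) := by
    rw [removeLowBit, ← ha, Nat.mul_sub, mul_one, hfact]
  have hb3 : 3 ≤ b := by
    have hbne : b ≠ 0 := by
      intro h; rw [h, mul_zero] at hfact; exact hn0 hfact.symm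
    have hbne1 : b ≠ 1 := by
      intro h
      rw [h] at hrm
      simp at hrm
      omega
    omega
  set g := f^[2^a] with hgdef
  have hgc : Continuous g := by rw [hgdef]; exact hf.iterate _
  have hxper : x ∈ Function.periodicPts f := by
    rw [← Function.minimalPeriod_pos_iff_mem_periodicPts, hx]; omega
  have hgx : Function.minimalPeriod g x = b := by
    rw [hgdef, Function.minimalPeriod_iterate_eq_div_gcd hposa.ne', hx]
    rw [Nat.gcd_eq_right ⟨b, hfact.symm⟩, ← hfact, Nat.mul_div_cancel_left _ hposa]
  have hodd : Odd b := Nat.odd_iff.2 (by omega)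
  have hevb : Even (b - 1) := by
    obtain ⟨t, ht⟩ := hodd
    exact ⟨t, by omega⟩
  obtain ⟨y, hy⟩ := evens_of_odd g hgc b hodd hb3 ⟨x, hgx⟩ (b-1) hevb (le_refl _)
  have hyper : Function.IsPeriodicPt g (b-1) y := by
    rw [← hy]; exact Function.isPeriodicPt_minimalPeriod g y
  have hyperf : Function.IsPeriodicPt f (2^a * (b-1)) y := by
    show f^[2^a * (b-1)] y = y
    rw [Function.iterate_mul]
    exact hyper
  set t := Function.minimalPeriod f y with htdef
  have hty : b - 1 = t / Nat.gcd t (2^a) := by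
    rw [← hy, hgdef, Function.minimalPeriod_iterate_eq_div_gcd hposa.ne']
  have hdvd : t ∣ 2^a * (b-1) := hyperf.minimalPeriod_dvd
  have hgdvd_t : Nat.gcd t (2^a) ∣ t := Nat.gcd_dvd_left _ _
  have hgcd_dvd : Nat.gcd t (2^a) ∣ 2^a := Nat.gcd_dvd_right _ _
  have ht_eq : t = (b-1) * Nat.gcd t (2^a) := by
    rw [hty, Nat.div_mul_cancel hgdvd_t]
  by_cases hG : Nat.gcd t (2^a) = 2^a
  · refine ⟨y, ?_⟩
    rw [← htdef, ht_eq, hG, hrm, Nat.mul_comm]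
  · exfalso
    obtain ⟨cpow, hclt, hcval⟩ := (Nat.dvd_prime_pow Nat.prime_two).1 hgcd_dvd
    have hclta : cpow < a := by
      rcases Nat.lt_or_ge cpow a with h | h
      · exact h
      · exfalso
        have : cpow = a := by omega
        rw [this] at hcval
        exact hG hcval
    have h2g : 2 * Nat.gcd t (2^a) ∣ 2^a := by
      rw [hcval]
      refine ⟨2^(a - cpow - 1), ?_⟩
      rw [← pow_succ']
      rw [← pow_add]
      congr 1
      omega
    have h2t : 2 * Nat.gcd t (2^a) ∣ t := by
      have h2b : 2 ∣ (b-1) := by omega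
      exact (mul_dvd_mul h2b (dvd_refl (Nat.gcd t (2^a)))).trans (dvd_of_eq ht_eq.symm)
    have hdg := Nat.dvd_gcd h2t h2g
    have hgpos : 0 < Nat.gcd t (2^a) := Nat.gcd_pos_of_pos_right _ hposa
    have := Nat.le_of_dvd hgpos hdg
    omega

lemma rlb_iter_zero : ∀ j, removeLowBit^[j] 0 = 0 := by
  intro j
  induction j with
  | zero => rfl
  | succ j ih => rw [Function.iterate_succ_apply, show removeLowBit 0 = 0 from rfl, ih]

lemma main_aux (f : ℝ → ℝ) (hf : Continuous f) :
    ∀ j n (x : ℝ), Function.minimalPeriod f x = n → 1 ≤ removeLowBit^[j] n →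
      ∃ y, Function.minimalPeriod f y = removeLowBit^[j] n := by
  intro j
  induction j with
  | zero => intro n x hx h; exact ⟨x, hx⟩
  | succ j ih =>
    intro n x hx h
    rw [Function.iterate_succ_apply] at h ⊢
    have h1 : 1 ≤ removeLowBit n := by
      by_contra hc
      push_neg at hc
      have h0 : removeLowBit n = 0 := by omega
      rw [h0, rlb_iter_zero] at h
      omega
    obtain ⟨y, hy⟩ := single_step f hf n x hx h1
    exact ih (removeLowBit n) y hy h

theorem forcing_remove_ones_from_right (f : ℝ → ℝ) (hf : Continuous f)
    (n : ℕ) (x : ℝ) (hx : f^[n] x = x)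
    (hx' : ∀ k : ℕ, 0 < k → k < n → f^[k] x ≠ x) :
    ∀ m : ℕ, (∃ j : ℕ, m = removeLowBit^[j] n) → 1 ≤ m →
      ∃ y : ℝ, f^[m] y = y ∧ ∀ k : ℕ, 0 < k → k < m → f^[k] y ≠ y := by
  rintro m ⟨j, rfl⟩ h1
  have hn1 : 1 ≤ n := by
    by_contra hc
    push_neg at hc
    have h0 : n = 0 := by omega
    rw [h0, rlb_iter_zero] at h1
    omega
  have hmp : Function.minimalPeriod f x = n := by
    have hper : Function.IsPeriodicPt f n x := hx
    have hle := hper.minimalPeriod_le (by omega)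
    have hpos : 0 < Function.minimalPeriod f x := hper.minimalPeriod_pos (by omega)
    rcases eq_or_lt_of_le hle with h | h
    · exact h
    · exact absurd Function.iterate_minimalPeriod (hx' _ hpos h)
  obtain ⟨y, hy⟩ := main_aux f hf j n x hmp h1
  refine ⟨y, ?_, ?_⟩
  · rw [← hy]; exact Function.iterate_minimalPeriod
  · intro k hk0 hkm hke
    have hle : Function.minimalPeriod f y ≤ k :=
      Function.IsPeriodicPt.minimalPeriod_le hk0 hke
    omega
end IVT
end
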